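/- arXiv:1706.01786 — 10 statements merged into one kernel-verified Lean document; each statement's English description precedes it below -/
import Mathlib

section
/- Let (u_l)_{l≥0} and b = (b_l)_{l≥0} be real sequences. For all integers j ≥ 0 and n ≥ 1, the following determinant identity holds: f^{(j)}_n(b) · H^{(j+1)}_{n−1} = f^{(j+1)}_{n−1}(b) · H^{(j)}_n − f^{(j)}_{n−1}(b) · H^{(j+1)}_n. -/
open Matrix Polynomial

/-- `hankel u j n` = the Hankel determinant `H^{(j)}_n = det (u_{j+i+k})_{0 ≤ i,k ≤ n-1}`
(with `H^{(j)}_0 = 1`, the determinant of the empty matrix). -/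
noncomputable def hankel (u : ℕ → ℝ) (j n : ℕ) : ℝ :=
  Matrix.det (Matrix.of fun i k : Fin n => u (j + i + k))

/-- `fdet u b j n` = the determinant `f^{(j)}_n(b)`: determinant of the
`(n+1)×(n+1)` matrix whose entry in row `i` and column `k` (`0 ≤ k ≤ n-1`)
is `u (j+i+k)` and whose last column has entries `b (j+i)`. -/
noncomputable def fdet (u b : ℕ → ℝ) (j n : ℕ) : ℝ :=
  Matrix.det (Matrix.of fun i k : Fin (n + 1) =>
    if (k : ℕ) < n then u (j + i + k) else b (j + i))

section aux
variable {R : Type*} [CommRing R] {S : Type*} [CommRing S]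

lemma det_updateColumn_single {m : ℕ} (A : Matrix (Fin (m+1)) (Fin (m+1)) R) (r c : Fin (m+1)) :
    (A.updateCol c (Pi.single r 1)).det
      = (-1) ^ ((r : ℕ) + (c : ℕ)) * (A.submatrix r.succAbove c.succAbove).det := by
  rw [← Matrix.det_transpose (A.updateCol c (Pi.single r (1 : R))),
    ← Matrix.updateRow_transpose, ← Matrix.adjugate_apply,
    Matrix.adjugate_fin_succ_eq_det_submatrix, ← Matrix.transpose_submatrix,
    Matrix.det_transpose, add_comm]

lemma submatrix_updateColumn {N M : ℕ} (A : Matrix (Fin N) (Fin N) R)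
    (f : Fin M → Fin N) (g : Fin M → Fin N) (hg : Function.Injective g)
    (c : Fin M) (v : Fin N → R) :
    (A.updateCol (g c) v).submatrix f g
      = (A.submatrix f g).updateCol c (fun i => v (f i)) := by
  ext i k
  by_cases h : k = c
  · subst h; simp [Matrix.updateCol_apply]
  · simp [Matrix.updateCol_apply, h, hg.ne h]

/-- The Desnanot–Jacobi expression: rows `0`, `last` and columns `m`, `last` deleted. -/
noncomputable def djExpr (m : ℕ) (A : Matrix (Fin (m+2)) (Fin (m+2)) R) : R :=
  A.det * (A.submatrix (Fin.castSucc ∘ Fin.succ) (Fin.castSucc ∘ Fin.castSucc)).det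
    - ((A.submatrix Fin.succ (Fin.last m).castSucc.succAbove).det
        * (A.submatrix Fin.castSucc Fin.castSucc).det
      - (A.submatrix Fin.castSucc (Fin.last m).castSucc.succAbove).det
        * (A.submatrix Fin.succ Fin.castSucc).det)

lemma map_djExpr (f : R →+* S) (m : ℕ) (A : Matrix (Fin (m+2)) (Fin (m+2)) R) :
    f (djExpr m A) = djExpr m (A.map f) := by
  simp only [djExpr, map_sub, _root_.map_mul, RingHom.map_det, RingHom.mapMatrix_apply,
    Matrix.submatrix_map]

end aux

lemma dj_ne (m : ℕ) (A : Matrix (Fin (m+2)) (Fin (m+2)) ℝ) (hd : A.det ≠ 0) :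
    djExpr m A = 0 := by
  classical
  rw [djExpr, sub_eq_zero]
  set c1 : Fin (m+2) := (Fin.last m).castSucc with hc1
  set c2 : Fin (m+2) := Fin.last (m+1) with hc2
  have hvc1 : (c1 : ℕ) = m := by simp [hc1]
  have hvc2 : (c2 : ℕ) = m + 1 := by simp [hc2]
  have hc12 : c2 ≠ c1 := by simp [Fin.ext_iff, hvc1, hvc2]
  set C : Matrix (Fin (m+2)) (Fin (m+2)) ℝ :=
    Matrix.of (fun i k => if k = c1 then A.adjugate i 0 else if k = c2 then A.adjugate i c2
      else (1 : Matrix (Fin (m+2)) (Fin (m+2)) ℝ) i k) with hC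
  -- Step 1 : A * C is A with columns c1, c2 replaced by det A • e₀, det A • e_last
  have hAC : A * C = (A.updateCol c1 (A.det • (Pi.single 0 1 : Fin (m+2) → ℝ))).updateCol c2
      (A.det • (Pi.single c2 1 : Fin (m+2) → ℝ)) := by
    ext i k
    rw [Matrix.mul_apply]
    by_cases h2 : k = c2
    · subst h2
      have : ∑ l, A i l * C l c2 = (A * A.adjugate) i c2 := by
        rw [Matrix.mul_apply]
        refine Finset.sum_congr rfl fun l _ => ?_
        simp [hC, hc12]
      rw [this, Matrix.mul_adjugate]
      simp [Matrix.one_apply, Pi.single_apply, Matrix.smul_apply, eq_comm]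
    · by_cases h1 : k = c1
      · subst h1
        have : ∑ l, A i l * C l c1 = (A * A.adjugate) i 0 := by
          rw [Matrix.mul_apply]
          refine Finset.sum_congr rfl fun l _ => ?_
          simp [hC]
        rw [this, Matrix.mul_adjugate]
        simp [Matrix.one_apply, Pi.single_apply, Matrix.smul_apply, Matrix.updateCol_apply, eq_comm, h2, Ne.symm h2]
      · have : ∑ l, A i l * C l k = A i k := by
          have : ∀ l, A i l * C l k = A i l * (if l = k then 1 else 0) := by
            intro l; simp [hC, h1, h2, Matrix.one_apply]
          simp only [this, mul_ite, mul_one, mul_zero]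
          simp
        rw [this]
        simp [Matrix.updateCol_apply, h1, h2]
  -- Step 2 : determinant of A * C
  have hdetAC : (A * C).det =
      A.det * (A.det * ((-1 : ℝ)^m
        * (A.submatrix (Fin.castSucc ∘ Fin.succ) (Fin.castSucc ∘ Fin.castSucc)).det)) := by
    rw [hAC, Matrix.det_updateCol_smul,
      det_updateColumn_single (A.updateCol c1 (A.det • (Pi.single 0 1 : Fin (m+2) → ℝ))) c2 c2]
    rw [show (c2 : Fin (m+2)).succAbove = Fin.castSucc from by rw [hc2]; exact Fin.succAbove_last]
    rw [hc1, submatrix_updateColumn A Fin.castSucc Fin.castSucc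
      (Fin.castSucc_injective _) (Fin.last m)]
    have hv : (fun i : Fin (m+1) => (A.det • (Pi.single 0 1 : Fin (m+2) → ℝ)) (Fin.castSucc i))
        = A.det • (Pi.single 0 1 : Fin (m+1) → ℝ) := by
      funext i
      by_cases h : i = 0 <;>
        simp [h, Pi.single_apply, Fin.castSucc_eq_zero_iff]
    rw [hv, Matrix.det_updateCol_smul,
      det_updateColumn_single (A.submatrix Fin.castSucc Fin.castSucc) 0 (Fin.last m),
      Fin.succAbove_last, Fin.succAbove_zero, Matrix.submatrix_submatrix]
    have h1 : ((-1 : ℝ)) ^ ((c2 : ℕ) + (c2 : ℕ)) = 1 := by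
      rw [← two_mul, pow_mul]; norm_num
    rw [h1]
    simp only [Fin.val_zero, Fin.val_last, zero_add, one_mul]
  -- Step 3 : determinant of C via block decomposition
  have h0 : finSumFinEquiv (Sum.inr (0 : Fin 2)) = c1 := by
    ext; simp [hvc1]
  have h1 : finSumFinEquiv (Sum.inr (1 : Fin 2)) = c2 := by
    ext; simp [hvc2]
  have hCblock : C.submatrix finSumFinEquiv finSumFinEquiv =
      Matrix.fromBlocks 1
        (Matrix.of fun i k => C (finSumFinEquiv (Sum.inl i)) (finSumFinEquiv (Sum.inr k)))
        0
        (Matrix.of fun i k => C (finSumFinEquiv (Sum.inr i)) (finSumFinEquiv (Sum.inr k))) := by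
    ext i k
    cases i with
    | inl i =>
      cases k with
      | inl k =>
        have hk1 : finSumFinEquiv (Sum.inl k) ≠ c1 := by
          simp only [finSumFinEquiv_apply_left, ne_eq, Fin.ext_iff, Fin.coe_castAdd, hvc1]
          omega
        have hk2 : finSumFinEquiv (Sum.inl k) ≠ c2 := by
          simp only [finSumFinEquiv_apply_left, ne_eq, Fin.ext_iff, Fin.coe_castAdd, hvc2]
          omega
        simp only [Matrix.submatrix_apply, Matrix.fromBlocks_apply₁₁, hC, Matrix.of_apply,
          hk1, hk2, if_false]
        simp [Matrix.one_apply, Fin.ext_iff]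
      | inr k => simp [Matrix.fromBlocks_apply₁₂]
    | inr i =>
      cases k with
      | inl k =>
        have hk1 : finSumFinEquiv (Sum.inl k) ≠ c1 := by
          simp only [finSumFinEquiv_apply_left, ne_eq, Fin.ext_iff, Fin.coe_castAdd, hvc1]
          omega
        have hk2 : finSumFinEquiv (Sum.inl k) ≠ c2 := by
          simp only [finSumFinEquiv_apply_left, ne_eq, Fin.ext_iff, Fin.coe_castAdd, hvc2]
          omega
        have hne : finSumFinEquiv (Sum.inr i) ≠ finSumFinEquiv (Sum.inl k) := by
          simp only [finSumFinEquiv_apply_left, finSumFinEquiv_apply_right, ne_eq, Fin.ext_iff,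
            Fin.coe_castAdd, Fin.coe_natAdd]
          omega
        simp only [Matrix.submatrix_apply, Matrix.fromBlocks_apply₂₁, hC, Matrix.of_apply,
          hk1, hk2, if_false]
        simp only [Matrix.one_apply, Matrix.zero_apply, ite_eq_right_iff]
        intro h
        exact absurd (by simpa using h) hne
      | inr k => simp [Matrix.fromBlocks_apply₂₂]
  have hdetC : C.det = (-1 : ℝ)^m *
      ((A.submatrix Fin.succ c1.succAbove).det * (A.submatrix Fin.castSucc Fin.castSucc).det
        - (A.submatrix Fin.castSucc c1.succAbove).det
          * (A.submatrix Fin.succ Fin.castSucc).det) := by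
    rw [← Matrix.det_submatrix_equiv_self finSumFinEquiv C, hCblock,
      Matrix.det_fromBlocks_zero₂₁, Matrix.det_one, one_mul, Matrix.det_fin_two]
    simp only [Matrix.of_apply, h0, h1]
    have e00 : C c1 c1 = A.adjugate c1 0 := by simp [hC]
    have e01 : C c1 c2 = A.adjugate c1 c2 := by simp [hC, hc12]
    have e10 : C c2 c1 = A.adjugate c2 0 := by simp [hC]
    have e11 : C c2 c2 = A.adjugate c2 c2 := by simp [hC, hc12]
    rw [e00, e01, e10, e11,
      Matrix.adjugate_fin_succ_eq_det_submatrix, Matrix.adjugate_fin_succ_eq_det_submatrix,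
      Matrix.adjugate_fin_succ_eq_det_submatrix, Matrix.adjugate_fin_succ_eq_det_submatrix,
      Fin.succAbove_zero]
    rw [show (c2 : Fin (m+2)).succAbove = Fin.castSucc from by rw [hc2]; exact Fin.succAbove_last]
    have hv0 : (((0 : Fin (m+2))) : ℕ) = 0 := rfl
    rw [hv0, hvc1, hvc2]
    have p1 : ((-1 : ℝ)) ^ (m + 1 + (m + 1)) = 1 := by
      rw [show m + 1 + (m + 1) = 2 * (m + 1) from by ring, pow_mul]; norm_num
    have p2 : ((-1 : ℝ)) ^ (m + 1 + m) = -1 := by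
      rw [show m + 1 + m = 2*m + 1 from by ring, pow_succ, pow_mul]; norm_num
    have p3 : ((-1 : ℝ)) ^ (0 + (m + 1)) = -(-1:ℝ)^m := by
      rw [zero_add, pow_succ]; ring
    rw [zero_add, p1, p2, p3]
    ring
  -- Step 4 : put things together
  have hcancel : C.det = A.det * ((-1 : ℝ)^m
      * (A.submatrix (Fin.castSucc ∘ Fin.succ) (Fin.castSucc ∘ Fin.castSucc)).det) :=
    mul_left_cancel₀ hd (by rw [← Matrix.det_mul, hdetAC])
  rw [hdetC] at hcancel
  have hpow : ((-1 : ℝ))^m ≠ 0 := pow_ne_zero _ (by norm_num)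
  have := mul_left_cancel₀ hpow (by rw [hcancel]; ring :
    ((-1:ℝ)^m) * ((A.submatrix Fin.succ c1.succAbove).det
        * (A.submatrix Fin.castSucc Fin.castSucc).det
      - (A.submatrix Fin.castSucc c1.succAbove).det * (A.submatrix Fin.succ Fin.castSucc).det)
    = ((-1:ℝ)^m) * (A.det
        * (A.submatrix (Fin.castSucc ∘ Fin.succ) (Fin.castSucc ∘ Fin.castSucc)).det))
  exact this.symm

lemma dj (m : ℕ) (A : Matrix (Fin (m+2)) (Fin (m+2)) ℝ) : djExpr m A = 0 := by
  classical
  set B : Matrix (Fin (m+2)) (Fin (m+2)) ℝ[X] := A.map C + (X : ℝ[X]) • 1 with hB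
  have hmap : ∀ t : ℝ, B.map (eval t) = A + t • 1 := by
    intro t
    ext i k
    by_cases h : i = k <;>
      simp [hB, h, Matrix.add_apply, Matrix.smul_apply, Matrix.one_apply, Matrix.map_apply]
  have hBc : B = charmatrix (-A) := by
    ext i k
    by_cases h : i = k <;>
      simp [hB, h, charmatrix_apply, Matrix.add_apply, Matrix.smul_apply, Matrix.one_apply,
        Matrix.diagonal_apply, Matrix.map_apply, sub_eq_add_neg, add_comm]
  have hq : B.det ≠ 0 := by
    rw [hBc]
    exact (Matrix.charpoly_monic (-A)).ne_zero
  have key : {t : ℝ | IsRoot B.det t}ᶜ ⊆ {t : ℝ | IsRoot (djExpr m B) t} := by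
    intro t ht
    have hdet : (A + t • 1).det ≠ 0 := by
      intro h
      apply ht
      show eval t B.det = 0
      rw [show eval t B.det = (evalRingHom t) B.det from rfl, RingHom.map_det,
        RingHom.mapMatrix_apply]
      rw [show B.map (evalRingHom t) = B.map (eval t) from rfl, hmap t]
      exact h
    show eval t (djExpr m B) = 0
    rw [show eval t (djExpr m B) = (evalRingHom t) (djExpr m B) from rfl,
      map_djExpr, show B.map (evalRingHom t) = B.map (eval t) from rfl, hmap t]
    exact dj_ne m _ hdet
  have hzero : djExpr m B = 0 :=
    eq_zero_of_infinite_isRoot _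
      (((Polynomial.finite_setOf_isRoot hq).infinite_compl).mono key)
  have := congrArg (eval 0) hzero
  rw [show eval 0 (djExpr m B) = (evalRingHom 0) (djExpr m B) from rfl, map_djExpr,
    show B.map (evalRingHom 0) = B.map (eval 0) from rfl, hmap 0] at this
  simpa using this

theorem stmt_1 (u b : ℕ → ℝ) (j n : ℕ) (hn : 1 ≤ n) :
    fdet u b j n * hankel u (j + 1) (n - 1) =
      fdet u b (j + 1) (n - 1) * hankel u j n
        - fdet u b j (n - 1) * hankel u (j + 1) n := by
  obtain ⟨m, rfl⟩ : ∃ m, n = m + 1 := ⟨n - 1, by omega⟩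
  simp only [Nat.add_sub_cancel]
  set M : Matrix (Fin (m+2)) (Fin (m+2)) ℝ :=
    Matrix.of (fun i k : Fin (m+2) => if (k : ℕ) < m+1 then u (j + i + k) else b (j + i))
      with hM
  have h := dj m M
  rw [djExpr, sub_eq_zero] at h
  have e1 : fdet u b j (m+1) = M.det := rfl
  have e2 : hankel u (j+1) m
      = (M.submatrix (Fin.castSucc ∘ Fin.succ) (Fin.castSucc ∘ Fin.castSucc)).det := by
    unfold hankel
    congr 1
    ext i k
    have hk := k.isLt
    simp only [Matrix.submatrix_apply, Function.comp_apply, hM, Matrix.of_apply,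
      Fin.coe_castSucc, Fin.val_succ]
    rw [if_pos (by omega)]
    congr 1
    omega
  have e3 : hankel u j (m+1) = (M.submatrix Fin.castSucc Fin.castSucc).det := by
    unfold hankel
    congr 1
    ext i k
    have hk := k.isLt
    simp only [Matrix.submatrix_apply, hM, Matrix.of_apply, Fin.coe_castSucc]
    rw [if_pos (by omega)]
  have e4 : hankel u (j+1) (m+1) = (M.submatrix Fin.succ Fin.castSucc).det := by
    unfold hankel
    congr 1
    ext i k
    have hk := k.isLt
    simp only [Matrix.submatrix_apply, hM, Matrix.of_apply, Fin.coe_castSucc, Fin.val_succ]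
    rw [if_pos (by omega)]
    congr 1
    omega
  have e5 : fdet u b (j+1) m
      = (M.submatrix Fin.succ (Fin.last m).castSucc.succAbove).det := by
    unfold fdet
    congr 1
    ext i k
    have hk := k.isLt
    simp only [Matrix.submatrix_apply, hM, Matrix.of_apply, Fin.val_succ]
    by_cases hkm : (k : ℕ) < m
    · rw [Fin.succAbove_of_castSucc_lt _ _ (by
        simp only [Fin.lt_def, Fin.coe_castSucc, Fin.val_last]; omega)]
      rw [if_pos hkm, if_pos (by simp only [Fin.coe_castSucc]; omega)]
      simp only [Fin.coe_castSucc]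
      congr 1
      omega
    · rw [Fin.succAbove_of_le_castSucc _ _ (by
        simp only [Fin.le_def, Fin.coe_castSucc, Fin.val_last]; omega)]
      rw [if_neg hkm, if_neg (by simp only [Fin.val_succ]; omega)]
      congr 1
      omega
  have e6 : fdet u b j m
      = (M.submatrix Fin.castSucc (Fin.last m).castSucc.succAbove).det := by
    unfold fdet
    congr 1
    ext i k
    have hk := k.isLt
    simp only [Matrix.submatrix_apply, hM, Matrix.of_apply, Fin.coe_castSucc]
    by_cases hkm : (k : ℕ) < m
    · rw [Fin.succAbove_of_castSucc_lt _ _ (by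
        simp only [Fin.lt_def, Fin.coe_castSucc, Fin.val_last]; omega)]
      rw [if_pos hkm, if_pos (by simp only [Fin.coe_castSucc]; omega)]
      simp only [Fin.coe_castSucc]
    · rw [Fin.succAbove_of_le_castSucc _ _ (by
        simp only [Fin.le_def, Fin.coe_castSucc, Fin.val_last]; omega)]
      rw [if_neg hkm, if_neg (by simp only [Fin.val_succ]; omega)]
  rw [e1, e2, e3, e4, e5, e6]
  exact h
end

section
/- Let (u_l)_{l≥0} and b = (b_l)_{l≥0} be real sequences, and fix j ≥ 0, n ≥ 1. Define ψ^{(j)}_n(b) = f^{(j)}_n(b) / H^{(j)}_{n+1} and e^{(j)}_n = H^{(j)}_{n+1} H^{(j+1)}_{n−1} / (H^{(j)}_n H^{(j+1)}_n). If H^{(j)}_n, H^{(j+1)}_n, H^{(j)}_{n+1}, and H^{(j+1)}_{n−1} are all nonzero, then ψ^{(j)}_n(b) = (ψ^{(j+1)}_{n−1}(b) − ψ^{(j)}_{n−1}(b)) / e^{(j)}_n. -/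
set_option linter.unusedSectionVars false

section JacobiAux
open Matrix Polynomial
variable {R : Type*} [CommRing R]

lemma myUpdateColumn_comm {M N : Type*} [DecidableEq N] (A : Matrix M N R)
    {c₁ c₂ : N} (h : c₁ ≠ c₂) (x y : M → R) :
    (A.updateCol c₁ x).updateCol c₂ y = (A.updateCol c₂ y).updateCol c₁ x := by
  ext i k
  rcases eq_or_ne k c₁ with rfl | h1 <;> rcases eq_or_ne k c₂ with rfl | h2 <;>
    simp_all [Matrix.updateCol_apply]

lemma myDet_updateColumn_single {N : Type*} [DecidableEq N] [Fintype N]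
    (M : Matrix N N R) (c r : N) :
    ((M.updateCol c (Pi.single r 1)).det) = adjugate M c r := by
  rw [← Matrix.cramer_apply, Matrix.cramer_eq_adjugate_mulVec, Matrix.mulVec_single]
  simp

lemma myMul_updateColumn_two {N : Type*} [DecidableEq N] [Fintype N]
    (A : Matrix N N R) {c₁ c₂ : N} (h : c₁ ≠ c₂) (x y : N → R) :
    A * (((1 : Matrix N N R).updateCol c₁ x).updateCol c₂ y)
      = (A.updateCol c₁ (A.mulVec x)).updateCol c₂ (A.mulVec y) := by
  ext i k
  rcases eq_or_ne k c₂ with rfl | h2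
  · simp [Matrix.mul_apply, Matrix.mulVec, dotProduct]
  rcases eq_or_ne k c₁ with rfl | h1
  · simp [Matrix.mul_apply, Matrix.updateCol_apply, h2, Ne.symm h, Matrix.mulVec, dotProduct]
  · simp [Matrix.mul_apply, Matrix.updateCol_apply, h1, h2, Matrix.one_apply,
      mul_ite, mul_one, mul_zero, Finset.sum_ite_eq']


lemma single_eq_one_col {N : Type*} [DecidableEq N] [Fintype N] (c : N) :
    (Pi.single c 1 : N → R) = fun j => (1 : Matrix N N R) j c := by
  funext j; simp [Matrix.one_apply, Pi.single_apply]

lemma myDet_single_single {N : Type*} [DecidableEq N] [Fintype N] {c₁ c₂ : N} (h : c₁ ≠ c₂)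
    (i k : N) :
    (((1 : Matrix N N R).updateCol c₂ (Pi.single k 1)).updateCol c₁ (Pi.single i 1)).det
      = (if i = c₁ ∧ k = c₂ then 1 else 0) - (if i = c₂ ∧ k = c₁ then 1 else 0) := by
  rcases eq_or_ne c₁ i with rfl | hi1
  · rcases eq_or_ne c₂ k with rfl | hk2
    · rw [single_eq_one_col, single_eq_one_col]
      have h2 : ((1 : Matrix N N R).updateCol c₂ fun j => (1:Matrix N N R) j c₂)
          = 1 := Matrix.updateCol_eq_self _ _
      rw [show (fun j => (1 : Matrix N N R) j c₁) = (fun j =>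
        ((1 : Matrix N N R).updateCol c₂ fun j => (1:Matrix N N R) j c₂) j c₁) by rw [h2]]
      rw [h2, Matrix.updateCol_eq_self, det_one]
      simp [h, Ne.symm h]
    · -- i = c₁, k ≠ c₂ : duplicate columns
      rcases eq_or_ne c₁ k with rfl | hk1
      · -- col c₂ = single c₁ = col c₁
        rw [Matrix.det_zero_of_column_eq h (fun j => ?_)]
        · simp [h, Ne.symm h, hk2]
        · simp [Matrix.updateCol_apply, Ne.symm h]
      · -- col k = single k = col c₂
        rw [Matrix.det_zero_of_column_eq hk2 (fun j => ?_)]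
        · simp [h, Ne.symm h, hk2, Ne.symm hk2]
        · simp [Matrix.updateCol_apply, hk2, hk1, Ne.symm hk2, Ne.symm hk1, h,
            Matrix.one_apply, Pi.single_apply, eq_comm]
  · rcases eq_or_ne c₂ i with rfl | hi2
    · rcases eq_or_ne c₁ k with rfl | hk1
      · -- swap: det = -1
        have e : (((1 : Matrix N N R).updateCol c₂ (Pi.single c₁ 1)).updateCol c₁ (Pi.single c₂ 1))
            = (1 : Matrix N N R).submatrix id (Equiv.swap c₁ c₂) := by
          ext a b
          rcases eq_or_ne c₁ b with rfl | hb1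
          · simp [Matrix.updateCol_apply, Equiv.swap_apply_left, Matrix.one_apply,
              Pi.single_apply, eq_comm]
          rcases eq_or_ne c₂ b with rfl | hb2
          · simp [Matrix.updateCol_apply, Ne.symm hb1, Equiv.swap_apply_right,
              Matrix.one_apply, Pi.single_apply, Ne.symm h, eq_comm]
          · simp only [Matrix.submatrix_apply, id_eq]
            rw [Equiv.swap_apply_of_ne_of_ne (Ne.symm hb1) (Ne.symm hb2)]
            simp only [Matrix.updateCol_apply, if_neg (Ne.symm hb1), if_neg (Ne.symm hb2), id_eq]
            rfl
        rw [e, Matrix.det_permute' (Equiv.swap c₁ c₂) 1]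
        simp [Equiv.Perm.sign_swap h, Ne.symm hi1, h, Ne.symm h]
      · rcases eq_or_ne c₂ k with rfl | hk2
        · -- col c₁ = single c₂ = col c₂
          rw [Matrix.det_zero_of_column_eq h (fun j => ?_)]
          · simp [Ne.symm hi1, Ne.symm hk1]
          · simp [Matrix.updateCol_apply, h, Ne.symm h]
        · -- col k = single k = col c₂  (k ∉ {c₁, c₂})
          rw [Matrix.det_zero_of_column_eq hk2 (fun j => ?_)]
          · simp [Ne.symm hi1, Ne.symm hk1]
          · simp [Matrix.updateCol_apply, Ne.symm hk1, Ne.symm hk2, h,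
              Matrix.one_apply, Pi.single_apply, eq_comm]
    · -- i ∉ {c₁, c₂}: col i = single i = col c₁
      rw [Matrix.det_zero_of_column_eq hi1 (fun j => ?_)]
      · simp [Ne.symm hi1, Ne.symm hi2]
      · simp [Matrix.updateCol_apply, Ne.symm hi1, Ne.symm hi2, hi1,
          Matrix.one_apply, Pi.single_apply, eq_comm]

lemma myDet_one_upd_two {N : Type*} [DecidableEq N] [Fintype N] {c₁ c₂ : N} (h : c₁ ≠ c₂)
    (v w : N → R) :
    (((1 : Matrix N N R).updateCol c₁ v).updateCol c₂ w).det
      = v c₁ * w c₂ - v c₂ * w c₁ := by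
  have hv : v = ∑ i, v i • (Pi.single i 1 : N → R) := by
    funext a; simp [Finset.sum_apply, Pi.single_apply]
  have hw : w = ∑ i, w i • (Pi.single i 1 : N → R) := by
    funext a; simp [Finset.sum_apply, Pi.single_apply]
  have step : ∀ k : N, (((1 : Matrix N N R).updateCol c₁ v).updateCol c₂
      (Pi.single k 1)).det
      = ∑ i, v i * ((if i = c₁ ∧ k = c₂ then 1 else 0) - (if i = c₂ ∧ k = c₁ then 1 else 0)) := by
    intro k
    rw [myUpdateColumn_comm _ h, ← Matrix.cramer_apply]
    conv_lhs => rw [hv]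
    rw [map_sum]
    simp only [_root_.map_smul, Finset.sum_apply, Pi.smul_apply, smul_eq_mul, Matrix.cramer_apply,
      myDet_single_single h]
  rw [← Matrix.cramer_apply]
  conv_lhs => rw [hw]
  rw [map_sum]
  simp only [_root_.map_smul, Finset.sum_apply, Pi.smul_apply, smul_eq_mul, Matrix.cramer_apply, step]
  simp only [ite_and, mul_sub, Finset.mul_sum, mul_ite, mul_one, mul_zero,
    Finset.sum_sub_distrib, Finset.sum_ite_eq, Finset.sum_ite_eq', Finset.mem_univ, if_true]
  ring

lemma mySubmatrix_updateColumn {L O M N : Type*} [DecidableEq N] [DecidableEq O]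
    (A : Matrix M N R) (c : N) (v : M → R) (f : L → M) (g : O → N) (c' : O)
    (hg : ∀ k, g k = c ↔ k = c') :
    (A.updateCol c v).submatrix f g = (A.submatrix f g).updateCol c' (fun i => v (f i)) := by
  ext i k
  by_cases hk : k = c'
  · subst hk
    simp [Matrix.updateCol_apply, (hg k).mpr rfl]
  · have hgk : g k ≠ c := fun hh => hk ((hg k).mp hh)
    simp [Matrix.updateCol_apply, hk, hgk]

lemma myDetE {m : ℕ} (A : Matrix (Fin (m + 2)) (Fin (m + 2)) R) :
    ((A.updateCol ⟨m, by omega⟩ (Pi.single 0 1)).updateCol (Fin.last (m + 1))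
        (Pi.single (Fin.last (m + 1)) 1)).det
      = (-1 : R) ^ m *
        (A.submatrix (fun i : Fin m => i.succ.castSucc) (fun i : Fin m => i.castSucc.castSucc)).det := by
  rw [myDet_updateColumn_single, Matrix.adjugate_fin_succ_eq_det_submatrix]
  rw [Fin.succAbove_last]
  rw [mySubmatrix_updateColumn _ _ _ _ Fin.castSucc (Fin.last m)
    (fun k => by constructor <;> intro hh <;> [skip; subst hh] <;>
      simp_all [Fin.ext_iff, Fin.val_last])]
  have hs : (fun i : Fin (m + 1) => (Pi.single (0 : Fin (m + 2)) 1 : Fin (m+2) → R) i.castSucc)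
      = Pi.single (0 : Fin (m + 1)) 1 := by
    funext i
    simp only [Pi.single_apply, Fin.castSucc_eq_zero_iff]
  rw [hs, myDet_updateColumn_single, Matrix.adjugate_fin_succ_eq_det_submatrix]
  rw [Fin.succAbove_last, Fin.succAbove_zero, Matrix.submatrix_submatrix]
  simp only [Fin.val_last, Fin.val_zero, zero_add, Function.comp_def]
  rw [show ((-1 : R) ^ (m + 1 + (m + 1))) = 1 from Even.neg_one_pow ⟨m + 1, by ring⟩, one_mul]

lemma myJacobi_ring {m : ℕ} (A : Matrix (Fin (m + 2)) (Fin (m + 2)) R) :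
    A.det * ((A.submatrix (Fin.succAbove 0) (Fin.succAbove ⟨m, by omega⟩)).det *
        (A.submatrix (Fin.succAbove (Fin.last (m + 1))) (Fin.succAbove (Fin.last (m + 1)))).det
      - (A.submatrix (Fin.succAbove 0) (Fin.succAbove (Fin.last (m + 1)))).det *
        (A.submatrix (Fin.succAbove (Fin.last (m + 1))) (Fin.succAbove ⟨m, by omega⟩)).det)
    = A.det ^ 2 * (A.submatrix (fun i : Fin m => i.succ.castSucc)
        (fun i : Fin m => i.castSucc.castSucc)).det := by
  have h12 : (⟨m, by omega⟩ : Fin (m + 2)) ≠ Fin.last (m + 1) := by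
    simp [Fin.ext_iff]
  have hv : ∀ r : Fin (m + 2), A.mulVec (fun i => adjugate A i r)
      = A.det • (Pi.single r 1 : Fin (m + 2) → R) := by
    intro r
    funext i
    have := congrFun (congrFun (Matrix.mul_adjugate A) i) r
    simpa [Matrix.mul_apply, Matrix.mulVec, dotProduct, Matrix.one_apply, Pi.single_apply,
      smul_eq_mul] using this
  have hmain := congrArg Matrix.det (myMul_updateColumn_two A h12
    (fun i => adjugate A i 0) (fun i => adjugate A i (Fin.last (m + 1))))
  rw [det_mul, myDet_one_upd_two h12, hv, hv, Matrix.det_updateCol_smul,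
    myUpdateColumn_comm _ h12, Matrix.det_updateCol_smul, myUpdateColumn_comm _ h12.symm,
    myDetE] at hmain
  simp only [Matrix.adjugate_fin_succ_eq_det_submatrix, Fin.val_zero, Fin.val_last,
    zero_add] at hmain
  rw [show ((-1 : R) ^ (m + 1 + (m + 1))) = 1 from Even.neg_one_pow ⟨m + 1, by ring⟩,
    show ((-1 : R) ^ (m + 1 + m)) = -1 from Odd.neg_one_pow ⟨m, by ring⟩, pow_succ] at hmain
  have hs : (-1 : R) ^ m * (-1 : R) ^ m = 1 := by
    rw [← pow_add]; exact Even.neg_one_pow ⟨m, rfl⟩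
  generalize hgen : ((-1 : R) ^ m) = s at hmain hs
  linear_combination s * hmain +
    (A.det ^ 2 * (A.submatrix (fun i : Fin m => i.succ.castSucc)
        (fun i : Fin m => i.castSucc.castSucc)).det -
      A.det * ((A.submatrix (Fin.succAbove 0) (Fin.succAbove (⟨m, by omega⟩ : Fin (m + 2)))).det *
          (A.submatrix (Fin.succAbove (Fin.last (m + 1))) (Fin.succAbove (Fin.last (m + 1)))).det -
        (A.submatrix (Fin.succAbove 0) (Fin.succAbove (Fin.last (m + 1)))).det *
          (A.submatrix (Fin.succAbove (Fin.last (m + 1)))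
            (Fin.succAbove (⟨m, by omega⟩ : Fin (m + 2)))).det)) * hs

lemma myJacobi_real {m : ℕ} (A : Matrix (Fin (m + 2)) (Fin (m + 2)) ℝ) :
    (A.submatrix (Fin.succAbove 0) (Fin.succAbove ⟨m, by omega⟩)).det *
        (A.submatrix (Fin.succAbove (Fin.last (m + 1))) (Fin.succAbove (Fin.last (m + 1)))).det
      - (A.submatrix (Fin.succAbove 0) (Fin.succAbove (Fin.last (m + 1)))).det *
        (A.submatrix (Fin.succAbove (Fin.last (m + 1))) (Fin.succAbove ⟨m, by omega⟩)).det
    = A.det * (A.submatrix (fun i : Fin m => i.succ.castSucc)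
        (fun i : Fin m => i.castSucc.castSucc)).det := by
  classical
  set B : Matrix (Fin (m + 2)) (Fin (m + 2)) ℝ[X] := charmatrix (-A) with hBdef
  have hB : B.det ≠ 0 := by
    have : B.det = (-A).charpoly := rfl
    rw [this]
    exact (Matrix.charpoly_monic (-A)).ne_zero
  have key := myJacobi_ring B
  rw [sq] at key
  have key2 := mul_left_cancel₀ hB (key.trans (mul_assoc _ _ _))
  have hBA : B.map (Polynomial.evalRingHom (0 : ℝ)) = A := by
    ext i j
    rcases eq_or_ne i j with rfl | hij
    · simp [hBdef, charmatrix_apply_eq]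
    · simp [hBdef, charmatrix_apply_ne _ _ _ hij]
  have := congrArg (Polynomial.evalRingHom (0 : ℝ)) key2
  simp only [map_sub, _root_.map_mul, RingHom.map_det, RingHom.mapMatrix_apply, ← Matrix.submatrix_map, hBA] at this
  exact this

end JacobiAux

/-- `psi u b j n = ψ^{(j)}_n(b) = f^{(j)}_n(b) / H^{(j)}_{n+1}`. -/
noncomputable def psi (u b : ℕ → ℝ) (j n : ℕ) : ℝ :=
  fdet u b j n / hankel u j (n + 1)

/-- `eqd u j n = e^{(j)}_n = H^{(j)}_{n+1} H^{(j+1)}_{n-1} / (H^{(j)}_n H^{(j+1)}_n)`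
for `n ≥ 1`, and `e^{(j)}_0 = 0`. -/
noncomputable def eqd (u : ℕ → ℝ) (j n : ℕ) : ℝ :=
  if n = 0 then 0 else
    hankel u j (n + 1) * hankel u (j + 1) (n - 1) / (hankel u j n * hankel u (j + 1) n)

lemma key_identity (u b : ℕ → ℝ) (j m : ℕ) :
    fdet u b (j + 1) m * hankel u j (m + 1) - hankel u (j + 1) (m + 1) * fdet u b j m
      = fdet u b j (m + 1) * hankel u (j + 1) m := by
  have H := myJacobi_real (m := m) (Matrix.of fun i k : Fin (m + 2) =>
    if (k : ℕ) < m + 1 then u (j + i + k) else b (j + i))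
  have hr0 : ∀ i : Fin (m + 1), (((0 : Fin (m + 2)).succAbove i) : ℕ) = (i : ℕ) + 1 := by
    intro i; rw [Fin.succAbove_zero]; simp
  have hrl : ∀ i : Fin (m + 1), (((Fin.last (m + 1)).succAbove i) : ℕ) = (i : ℕ) := by
    intro i; rw [Fin.succAbove_last]; simp
  have hcm : ∀ k : Fin (m + 1), (((⟨m, by omega⟩ : Fin (m + 2)).succAbove k) : ℕ)
      = if (k : ℕ) < m then (k : ℕ) else (k : ℕ) + 1 := by
    intro k
    simp only [Fin.succAbove, Fin.lt_def, Fin.coe_castSucc]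
    split_ifs <;> simp
  have e1 : (Matrix.of fun i k : Fin (m + 2) =>
        if (k : ℕ) < m + 1 then u (j + i + k) else b (j + i)).submatrix
        (Fin.succAbove 0) (Fin.succAbove ⟨m, by omega⟩)
      = Matrix.of (fun i k : Fin (m + 1) =>
        if (k : ℕ) < m then u (j + 1 + i + k) else b (j + 1 + i)) := by
    ext i k
    simp only [Matrix.submatrix_apply, Matrix.of_apply, hr0, hcm]
    by_cases hk : (k : ℕ) < m
    · rw [if_pos hk, if_pos (by omega), if_pos hk]
      congr 1; omega
    · rw [if_neg hk, if_neg (by omega), if_neg hk]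
      congr 1; omega
  have e2 : (Matrix.of fun i k : Fin (m + 2) =>
        if (k : ℕ) < m + 1 then u (j + i + k) else b (j + i)).submatrix
        (Fin.succAbove (Fin.last (m + 1))) (Fin.succAbove (Fin.last (m + 1)))
      = Matrix.of (fun i k : Fin (m + 1) => u (j + i + k)) := by
    ext i k
    simp only [Matrix.submatrix_apply, Matrix.of_apply, hrl]
    rw [if_pos (by omega)]
  have e3 : (Matrix.of fun i k : Fin (m + 2) =>
        if (k : ℕ) < m + 1 then u (j + i + k) else b (j + i)).submatrix
        (Fin.succAbove 0) (Fin.succAbove (Fin.last (m + 1)))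
      = Matrix.of (fun i k : Fin (m + 1) => u (j + 1 + i + k)) := by
    ext i k
    simp only [Matrix.submatrix_apply, Matrix.of_apply, hr0, hrl]
    rw [if_pos (by omega)]
    congr 1; omega
  have e4 : (Matrix.of fun i k : Fin (m + 2) =>
        if (k : ℕ) < m + 1 then u (j + i + k) else b (j + i)).submatrix
        (Fin.succAbove (Fin.last (m + 1))) (Fin.succAbove ⟨m, by omega⟩)
      = Matrix.of (fun i k : Fin (m + 1) =>
        if (k : ℕ) < m then u (j + i + k) else b (j + i)) := by
    ext i k
    simp only [Matrix.submatrix_apply, Matrix.of_apply, hrl, hcm]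
    by_cases hk : (k : ℕ) < m
    · rw [if_pos hk, if_pos (by omega), if_pos hk]
    · rw [if_neg hk, if_neg (by omega), if_neg hk]
  have e5 : (Matrix.of fun i k : Fin (m + 2) =>
        if (k : ℕ) < m + 1 then u (j + i + k) else b (j + i)).submatrix
        (fun i : Fin m => i.succ.castSucc) (fun i : Fin m => i.castSucc.castSucc)
      = Matrix.of (fun i k : Fin m => u (j + 1 + i + k)) := by
    ext i k
    simp only [Matrix.submatrix_apply, Matrix.of_apply, Fin.coe_castSucc, Fin.val_succ]
    rw [if_pos (by omega)]
    congr 1; omega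
  rw [e1, e2, e3, e4, e5] at H
  simp only [fdet, hankel]
  exact H

theorem stmt_2 (u b : ℕ → ℝ) (j n : ℕ) (hn : 1 ≤ n)
    (h1 : hankel u j n ≠ 0) (h2 : hankel u (j + 1) n ≠ 0)
    (h3 : hankel u j (n + 1) ≠ 0) (h4 : hankel u (j + 1) (n - 1) ≠ 0) :
    psi u b j n = (psi u b (j + 1) (n - 1) - psi u b j (n - 1)) / eqd u j n := by
  obtain ⟨m, rfl⟩ : ∃ m, n = m + 1 := ⟨n - 1, by omega⟩
  have key := key_identity u b j m
  simp only [Nat.add_sub_cancel] at h4 ⊢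
  rw [psi, psi, psi, eqd, if_neg (by omega : ¬(m + 1 = 0))]
  simp only [Nat.add_sub_cancel]
  field_simp
  linear_combination (-1 : ℝ) * key
end

section
/- Let (u_l)_{l≥0} be a real sequence, and fix j ≥ 0 and n ≥ 1. If the Hankel determinants H^{(j)}_n, H^{(j+1)}_n, H^{(j+1)}_{n−1}, and H^{(j+2)}_{n−1} are all nonzero, then the qd-algorithm recursion holds: e^{(j)}_n = q^{(j+1)}_n − q^{(j)}_n + e^{(j+1)}_{n−1}, where e^{(j)}_0 = 0 by convention. -/
open Matrix

variable {R : Type*} [CommRing R]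

private lemma uC_comm {m : Type*} [DecidableEq m] [Fintype m] (A : Matrix m m R) {i j : m}
    (h : i ≠ j) (v w : m → R) :
    (A.updateCol i v).updateCol j w = (A.updateCol j w).updateCol i v := by
  ext r s
  by_cases hs : s = j <;> by_cases hs' : s = i <;>
    simp [Matrix.updateCol_apply, hs, hs'] <;> simp_all

private lemma detL1 {m : ℕ} (A : Matrix (Fin (m + 1)) (Fin (m + 1)) R) :
    det (A.updateCol 0 (Pi.single 0 1)) = det (A.submatrix Fin.succ Fin.succ) := by
  rw [← Matrix.det_transpose, ← Matrix.updateRow_transpose, ← Matrix.adjugate_apply,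
    Matrix.adjugate_fin_succ_eq_det_submatrix]
  simp [← Matrix.det_transpose (A.submatrix Fin.succ Fin.succ), Matrix.transpose_submatrix]

private lemma detL2 {m : ℕ} (A : Matrix (Fin (m + 1)) (Fin (m + 1)) R) :
    det (A.updateCol (Fin.last m) (Pi.single (Fin.last m) 1)) =
      det (A.submatrix Fin.castSucc Fin.castSucc) := by
  rw [← Matrix.det_transpose, ← Matrix.updateRow_transpose, ← Matrix.adjugate_apply,
    Matrix.adjugate_fin_succ_eq_det_submatrix]
  have : ((-1 : R)) ^ ((Fin.last m : Fin (m+1)) + (Fin.last m : Fin (m+1)) : ℕ) = 1 :=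
    Even.neg_one_pow ⟨(Fin.last m : Fin (m+1)), rfl⟩
  rw [this, one_mul]
  simp [← Matrix.det_transpose (A.submatrix Fin.castSucc Fin.castSucc),
    Matrix.transpose_submatrix]

private lemma key {n : ℕ} (M : Matrix (Fin (n + 2)) (Fin (n + 2)) R) :
    M.det * (M.det *
        (M.submatrix (Fin.succ ∘ Fin.castSucc) (Fin.succ ∘ Fin.castSucc)).det) =
      M.det * ((M.submatrix Fin.succ Fin.succ).det *
          (M.submatrix Fin.castSucc Fin.castSucc).det -
        (M.submatrix Fin.castSucc Fin.succ).det * (M.submatrix Fin.succ Fin.castSucc).det) := by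
  set l : Fin (n + 2) := Fin.last (n + 1) with hl
  have h0l : (0 : Fin (n + 2)) ≠ l := by
    simp [hl, Fin.ext_iff]
  -- the two "adjugate columns"
  set x : Fin (n + 2) → R := fun k => ∑ i, M k i * adjugate M i 0 with hx
  set y : Fin (n + 2) → R := fun k => ∑ i, M k i * adjugate M i l with hy
  have hxs : x = M.det • (Pi.single (0 : Fin (n + 2)) (1 : R) : Fin (n + 2) → R) := by
    funext k
    have := congrFun (congrFun (Matrix.mul_adjugate M) k) 0
    simp [Matrix.mul_apply, Matrix.one_apply, Pi.single_apply, hx] at this ⊢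
    rw [this]
  have hys : y = M.det • (Pi.single l (1 : R) : Fin (n + 2) → R) := by
    funext k
    have := congrFun (congrFun (Matrix.mul_adjugate M) k) l
    simp [Matrix.mul_apply, Matrix.one_apply, Pi.single_apply, hy] at this ⊢
    rw [this]
  -- generic column expansion via linearity of `cramer`
  have hcol : ∀ (B : Matrix (Fin (n + 2)) (Fin (n + 2)) R) (c : Fin (n + 2)) (v : Fin (n + 2) → R),
      det (B.updateCol c (fun k => ∑ i, M k i * v i)) =
        ∑ i, v i * det (B.updateCol c fun k => M k i) := by
    intro B c v
    rw [← Matrix.cramer_apply, ← Matrix.sum_cramer_apply]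
    refine Finset.sum_congr rfl fun i _ => ?_
    have hv : (fun k => M k i * v i) = v i • (fun k => M k i) := by
      funext k; simp [mul_comm]
    rw [hv, LinearMap.map_smul]
    simp [Matrix.cramer_apply]
  -- the double expansion
  have fmid : ∀ i i' : Fin (n + 2), i' ≠ 0 → i' ≠ l →
      det ((M.updateCol l fun k => M k i).updateCol 0 fun k => M k i') = 0 := by
    intro i i' hi0 hil
    refine Matrix.det_zero_of_column_eq (Ne.symm hi0) fun k => ?_
    simp [Matrix.updateCol_apply, hi0, hil]
  have f0 : ∀ i : Fin (n + 2), i ≠ l →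
      det ((M.updateCol l fun k => M k i).updateCol 0 fun k => M k 0) = 0 := by
    intro i hil
    refine Matrix.det_zero_of_column_eq hil fun k => ?_
    by_cases hi0 : i = 0 <;>
      simp [Matrix.updateCol_apply, hi0, hil, Ne.symm h0l]
  have fl : ∀ i : Fin (n + 2), i ≠ 0 →
      det ((M.updateCol l fun k => M k i).updateCol 0 fun k => M k l) = 0 := by
    intro i hi0
    by_cases hil : i = l
    · refine Matrix.det_zero_of_column_eq h0l fun k => ?_
      simp [Matrix.updateCol_apply, hil, Ne.symm h0l]
    · refine Matrix.det_zero_of_column_eq hil fun k => ?_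
      simp [Matrix.updateCol_apply, hi0, hil, Ne.symm h0l]
  have fl0 : det ((M.updateCol l fun k => M k l).updateCol 0 fun k => M k 0) = M.det := by
    rw [Matrix.updateCol_eq_self, Matrix.updateCol_eq_self]
  have f0l : det ((M.updateCol l fun k => M k 0).updateCol 0 fun k => M k l) = -M.det := by
    have hswap : ((M.updateCol l fun k => M k 0).updateCol 0 fun k => M k l) =
        M.submatrix id (Equiv.swap 0 l) := by
      ext k s
      by_cases hs0 : s = 0
      · simp [Matrix.updateCol_apply, hs0, Equiv.swap_apply_left]
      · by_cases hsl : s = l <;>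
          simp [Matrix.updateCol_apply, hs0, hsl, Ne.symm h0l, Equiv.swap_apply_right,
            Equiv.swap_apply_of_ne_of_ne]
    rw [hswap, Matrix.det_permute', Equiv.Perm.sign_swap h0l]
    simp
  -- expand the determinant of the matrix with adjugate columns
  have expand : det ((M.updateCol 0 x).updateCol l y) =
      (adjugate M 0 0 * adjugate M l l - adjugate M l 0 * adjugate M 0 l) * M.det := by
    rw [hy, hcol]
    have step : ∀ i : Fin (n + 2),
        det ((M.updateCol 0 x).updateCol l fun k => M k i) =
          ∑ i', adjugate M i' 0 * det ((M.updateCol l fun k => M k i).updateCol 0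
            fun k => M k i') := by
      intro i
      rw [uC_comm M h0l, hx, hcol]
    simp_rw [step]
    have inner : ∀ i : Fin (n + 2),
        (∑ i', adjugate M i' 0 * det ((M.updateCol l fun k => M k i).updateCol 0
            fun k => M k i')) =
          adjugate M 0 0 * det ((M.updateCol l fun k => M k i).updateCol 0 fun k => M k 0)
          + adjugate M l 0 *
            det ((M.updateCol l fun k => M k i).updateCol 0 fun k => M k l) := by
      intro i
      rw [← Finset.sum_subset (Finset.subset_univ ({0, l} : Finset (Fin (n + 2))))
        (fun i' _ hi' => ?_), Finset.sum_pair h0l]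
      simp only [Finset.mem_insert, Finset.mem_singleton, not_or] at hi'
      rw [fmid i i' hi'.1 hi'.2, mul_zero]
    simp_rw [inner]
    rw [← Finset.sum_subset (Finset.subset_univ ({0, l} : Finset (Fin (n + 2))))
      (fun i _ hi => ?_), Finset.sum_pair h0l]
    · rw [f0 0 h0l, fl l (Ne.symm h0l), fl0, f0l]
      ring
    · simp only [Finset.mem_insert, Finset.mem_singleton, not_or] at hi
      rw [f0 i hi.2, fl i hi.1, mul_zero, mul_zero, add_zero, mul_zero]
  -- on the other hand, that determinant equals det M ^ 2 times the inner minor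
  have e2 : ((M.updateCol 0 (Pi.single 0 1 : Fin (n + 2) → R)).submatrix
      Fin.castSucc Fin.castSucc) =
      (M.submatrix Fin.castSucc Fin.castSucc).updateCol 0 (Pi.single 0 1) := by
    ext i k
    have hk : (Fin.castSucc k = (0 : Fin (n + 2))) ↔ k = 0 := Fin.castSucc_eq_zero_iff
    have hi : (Fin.castSucc i = (0 : Fin (n + 2))) ↔ i = 0 := Fin.castSucc_eq_zero_iff
    simp only [Matrix.submatrix_apply, Matrix.updateCol_apply, Pi.single_apply, hk, hi]
  have hC : det ((M.updateCol 0 (Pi.single 0 1 : Fin (n + 2) → R)).updateCol l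
      (Pi.single l 1)) =
      (M.submatrix (Fin.succ ∘ Fin.castSucc) (Fin.succ ∘ Fin.castSucc)).det := by
    rw [hl, detL2, e2, detL1, Matrix.submatrix_submatrix]
    rw [show (Fin.castSucc ∘ Fin.succ : Fin n → Fin (n + 2)) = Fin.succ ∘ Fin.castSucc from
      funext fun i => (Fin.succ_castSucc i)]
  have collapse : det ((M.updateCol 0 x).updateCol l y) =
      M.det * (M.det *
        (M.submatrix (Fin.succ ∘ Fin.castSucc) (Fin.succ ∘ Fin.castSucc)).det) := by
    rw [hxs, hys, Matrix.det_updateCol_smul, uC_comm _ h0l,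
      Matrix.det_updateCol_smul, uC_comm _ (Ne.symm h0l), hC]
  rw [← collapse, expand]
  -- rewrite adjugate entries as minors
  have a00 : adjugate M 0 0 = det (M.submatrix Fin.succ Fin.succ) := by
    rw [Matrix.adjugate_fin_succ_eq_det_submatrix]
    simp
  have all : adjugate M l l = det (M.submatrix Fin.castSucc Fin.castSucc) := by
    rw [Matrix.adjugate_fin_succ_eq_det_submatrix]
    rw [show ((-1 : R)) ^ ((l : ℕ) + (l : ℕ)) = 1 from Even.neg_one_pow ⟨(l : ℕ), rfl⟩, one_mul]
    simp [hl]
  have al0 : adjugate M l 0 = (-1) ^ (l : ℕ) * det (M.submatrix Fin.succ Fin.castSucc) := by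
    rw [Matrix.adjugate_fin_succ_eq_det_submatrix]
    simp [hl]
  have a0l : adjugate M 0 l = (-1) ^ (l : ℕ) * det (M.submatrix Fin.castSucc Fin.succ) := by
    rw [Matrix.adjugate_fin_succ_eq_det_submatrix]
    simp [hl]
  rw [a00, all, al0, a0l]
  have hsq : ((-1 : R)) ^ (l : ℕ) * ((-1 : R)) ^ (l : ℕ) = 1 := by
    rw [← pow_add]; exact Even.neg_one_pow ⟨(l : ℕ), rfl⟩
  linear_combination (-(det (M.submatrix Fin.succ Fin.castSucc) *
    det (M.submatrix Fin.castSucc Fin.succ) * M.det)) * hsq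

private lemma desnanot_jacobi {n : ℕ} (M : Matrix (Fin (n + 2)) (Fin (n + 2)) R) :
    M.det * (M.submatrix (Fin.succ ∘ Fin.castSucc) (Fin.succ ∘ Fin.castSucc)).det =
      (M.submatrix Fin.succ Fin.succ).det * (M.submatrix Fin.castSucc Fin.castSucc).det -
        (M.submatrix Fin.castSucc Fin.succ).det * (M.submatrix Fin.succ Fin.castSucc).det := by
  -- prove it for the generic matrix, then specialize
  set G := Matrix.mvPolynomialX (Fin (n + 2)) (Fin (n + 2)) ℤ with hG
  have hGdet : G.det ≠ 0 := Matrix.det_mvPolynomialX_ne_zero _ ℤ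
  have hgen : G.det * (G.submatrix (Fin.succ ∘ Fin.castSucc) (Fin.succ ∘ Fin.castSucc)).det =
      (G.submatrix Fin.succ Fin.succ).det * (G.submatrix Fin.castSucc Fin.castSucc).det -
        (G.submatrix Fin.castSucc Fin.succ).det * (G.submatrix Fin.succ Fin.castSucc).det :=
    mul_left_cancel₀ hGdet (key G)
  have hfM := Matrix.mvPolynomialX_map_eval₂ (Int.castRingHom R) M
  set f : MvPolynomial (Fin (n + 2) × Fin (n + 2)) ℤ →+* R :=
    MvPolynomial.eval₂Hom (Int.castRingHom R) (fun p : Fin (n + 2) × Fin (n + 2) => M p.1 p.2)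
    with hf
  have happ := congrArg f hgen
  have hmap : G.map f = M := hfM
  simp only [_root_.map_mul, _root_.map_sub, RingHom.map_det, RingHom.mapMatrix_apply,
    ← Matrix.submatrix_map, hmap] at happ
  exact happ


/-- `qqd u j n = q^{(j)}_n = H^{(j)}_{n-1} H^{(j+1)}_n / (H^{(j)}_n H^{(j+1)}_{n-1})`
(used for `n ≥ 1`). -/
noncomputable def qqd (u : ℕ → ℝ) (j n : ℕ) : ℝ :=
  hankel u j (n - 1) * hankel u (j + 1) n / (hankel u j n * hankel u (j + 1) (n - 1))

/-- Desnanot–Jacobi for Hankel determinants: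
`H^{(j)}_{n+2} H^{(j+2)}_n = H^{(j)}_{n+1} H^{(j+2)}_{n+1} - (H^{(j+1)}_{n+1})^2`. -/
private lemma dj_hankel (u : ℕ → ℝ) (j n : ℕ) :
    hankel u j (n + 2) * hankel u (j + 2) n =
      hankel u j (n + 1) * hankel u (j + 2) (n + 1) - hankel u (j + 1) (n + 1) ^ 2 := by
  have h := desnanot_jacobi (R := ℝ) (Matrix.of fun i k : Fin (n + 2) => u (j + i + k))
  have e1 : ((Matrix.of fun i k : Fin (n + 2) => u (j + i + k)).submatrix
      (Fin.succ ∘ Fin.castSucc) (Fin.succ ∘ Fin.castSucc)) =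
      (Matrix.of fun i k : Fin n => u (j + 2 + i + k)) := by
    ext i k
    simp only [Matrix.submatrix_apply, Function.comp_apply, Matrix.of_apply, Fin.val_succ,
      Fin.coe_castSucc]
    ring_nf
  have e2 : ((Matrix.of fun i k : Fin (n + 2) => u (j + i + k)).submatrix Fin.succ Fin.succ) =
      (Matrix.of fun i k : Fin (n + 1) => u (j + 2 + i + k)) := by
    ext i k
    simp only [Matrix.submatrix_apply, Matrix.of_apply, Fin.val_succ]
    ring_nf
  have e3 : ((Matrix.of fun i k : Fin (n + 2) => u (j + i + k)).submatrix
      Fin.castSucc Fin.castSucc) = (Matrix.of fun i k : Fin (n + 1) => u (j + i + k)) := by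
    ext i k
    simp
  have e4 : ((Matrix.of fun i k : Fin (n + 2) => u (j + i + k)).submatrix
      Fin.castSucc Fin.succ) = (Matrix.of fun i k : Fin (n + 1) => u (j + 1 + i + k)) := by
    ext i k
    simp only [Matrix.submatrix_apply, Matrix.of_apply, Fin.val_succ, Fin.coe_castSucc]
    ring_nf
  have e5 : ((Matrix.of fun i k : Fin (n + 2) => u (j + i + k)).submatrix
      Fin.succ Fin.castSucc) = (Matrix.of fun i k : Fin (n + 1) => u (j + 1 + i + k)) := by
    ext i k
    simp only [Matrix.submatrix_apply, Matrix.of_apply, Fin.val_succ, Fin.coe_castSucc]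
    ring_nf
  rw [e1, e2, e3, e4, e5] at h
  unfold hankel
  rw [h]
  ring

theorem stmt_4 (u : ℕ → ℝ) (j n : ℕ) (hn : 1 ≤ n)
    (h1 : hankel u j n ≠ 0) (h2 : hankel u (j + 1) n ≠ 0)
    (h3 : hankel u (j + 1) (n - 1) ≠ 0) (h4 : hankel u (j + 2) (n - 1) ≠ 0) :
    eqd u j n = qqd u (j + 1) n - qqd u j n + eqd u (j + 1) (n - 1) := by
  have hz : ∀ j' : ℕ, hankel u j' 0 = 1 := fun j' => Matrix.det_fin_zero
  obtain ⟨m, rfl⟩ : ∃ m, n = m + 1 := ⟨n - 1, (Nat.succ_pred_eq_of_pos hn).symm⟩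
  cases m with
  | zero =>
    have I1 := dj_hankel u j 0
    rw [hz] at I1
    simp only [eqd, qqd]
    norm_num [hz]
    norm_num at I1
    field_simp
    linear_combination I1
  | succ m =>
    have I1 := dj_hankel u j (m + 1)
    have I2 := dj_hankel u j m
    simp only [eqd, qqd] at *
    simp only [show j + 1 + 1 = j + 2 from rfl, show m + 1 + 1 = m + 2 from rfl,
      show m + 1 + 2 = m + 3 from rfl, show m + 2 + 1 = m + 3 from rfl,
      show m + 2 - 1 = m + 1 from rfl, show m + 1 - 1 = m from rfl] at *
    norm_num at *
    field_simp
    linear_combination ((hankel u (j + 1) (m + 1)) ^ 2 * I1 - (hankel u (j + 1) (m + 2)) ^ 2 * I2)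
end

section
/- Let (u_l)_{l≥0} be a real sequence. For all integers j ≥ 0 and n ≥ 1, the following determinant identity holds: K^{(j)}_{n+1} · H^{(j+1)}_{n−1} = H^{(j+1)}_n · K^{(j)}_n − H^{(j)}_n · K^{(j+1)}_n. -/
/-- `Kdet u j n` = the determinant `K^{(j)}_n` of the `n×n` matrix whose first row
is `(1,…,1)` and whose `(i+1)`-th row, for `1 ≤ i ≤ n-1`, is
`(u_{j+i-1}, u_{j+i}, …, u_{j+i+n-2})` (with `K^{(j)}_0 = 1`). -/
noncomputable def Kdet (u : ℕ → ℝ) (j n : ℕ) : ℝ :=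
  Matrix.det (Matrix.of fun i k : Fin n =>
    if (i : ℕ) = 0 then 1 else u (j + ((i : ℕ) - 1) + k))


open Matrix Polynomial

/-- Desnanot–Jacobi identity, multiplied by `det A` (valid over any commutative ring). -/
lemma dj_aux {R : Type*} [CommRing R] (N : ℕ) (A : Matrix (Fin (N+2)) (Fin (N+2)) R) :
    A.det * (det (A.submatrix Fin.succ Fin.succ) * det (A.submatrix Fin.castSucc Fin.castSucc)
      - det (A.submatrix Fin.castSucc Fin.succ) * det (A.submatrix Fin.succ Fin.castSucc))
    = A.det * (A.det * det (A.submatrix (Fin.succ ∘ Fin.castSucc) (Fin.succ ∘ Fin.castSucc))) := by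
  set L : Fin (N+2) := Fin.last (N+1) with hL
  have h0L : (0 : Fin (N+2)) ≠ L := by
    simp [hL, Fin.ext_iff]
  -- the rank-two update matrix X
  set U : Matrix (Fin (N+2)) (Fin 2) R := Matrix.of fun i t =>
    if t = 0 then adjugate A i 0 - (if i = 0 then 1 else 0)
    else adjugate A i L - (if i = L then 1 else 0) with hU
  set V : Matrix (Fin 2) (Fin (N+2)) R := Matrix.of fun t k =>
    if t = 0 then (if k = 0 then (1:R) else 0) else (if k = L then 1 else 0) with hV
  set X : Matrix (Fin (N+2)) (Fin (N+2)) R := 1 + U * V with hX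
  have hXdet : det X = adjugate A 0 0 * adjugate A L L - adjugate A 0 L * adjugate A L 0 := by
    rw [hX, det_one_add_mul_comm, det_fin_two]
    have hmul : ∀ (s : Fin 2) (t : Fin 2), (V * U) s t = U (if s = 0 then 0 else L) t := by
      intro s t
      rw [Matrix.mul_apply]
      by_cases hs : s = 0 <;>
        simp [hV, hs, ite_mul, zero_mul, one_mul, Finset.sum_ite_eq']
    simp only [Matrix.add_apply, hmul, Matrix.one_apply]
    simp [hU, h0L, h0L.symm, Fin.one_pos.ne']
  -- the matrix Z with special first and last columns
  set Z : Matrix (Fin (N+2)) (Fin (N+2)) R := Matrix.of fun i k =>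
    if k = 0 then (if i = 0 then (1:R) else 0)
    else if k = L then (if i = L then 1 else 0) else A i k with hZ
  set d : Fin (N+2) → R := fun k => if k = 0 then A.det else if k = L then A.det else 1 with hd
  have hAX : A * X = Z * Matrix.diagonal d := by
    have hAU : ∀ i t, (A * U) i t =
        (if t = 0 then A.det * (if i = 0 then 1 else 0) - A i 0
         else A.det * (if i = L then 1 else 0) - A i L) := by
      intro i t
      have hadj := Matrix.mul_adjugate A
      by_cases ht : t = 0 <;>
      · simp only [Matrix.mul_apply, hU, Matrix.of_apply, ht, if_true, if_false,
          reduceIte, mul_sub, Finset.sum_sub_distrib, mul_ite, mul_one, mul_zero,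
          Finset.sum_ite_eq', Finset.mem_univ, if_true]
        congr 1
        · have := congrFun (congrFun hadj i) (if ht' : t = 0 then 0 else L)
          simp only [Matrix.mul_apply, Matrix.smul_apply, Matrix.one_apply, smul_eq_mul] at this
          simp only [ht] at this ⊢
          simpa [mul_ite, mul_one, mul_zero] using this
    ext i k
    rw [hX, Matrix.mul_add, Matrix.mul_one, Matrix.add_apply, ← Matrix.mul_assoc]
    rw [show (A * U * V) i k = (A * U) i 0 * V 0 k + (A * U) i 1 * V 1 k by
      rw [Matrix.mul_apply, Fin.sum_univ_two]]
    simp only [hAU, hV, Matrix.of_apply, Matrix.mul_apply, Matrix.diagonal_apply, hZ, hd]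
    by_cases hk0 : k = 0
    · simp [hk0, h0L.symm, Finset.sum_ite_eq', Matrix.one_apply]
      by_cases hi : i = 0 <;> simp [hi, h0L]
    · by_cases hkL : k = L
      · simp [hkL, h0L.symm, hk0, Finset.sum_ite_eq', Matrix.one_apply, h0L]
      · simp [hk0, hkL, Finset.sum_ite_eq', Matrix.one_apply]
  have hdetD : det (Matrix.diagonal d) = A.det * A.det := by
    rw [Matrix.det_diagonal, Fin.prod_univ_succ]
    have h1 : d 0 = A.det := by simp [hd]
    have h2 : ∀ i : Fin (N+1), d i.succ = if i = Fin.last N then A.det else 1 := by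
      intro i
      simp only [hd]
      rw [if_neg (Fin.succ_ne_zero i)]
      congr 1
      rw [hL, ← Fin.succ_last]
      simp [Fin.succ_inj, eq_iff_iff]
    simp only [h1, h2]
    rw [Finset.prod_ite_eq' Finset.univ (Fin.last N) (fun _ => A.det)]
    simp
  have hdetZ : det Z = det (A.submatrix (Fin.succ ∘ Fin.castSucc) (Fin.succ ∘ Fin.castSucc)) := by
    rw [det_succ_column_zero, Finset.sum_eq_single 0]
    · have e0 : (0 : Fin (N+2)).succAbove = Fin.succ := funext fun i => rfl
      rw [e0]
      have hZ00 : Z 0 0 = 1 := by simp [hZ]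
      rw [hZ00, det_succ_column (Z.submatrix Fin.succ Fin.succ) (Fin.last N),
        Finset.sum_eq_single (Fin.last N)]
      · have hZ1 : (Z.submatrix Fin.succ Fin.succ) (Fin.last N) (Fin.last N) = 1 := by
          simp only [Matrix.submatrix_apply, Fin.succ_last, hZ, Matrix.of_apply, hL]
          simp [Fin.ext_iff]
        rw [hZ1, Fin.succAbove_last, Matrix.submatrix_submatrix]
        have heq : Z.submatrix (Fin.succ ∘ Fin.castSucc) (Fin.succ ∘ Fin.castSucc)
            = A.submatrix (Fin.succ ∘ Fin.castSucc) (Fin.succ ∘ Fin.castSucc) := by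
          ext i k
          have hk0 : (k.castSucc.succ : Fin (N+2)) ≠ 0 := Fin.succ_ne_zero _
          have hkL : (k.castSucc.succ : Fin (N+2)) ≠ L := by
            have hk := k.isLt
            simp only [hL, ne_eq, Fin.ext_iff, Fin.val_succ, Fin.coe_castSucc, Fin.val_last]
            omega
          simp [hZ, hk0, hkL]
        rw [heq]
        have : ((-1:R)) ^ ((Fin.last N : ℕ) + (Fin.last N : ℕ)) = 1 :=
          Even.neg_one_pow ⟨(Fin.last N : ℕ), rfl⟩
        rw [this]
        simp
      · intro b _ hb
        have : (Z.submatrix Fin.succ Fin.succ) b (Fin.last N) = 0 := by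
          simp only [Matrix.submatrix_apply, Fin.succ_last, hZ, Matrix.of_apply, hL,
            if_neg (Fin.succ_ne_zero b)]
          simp [Fin.succ_inj, hb]
        rw [this]; ring
      · simp
    · intro b _ hb
      have : Z b 0 = 0 := by simp [hZ, hb]
      rw [this]; ring
    · simp
  have hcorner : adjugate A 0 0 * adjugate A L L - adjugate A 0 L * adjugate A L 0
      = det (A.submatrix Fin.succ Fin.succ) * det (A.submatrix Fin.castSucc Fin.castSucc)
        - det (A.submatrix Fin.castSucc Fin.succ) * det (A.submatrix Fin.succ Fin.castSucc) := by
    have e0 : (0 : Fin (N+2)).succAbove = Fin.succ := funext fun i => rfl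
    rw [adjugate_fin_succ_eq_det_submatrix, adjugate_fin_succ_eq_det_submatrix,
      adjugate_fin_succ_eq_det_submatrix, adjugate_fin_succ_eq_det_submatrix,
      e0, hL, Fin.succAbove_last]
    have hev : ((-1:R)) ^ ((Fin.last (N+1) : ℕ) + (Fin.last (N+1) : ℕ)) = 1 :=
      Even.neg_one_pow ⟨(Fin.last (N+1) : ℕ), rfl⟩
    have hs : ((-1:R) ^ ((Fin.last (N+1):ℕ))) * ((-1:R) ^ ((Fin.last (N+1):ℕ))) = 1 := by
      rw [← pow_add]; exact Even.neg_one_pow ⟨(Fin.last (N+1) : ℕ), rfl⟩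
    simp only [Fin.val_zero, Nat.add_zero, Nat.zero_add, pow_zero, one_mul]
    linear_combination det (A.submatrix Fin.succ Fin.succ) *
        det (A.submatrix Fin.castSucc Fin.castSucc) * hev -
      det (A.submatrix Fin.castSucc Fin.succ) * det (A.submatrix Fin.succ Fin.castSucc) * hs
  calc A.det * (det (A.submatrix Fin.succ Fin.succ) * det (A.submatrix Fin.castSucc Fin.castSucc)
      - det (A.submatrix Fin.castSucc Fin.succ) * det (A.submatrix Fin.succ Fin.castSucc))
      = A.det * det X := by rw [hXdet, hcorner]
    _ = det (A * X) := (det_mul A X).symm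
    _ = det Z * det (Matrix.diagonal d) := by rw [hAX, det_mul]
    _ = _ := by rw [hdetD, hdetZ]; ring

/-- Desnanot–Jacobi identity over ℝ. -/
lemma dj_s6 (N : ℕ) (A : Matrix (Fin (N+2)) (Fin (N+2)) ℝ) :
    det (A.submatrix Fin.succ Fin.succ) * det (A.submatrix Fin.castSucc Fin.castSucc)
      - det (A.submatrix Fin.castSucc Fin.succ) * det (A.submatrix Fin.succ Fin.castSucc)
    = A.det * det (A.submatrix (Fin.succ ∘ Fin.castSucc) (Fin.succ ∘ Fin.castSucc)) := by
  set B : Matrix (Fin (N+2)) (Fin (N+2)) ℝ[X] :=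
    A.map Polynomial.C + Matrix.scalar _ Polynomial.X with hB
  have hBd : B.det ≠ 0 := by
    have h : B = charmatrix (-A) := by
      ext i k
      by_cases h : i = k <;>
        simp [hB, h, charmatrix_apply, Matrix.scalar_apply, Matrix.diagonal_apply, sub_eq_add_neg,
          add_comm]
    rw [h]
    exact ((-A).charpoly_monic).ne_zero
  have key := mul_left_cancel₀ hBd (dj_aux N B)
  have hmap : B.map (Polynomial.evalRingHom (0:ℝ)) = A := by
    ext i k
    by_cases h : i = k <;>
      simp [hB, h, Matrix.scalar_apply, Matrix.diagonal_apply]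
  have hsub1 : ∀ f g : Fin (N+1) → Fin (N+2),
      (Polynomial.evalRingHom (0:ℝ)) (det (B.submatrix f g)) = det (A.submatrix f g) := by
    intro f g
    rw [RingHom.map_det]
    congr 1
    rw [← hmap]
    rfl
  have hsub2 : ∀ f g : Fin N → Fin (N+2),
      (Polynomial.evalRingHom (0:ℝ)) (det (B.submatrix f g)) = det (A.submatrix f g) := by
    intro f g
    rw [RingHom.map_det]
    congr 1
    rw [← hmap]
    rfl
  have := congrArg (Polynomial.evalRingHom (0:ℝ)) key
  rw [map_sub, _root_.map_mul, _root_.map_mul, _root_.map_mul, hsub1, hsub1, hsub1, hsub1,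
    hsub2] at this
  rw [show (Polynomial.evalRingHom (0:ℝ)) B.det = A.det by rw [RingHom.map_det, RingHom.mapMatrix_apply, hmap]] at this
  exact this

theorem stmt_6 (u : ℕ → ℝ) (j n : ℕ) (hn : 1 ≤ n) :
    Kdet u j (n + 1) * hankel u (j + 1) (n - 1) =
      hankel u (j + 1) n * Kdet u j n - hankel u j n * Kdet u (j + 1) n := by
  obtain ⟨N, rfl⟩ : ∃ N, n = N + 1 := ⟨n - 1, (Nat.succ_pred_eq_of_pos hn).symm⟩
  set M : Matrix (Fin (N+2)) (Fin (N+2)) ℝ := Matrix.of fun i k =>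
    if (i:ℕ) = 0 then (1:ℝ) else u (j + ((i:ℕ)-1) + k) with hM
  have h := dj_s6 N M
  have h1 : Matrix.det (M.submatrix Fin.succ Fin.succ) = hankel u (j+1) (N+1) := by
    rw [hankel]; congr 1; ext i k
    simp only [Matrix.submatrix_apply, hM, Matrix.of_apply, Fin.val_succ]
    rw [if_neg (by omega)]
    exact congrArg u (by omega)
  have h2 : Matrix.det (M.submatrix Fin.castSucc Fin.castSucc) = Kdet u j (N+1) := by
    rw [Kdet]; congr 1
  have h3 : Matrix.det (M.submatrix Fin.castSucc Fin.succ) = Kdet u (j+1) (N+1) := by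
    rw [Kdet]; congr 1; ext i k
    simp only [Matrix.submatrix_apply, hM, Matrix.of_apply, Fin.coe_castSucc, Fin.val_succ]
    by_cases hi : (i:ℕ) = 0
    · simp [hi]
    · rw [if_neg hi, if_neg hi]; exact congrArg u (by omega)
  have h4 : Matrix.det (M.submatrix Fin.succ Fin.castSucc) = hankel u j (N+1) := by
    rw [hankel]; congr 1
  have h6 : Matrix.det (M.submatrix (Fin.succ ∘ Fin.castSucc) (Fin.succ ∘ Fin.castSucc))
      = hankel u (j+1) N := by
    rw [hankel]; congr 1; ext i k
    simp only [Matrix.submatrix_apply, hM, Matrix.of_apply, Function.comp_apply, Fin.val_succ,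
      Fin.coe_castSucc]
    rw [if_neg (by omega)]
    exact congrArg u (by omega)
  have h5 : Matrix.det M = Kdet u j (N+1+1) := by rw [Kdet]
  rw [h1, h2, h3, h4, h5, h6] at h
  simp only [Nat.add_sub_cancel]
  linear_combination -h
end

section
/- Let (u_l)_{l≥0} be a real sequence. For all integers j ≥ 0 and n ≥ 1, the following determinant identity holds: H^{(j)}_{n+1} · K^{(j+1)}_n = H^{(j)}_n · K^{(j+1)}_{n+1} − H^{(j+1)}_n · K^{(j)}_{n+1}. -/
open Matrix Finset

noncomputable section

namespace Stmt7Aux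

variable (u : ℕ → ℝ) (j m : ℕ)

/-- The big `(m+3) × (m+2)` matrix: row `0` is all ones, row `x ≥ 1` is the
Hankel row `(u (j + (x-1) + k))_k`. -/
def Rmat : Matrix (Fin (m+3)) (Fin (m+2)) ℝ :=
  Matrix.of fun x k => if (x : ℕ) = 0 then 1 else u (j + ((x : ℕ) - 1) + (k : ℕ))

/-- `Fdet w` : determinant of the `(m+1) × (m+1)` matrix whose first row is the
first `m+1` entries of `w` and whose row `i ≥ 1` is `(u (j + i + k))_k`. -/
def Fdet (w : Fin (m+2) → ℝ) : ℝ :=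
  Matrix.det (Matrix.of fun i k : Fin (m+1) =>
    if (i : ℕ) = 0 then w (Fin.castSucc k) else u (j + (i : ℕ) + (k : ℕ)))

def Cmin (k : Fin (m+1)) : ℝ :=
  Matrix.det (Matrix.of fun i k' : Fin m =>
    u (j + ((Fin.succ i : Fin (m+1)) : ℕ) + ((k.succAbove k' : Fin (m+1)) : ℕ)))

def cvec : Fin (m+2) → ℝ :=
  Fin.snoc (fun k : Fin (m+1) => (-1 : ℝ) ^ (k : ℕ) * Cmin u j m k) 0

lemma Fdet_eq_sum (w : Fin (m+2) → ℝ) :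
    Fdet u j m w = ∑ k : Fin (m+2), w k * cvec u j m k := by
  rw [Fdet, Matrix.det_succ_row_zero, Fin.sum_univ_castSucc (n := m+1)]
  simp only [cvec, Fin.snoc_castSucc, Fin.snoc_last, mul_zero, add_zero]
  refine Finset.sum_congr rfl fun k _ => ?_
  have h : ((Matrix.of fun i k : Fin (m+1) =>
      if (i : ℕ) = 0 then w (Fin.castSucc k) else u (j + (i : ℕ) + (k : ℕ))).submatrix
        Fin.succ k.succAbove) = (Matrix.of fun i k' : Fin m =>
    u (j + ((Fin.succ i : Fin (m+1)) : ℕ) + ((k.succAbove k' : Fin (m+1)) : ℕ))) := by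
    ext i k'
    simp [Fin.val_succ]
  rw [h, Cmin]
  simp only [Matrix.of_apply, Fin.val_zero, if_true, reduceIte]
  ring

/-- Border `Rmat` with the extra column `x ↦ Fdet (row x)`. -/
def Gmat : Matrix (Fin (m+3)) (Fin (m+3)) ℝ :=
  Matrix.of fun x => Fin.snoc (Rmat u j m x) (Fdet u j m (Rmat u j m x))

lemma det_Gmat : (Gmat u j m).det = 0 := by
  rw [← Matrix.exists_mulVec_eq_zero_iff]
  refine ⟨Fin.snoc (cvec u j m) (-1), ?_, ?_⟩
  · intro h
    have := congrFun h (Fin.last (m+2))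
    simp [Fin.snoc_last] at this
  · funext x
    simp only [Matrix.mulVec, dotProduct, Pi.zero_apply]
    rw [Fin.sum_univ_castSucc (n := m+2)]
    simp only [Gmat, Matrix.of_apply, Fin.snoc_castSucc, Fin.snoc_last]
    rw [← Fdet_eq_sum]
    ring

def Dmin (x : Fin (m+3)) : ℝ :=
  Matrix.det (Matrix.of fun y k : Fin (m+2) => Rmat u j m (x.succAbove y) k)

lemma expansion :
    0 = ∑ x : Fin (m+3), (-1 : ℝ) ^ ((x : ℕ) + (m+2)) *
      Fdet u j m (Rmat u j m x) * Dmin u j m x := by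
  have h := Matrix.det_succ_column (Gmat u j m) (Fin.last (m+2))
  rw [det_Gmat] at h
  rw [h]
  refine Finset.sum_congr rfl fun x _ => ?_
  have h1 : Gmat u j m x (Fin.last (m+2)) = Fdet u j m (Rmat u j m x) := by
    simp [Gmat, Fin.snoc_last]
  have h2 : (Gmat u j m).submatrix x.succAbove (Fin.last (m+2)).succAbove =
      Matrix.of fun y k : Fin (m+2) => Rmat u j m (x.succAbove y) k := by
    ext y k
    simp [Gmat, Fin.succAbove_last, Fin.snoc_castSucc]
  rw [h1, h2, Dmin]
  simp

lemma FR_zero : Fdet u j m (Rmat u j m 0) = Kdet u (j+1) (m+1) := by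
  unfold Fdet Kdet Rmat
  congr 1
  ext i k
  by_cases h : (i : ℕ) = 0
  · simp [h, show i = 0 from Fin.ext h]
  · simp only [Matrix.of_apply, h, if_false]
    congr 1
    omega

lemma FR_one : Fdet u j m (Rmat u j m 1) = hankel u j (m+1) := by
  unfold Fdet hankel Rmat
  congr 1
  ext i k
  by_cases h : (i : ℕ) = 0
  · simp only [Matrix.of_apply, h, if_true, Fin.val_one, Fin.coe_castSucc, reduceIte]
    norm_num
  · simp only [Matrix.of_apply, h, if_false]

lemma FR_last :
    Fdet u j m (Rmat u j m (Fin.last (m+2))) = (-1 : ℝ) ^ m * hankel u (j+1) (m+1) := by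
  have key : ((Matrix.of fun i k : Fin (m+1) =>
      if (i : ℕ) = 0 then Rmat u j m (Fin.last (m+2)) (Fin.castSucc k)
      else u (j + (i : ℕ) + (k : ℕ))).submatrix (finRotate (m+1)) id) =
      Matrix.of fun i k : Fin (m+1) => u ((j+1) + (i : ℕ) + (k : ℕ)) := by
    ext i k
    induction i using Fin.lastCases with
    | last =>
      simp only [Matrix.submatrix_apply, id_eq, finRotate_last, Matrix.of_apply,
        Fin.val_zero, if_true, reduceIte, Rmat, Fin.val_last, Fin.coe_castSucc]
      norm_num
      congr 1
      omega
    | cast i' =>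
      have h1 : finRotate (m+1) (Fin.castSucc i') = Fin.succ i' := by
        rw [finRotate_succ_apply, Fin.coeSucc_eq_succ]
      simp only [Matrix.submatrix_apply, id_eq, h1, Matrix.of_apply, Fin.val_succ,
        Nat.succ_ne_zero, if_false]
      rw [Fin.coe_castSucc]
      congr 1
      omega
  have hperm := Matrix.det_permute (finRotate (m+1))
    (Matrix.of fun i k : Fin (m+1) =>
      if (i : ℕ) = 0 then Rmat u j m (Fin.last (m+2)) (Fin.castSucc k)
      else u (j + (i : ℕ) + (k : ℕ)))
  rw [key] at hperm
  have hsign : (Equiv.Perm.sign (finRotate (m+1)) : ℝ) = (-1 : ℝ) ^ m := by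
    rw [sign_finRotate]
    simp
  rw [hsign] at hperm
  have : hankel u (j+1) (m+1) = (-1 : ℝ) ^ m * Fdet u j m (Rmat u j m (Fin.last (m+2))) := by
    rw [hankel, Fdet, ← hperm]
  rw [this]
  rw [← mul_assoc, ← pow_add]
  simp [pow_mul_comm, ← two_mul, pow_mul]

lemma Fdet_middle (s : Fin m) :
    Fdet u j m (Rmat u j m (Fin.succ (Fin.succ (Fin.castSucc s)))) = 0 := by
  apply Matrix.det_zero_of_row_eq (i := (0 : Fin (m+1))) (j := ⟨(s : ℕ) + 1, by omega⟩)
  · simp [Fin.ext_iff]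
  · funext k
    have hval : ((Fin.succ (Fin.succ (Fin.castSucc s)) : Fin (m+3)) : ℕ) = (s : ℕ) + 2 := by
      simp [Fin.val_succ]
    simp only [Matrix.of_apply, Fin.val_zero, if_true, reduceIte, Rmat, hval,
      Fin.coe_castSucc, Nat.succ_ne_zero, if_false]
    congr 1

lemma Dmin_zero : Dmin u j m 0 = hankel u j (m+2) := by
  unfold Dmin hankel Rmat
  congr 1

lemma Dmin_one : Dmin u j m 1 = Kdet u (j+1) (m+2) := by
  unfold Dmin Kdet Rmat
  congr 1
  ext y k
  by_cases h : (y : ℕ) = 0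
  · have hy : y = 0 := Fin.ext h
    subst hy
    have h0 : (1 : Fin (m+3)).succAbove 0 = 0 := by
      simp [Fin.succAbove, Fin.lt_def]
    simp [h0]
  · have h1 : ¬ (Fin.castSucc y < (1 : Fin (m+3))) := by
      rw [Fin.lt_def]
      simp only [Fin.coe_castSucc, Fin.val_one]
      omega
    simp only [Matrix.of_apply, Fin.succAbove, h1, if_false, Fin.val_succ,
      Nat.succ_ne_zero, h]
    congr 1
    omega

lemma Dmin_last : Dmin u j m (Fin.last (m+2)) = Kdet u j (m+2) := by
  unfold Dmin Kdet Rmat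
  congr 1
  ext y k
  simp only [Matrix.of_apply, Fin.succAbove_last, Fin.coe_castSucc]

end Stmt7Aux

theorem stmt_7 (u : ℕ → ℝ) (j n : ℕ) (hn : 1 ≤ n) :
    hankel u j (n + 1) * Kdet u (j + 1) n =
      hankel u j n * Kdet u (j + 1) (n + 1) - hankel u (j + 1) n * Kdet u j (n + 1) := by
  obtain ⟨m, rfl⟩ : ∃ m, n = m + 1 := ⟨n - 1, by omega⟩
  have h := Stmt7Aux.expansion u j m
  rw [Fin.sum_univ_succ, Fin.sum_univ_succ, Fin.sum_univ_castSucc (n := m)] at h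
  have hmid : ∑ s : Fin m, (-1 : ℝ) ^ ((((Fin.castSucc s).succ.succ : Fin (m+3)) : ℕ) + (m+2)) *
      Stmt7Aux.Fdet u j m (Stmt7Aux.Rmat u j m (Fin.castSucc s).succ.succ) *
      Stmt7Aux.Dmin u j m (Fin.castSucc s).succ.succ = 0 := by
    refine Finset.sum_eq_zero fun s _ => ?_
    rw [Stmt7Aux.Fdet_middle]
    ring
  rw [hmid] at h
  have e01 : Fin.succ (0 : Fin (m+2)) = (1 : Fin (m+3)) := rfl
  have elast : Fin.succ (Fin.succ (Fin.last m)) = Fin.last (m+2) := rfl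
  rw [e01, elast] at h
  rw [Stmt7Aux.FR_zero, Stmt7Aux.FR_one, Stmt7Aux.FR_last, Stmt7Aux.Dmin_zero,
    Stmt7Aux.Dmin_one, Stmt7Aux.Dmin_last] at h
  simp only [Fin.val_zero, Fin.val_one, Fin.val_last, zero_add] at h
  have ha : ((-1 : ℝ) ^ m) * ((-1 : ℝ) ^ m) = 1 := by
    rw [← pow_add]
    exact Even.neg_one_pow ⟨m, rfl⟩
  have hne : ((-1 : ℝ) ^ m) ≠ 0 := pow_ne_zero _ (by norm_num)
  have hz : ((-1 : ℝ) ^ m) * (hankel u j (m+2) * Kdet u (j+1) (m+1)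
      - hankel u j (m+1) * Kdet u (j+1) (m+2)
      + hankel u (j+1) (m+1) * Kdet u j (m+2)) = 0 := by
    linear_combination -h - ((-1:ℝ)^m * hankel u (j+1) (m+1) * Kdet u j (m+2)) * ha
  have hz2 := (mul_eq_zero.mp hz).resolve_left hne
  have : m + 1 + 1 = m + 2 := rfl
  rw [this]
  linarith
end
end

section
/- Let (u_l)_{l≥0} be a real sequence, and fix j ≥ 0 and n ≥ 1. If H^{(j)}_n, H^{(j+1)}_{n−1}, K^{(j)}_n, and K^{(j+1)}_n are all nonzero (so that r^{(j)}_n, r^{(j+1)}_n, and s^{(j+1)}_{n−1} are defined and r^{(j)}_n ≠ 0), then the rs-algorithm recursion holds: s^{(j)}_n = s^{(j+1)}_{n−1} · (r^{(j+1)}_n / r^{(j)}_n − 1). -/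
/-- `rrs u j n = r^{(j)}_n = H^{(j)}_n / K^{(j)}_n`. -/
noncomputable def rrs (u : ℕ → ℝ) (j n : ℕ) : ℝ := hankel u j n / Kdet u j n

/-- `srs u j n = s^{(j)}_n = K^{(j)}_{n+1} / H^{(j)}_n`. -/
noncomputable def srs (u : ℕ → ℝ) (j n : ℕ) : ℝ := Kdet u j (n + 1) / hankel u j n


section Aux
open Matrix Polynomial
variable {m : ℕ}

/-- Reindexing `Fin (m+2)` as "two corners plus middle". -/
def cornersEquiv (m : ℕ) : Fin 2 ⊕ Fin m ≃ Fin (m + 2) where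
  toFun := Sum.elim ![0, Fin.last (m + 1)] (fun i => i.succ.castSucc)
  invFun i :=
    if h0 : i = 0 then Sum.inl 0
    else if hl : i = Fin.last (m + 1) then Sum.inl 1
    else Sum.inr ⟨(i : ℕ) - 1, by
      have h1 : (i : ℕ) ≠ 0 := fun h => h0 (Fin.ext h)
      have h2 : (i : ℕ) ≠ m + 1 := fun h => hl (Fin.ext h)
      have := i.isLt; omega⟩
  left_inv x := by
    rcases x with j | i
    · fin_cases j
      · simp
      · have h : (Fin.last (m + 1) : Fin (m+2)) ≠ 0 := by
          simp [Fin.ext_iff]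
        simp [h]
    · have h0 : (i.succ.castSucc : Fin (m+2)) ≠ 0 := by
        simp [Fin.ext_iff]
      have hl : (i.succ.castSucc : Fin (m+2)) ≠ Fin.last (m+1) := by
        simp [Fin.ext_iff]; omega
      simp [h0, hl]
  right_inv i := by
    by_cases h0 : i = 0
    · simp [h0]
    · by_cases hl : i = Fin.last (m + 1)
      · simp [h0, hl]
      · have h1 : (i : ℕ) ≠ 0 := fun h => h0 (Fin.ext h)
        have h2 : (i : ℕ) ≠ m + 1 := fun h => hl (Fin.ext h)
        simp only [h0, hl, if_false]
        simp [Fin.ext_iff]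
        omega

@[simp] lemma cornersEquiv_inl0 (m : ℕ) : cornersEquiv m (.inl 0) = 0 := rfl
@[simp] lemma cornersEquiv_inl1 (m : ℕ) : cornersEquiv m (.inl 1) = Fin.last (m + 1) := rfl
@[simp] lemma cornersEquiv_inr {m : ℕ} (i : Fin m) :
    cornersEquiv m (.inr i) = i.succ.castSucc := rfl

lemma key1 (A : Matrix (Fin (m + 2)) (Fin (m + 2)) ℝ) :
    A.det * ((A.submatrix Fin.succ Fin.succ).det * (A.submatrix Fin.castSucc Fin.castSucc).det
      - (A.submatrix Fin.castSucc Fin.succ).det * (A.submatrix Fin.succ Fin.castSucc).det)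
    = A.det * (A.det *
      (A.submatrix (fun i : Fin m => i.succ.castSucc) (fun i : Fin m => i.succ.castSucc)).det) := by
  classical
  set e := cornersEquiv m with he
  set P : Matrix (Fin 2) (Fin 2) ℝ :=
    Matrix.of (fun a b => adjugate A (e (.inl a)) (e (.inl b))) with hP
  set R : Matrix (Fin m) (Fin 2) ℝ :=
    Matrix.of (fun a b => adjugate A (e (.inr a)) (e (.inl b))) with hR
  set B : Matrix (Fin (m + 2)) (Fin (m + 2)) ℝ :=
    (Matrix.fromBlocks P 0 R 1).submatrix e.symm e.symm with hB
  have hBcorner : ∀ (l : Fin (m + 2)) (b : Fin 2), B l (e (.inl b)) = adjugate A l (e (.inl b)) := by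
    intro l b
    rw [hB, Matrix.submatrix_apply, Equiv.symm_apply_apply]
    rcases h : e.symm l with a | a
    · have hl : l = e (.inl a) := by rw [← h, Equiv.apply_symm_apply]
      simp [hP, hl]
    · have hl : l = e (.inr a) := by rw [← h, Equiv.apply_symm_apply]
      simp [hR, hl]
  have hBmid : ∀ (l : Fin (m + 2)) (b : Fin m),
      B l (e (.inr b)) = if l = e (.inr b) then 1 else 0 := by
    intro l b
    rw [hB, Matrix.submatrix_apply, Equiv.symm_apply_apply]
    rcases h : e.symm l with a | a
    · have hl : l = e (.inl a) := by rw [← h, Equiv.apply_symm_apply]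
      have : l ≠ e (.inr b) := by
        rw [hl]; exact fun hc => by simpa using e.injective hc
      simp [this]
    · have hl : l = e (.inr a) := by rw [← h, Equiv.apply_symm_apply]
      have : l = e (.inr b) ↔ a = b := by
        rw [hl]; constructor
        · intro hc; simpa using e.injective hc
        · rintro rfl; rfl
      simp [Matrix.one_apply, this]
  have hAB : A * B = (Matrix.fromBlocks (A.det • (1 : Matrix (Fin 2) (Fin 2) ℝ))
      (Matrix.of fun a b => A (e (.inl a)) (e (.inr b))) 0
      (Matrix.of fun a b => A (e (.inr a)) (e (.inr b)))).submatrix e.symm e.symm := by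
    ext i k
    rw [Matrix.submatrix_apply]
    rcases h : e.symm k with b | b
    · have hk : k = e (.inl b) := by rw [← h, Equiv.apply_symm_apply]
      have hL : (A * B) i k = A.det * (if i = k then 1 else 0) := by
        rw [Matrix.mul_apply]
        calc ∑ l, A i l * B l k = ∑ l, A i l * adjugate A l k := by
              refine Finset.sum_congr rfl fun l _ => ?_
              rw [hk, hBcorner]
            _ = (A * adjugate A) i k := (Matrix.mul_apply).symm
            _ = A.det * (if i = k then 1 else 0) := by
              rw [Matrix.mul_adjugate]
              simp [Matrix.smul_apply, Matrix.one_apply]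
      rw [hL]
      rcases hi : e.symm i with a | a
      · have hia : i = e (.inl a) := by rw [← hi, Equiv.apply_symm_apply]
        have : i = k ↔ a = b := by
          rw [hia, hk]; constructor
          · intro hc; simpa using e.injective hc
          · rintro rfl; rfl
        simp [Matrix.fromBlocks, Matrix.smul_apply, Matrix.one_apply, this]
      · have hia : i = e (.inr a) := by rw [← hi, Equiv.apply_symm_apply]
        have : i ≠ k := by
          rw [hia, hk]; exact fun hc => by simpa using e.injective hc
        simp [Matrix.fromBlocks, this]
    · have hk : k = e (.inr b) := by rw [← h, Equiv.apply_symm_apply]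
      have hL : (A * B) i k = A i k := by
        rw [Matrix.mul_apply]
        calc ∑ l, A i l * B l k = ∑ l, A i l * (if l = k then 1 else 0) := by
              refine Finset.sum_congr rfl fun l _ => ?_
              rw [hk, hBmid]
            _ = A i k := by simp
      rw [hL]
      rcases hi : e.symm i with a | a
      · have hia : i = e (.inl a) := by rw [← hi, Equiv.apply_symm_apply]
        simp [Matrix.fromBlocks, hia, hk]
      · have hia : i = e (.inr a) := by rw [← hi, Equiv.apply_symm_apply]
        simp [Matrix.fromBlocks, hia, hk]
  have hdetB : B.det = P.det := by
    rw [hB, Matrix.det_submatrix_equiv_self e.symm, Matrix.det_fromBlocks_zero₁₂,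
      Matrix.det_one, mul_one]
  have hcore : (Matrix.of fun a b => A (e (.inr a)) (e (.inr b)))
      = A.submatrix (fun i : Fin m => i.succ.castSucc) (fun i : Fin m => i.succ.castSucc) := by
    ext a b; simp [he]
  have hdetAB : (A * B).det = A.det ^ 2 *
      (A.submatrix (fun i : Fin m => i.succ.castSucc) (fun i : Fin m => i.succ.castSucc)).det := by
    rw [hAB, Matrix.det_submatrix_equiv_self e.symm, Matrix.det_fromBlocks_zero₂₁,
      Matrix.det_smul, Matrix.det_one, Fintype.card_fin, mul_one, hcore, sq]
  have hdetP : P.det = (A.submatrix Fin.succ Fin.succ).det * (A.submatrix Fin.castSucc Fin.castSucc).det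
      - (A.submatrix Fin.castSucc Fin.succ).det * (A.submatrix Fin.succ Fin.castSucc).det := by
    rw [Matrix.det_fin_two]
    have e00 : P 0 0 = adjugate A 0 0 := by simp [hP, he]
    have e01 : P 0 1 = adjugate A 0 (Fin.last (m + 1)) := by simp [hP, he]
    have e10 : P 1 0 = adjugate A (Fin.last (m + 1)) 0 := by simp [hP, he]
    have e11 : P 1 1 = adjugate A (Fin.last (m + 1)) (Fin.last (m + 1)) := by simp [hP, he]
    rw [e00, e01, e10, e11]
    rw [Matrix.adjugate_fin_succ_eq_det_submatrix, Matrix.adjugate_fin_succ_eq_det_submatrix,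
      Matrix.adjugate_fin_succ_eq_det_submatrix, Matrix.adjugate_fin_succ_eq_det_submatrix]
    simp only [Fin.succAbove_zero, Fin.succAbove_last, Fin.val_zero, Fin.val_last,
      Nat.add_zero, Nat.zero_add, pow_zero, one_mul]
    have hsq : ((-1 : ℝ) ^ (m + 1)) * ((-1 : ℝ) ^ (m + 1)) = 1 := by
      rw [← pow_add]
      exact Even.neg_one_pow ⟨m + 1, by ring⟩
    linear_combination ((A.submatrix Fin.succ Fin.succ).det *
      (A.submatrix Fin.castSucc Fin.castSucc).det -
      (A.submatrix Fin.castSucc Fin.succ).det *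
      (A.submatrix Fin.succ Fin.castSucc).det) * hsq
  have hmul : A.det * B.det = (A * B).det := (Matrix.det_mul A B).symm
  rw [hdetB, hdetP] at hmul
  rw [hmul, hdetAB]; ring

lemma eval_char (A : Matrix (Fin (m + 2)) (Fin (m + 2)) ℝ) (t : ℝ) :
    Polynomial.eval t (Matrix.charpoly (-A)) = (A + t • 1).det := by
  have h1 : Polynomial.eval t (Matrix.charpoly (-A))
      = ((charmatrix (-A)).map (Polynomial.evalRingHom t)).det := by
    have h2 := RingHom.map_det (Polynomial.evalRingHom t) (charmatrix (-A))
    rw [Matrix.charpoly]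
    simpa [RingHom.mapMatrix_apply] using h2
  rw [h1]
  congr 1
  ext i k
  by_cases h : i = k
  · subst h
    simp [charmatrix_apply_eq, Matrix.add_apply, Matrix.smul_apply, Matrix.one_apply_eq]
    ring
  · simp [charmatrix_apply_ne _ _ _ h, Matrix.add_apply, Matrix.smul_apply,
      Matrix.one_apply_ne h]


lemma desnanot (A : Matrix (Fin (m + 2)) (Fin (m + 2)) ℝ) :
    A.det * (A.submatrix (fun i : Fin m => i.succ.castSucc)
        (fun i : Fin m => i.succ.castSucc)).det
    = (A.submatrix Fin.succ Fin.succ).det * (A.submatrix Fin.castSucc Fin.castSucc).det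
      - (A.submatrix Fin.castSucc Fin.succ).det * (A.submatrix Fin.succ Fin.castSucc).det := by
  classical
  set f : ℝ → Matrix (Fin (m + 2)) (Fin (m + 2)) ℝ := fun t => A + t • 1 with hf
  have hfc : Continuous f := continuous_const.add (continuous_id.smul continuous_const)
  set S : Set ℝ := {t : ℝ | (f t).det ≠ 0} with hS
  have hdense : Dense S := by
    have hp : Matrix.charpoly (-A) ≠ 0 := (Matrix.charpoly_monic (-A)).ne_zero
    have hfin : Sᶜ.Finite := by
      refine Set.Finite.subset (Polynomial.finite_setOf_isRoot hp) ?_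
      intro t ht
      simp only [hS, Set.mem_compl_iff, Set.mem_setOf_eq, not_not] at ht
      simpa [Polynomial.IsRoot, eval_char] using ht
    have := (hfin.countable).dense_compl ℝ
    simpa using this
  set F : ℝ → ℝ := fun t => (f t).det * ((f t).submatrix (fun i : Fin m => i.succ.castSucc)
      (fun i : Fin m => i.succ.castSucc)).det with hF
  set G : ℝ → ℝ := fun t => ((f t).submatrix Fin.succ Fin.succ).det *
      ((f t).submatrix Fin.castSucc Fin.castSucc).det
      - ((f t).submatrix Fin.castSucc Fin.succ).det *
      ((f t).submatrix Fin.succ Fin.castSucc).det with hG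
  have hFc : Continuous F := by
    apply Continuous.mul hfc.matrix_det
    exact (hfc.matrix_submatrix _ _).matrix_det
  have hGc : Continuous G := by
    apply Continuous.sub
    · exact ((hfc.matrix_submatrix _ _).matrix_det).mul ((hfc.matrix_submatrix _ _).matrix_det)
    · exact ((hfc.matrix_submatrix _ _).matrix_det).mul ((hfc.matrix_submatrix _ _).matrix_det)
  have heq : Set.EqOn F G S := by
    intro t ht
    have h := key1 (f t)
    have ht' : (f t).det ≠ 0 := ht
    have := mul_left_cancel₀ ht' h.symm
    simp only [hF, hG]
    rw [this]
  have hfg : F = G := hFc.ext_on hdense hGc heq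
  have h0 := congrFun hfg 0
  simpa [hF, hG, hf] using h0

lemma rs_identity (u : ℕ → ℝ) (j m : ℕ) :
    Kdet u j (m + 2) * hankel u (j + 1) m
    = hankel u (j + 1) (m + 1) * Kdet u j (m + 1)
      - Kdet u (j + 1) (m + 1) * hankel u j (m + 1) := by
  set A : Matrix (Fin (m + 2)) (Fin (m + 2)) ℝ :=
    Matrix.of (fun i k : Fin (m + 2) =>
      if (i : ℕ) = 0 then (1 : ℝ) else u (j + ((i : ℕ) - 1) + k)) with hA
  have hdA : A.det = Kdet u j (m + 2) := rfl
  have hSS : (A.submatrix Fin.succ Fin.succ).det = hankel u (j + 1) (m + 1) := by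
    unfold hankel; congr 1
    ext i k
    simp only [hA, Matrix.submatrix_apply, Matrix.of_apply, Fin.val_succ,
      Nat.succ_ne_zero, if_false, Nat.add_sub_cancel]
    congr 1; omega
  have hCC : (A.submatrix Fin.castSucc Fin.castSucc).det = Kdet u j (m + 1) := by
    unfold Kdet; congr 1
  have hCS : (A.submatrix Fin.castSucc Fin.succ).det = Kdet u (j + 1) (m + 1) := by
    unfold Kdet; congr 1
    ext i k
    simp only [hA, Matrix.submatrix_apply, Matrix.of_apply, Fin.coe_castSucc, Fin.val_succ]
    by_cases h : (i : ℕ) = 0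
    · simp [h]
    · simp only [h, if_false]
      congr 1; omega
  have hSC : (A.submatrix Fin.succ Fin.castSucc).det = hankel u j (m + 1) := by
    unfold hankel; congr 1
  have hCore : (A.submatrix (fun i : Fin m => i.succ.castSucc)
      (fun i : Fin m => i.succ.castSucc)).det = hankel u (j + 1) m := by
    unfold hankel; congr 1
    ext i k
    simp only [hA, Matrix.submatrix_apply, Matrix.of_apply, Fin.coe_castSucc, Fin.val_succ,
      Nat.succ_ne_zero, if_false, Nat.add_sub_cancel]
    congr 1; omega
  have h := desnanot A
  rw [hdA, hSS, hCC, hCS, hSC, hCore] at h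
  exact h


end Aux

theorem stmt_8 (u : ℕ → ℝ) (j n : ℕ) (hn : 1 ≤ n)
    (h1 : hankel u j n ≠ 0) (h2 : hankel u (j + 1) (n - 1) ≠ 0)
    (h3 : Kdet u j n ≠ 0) (h4 : Kdet u (j + 1) n ≠ 0) :
    srs u j n = srs u (j + 1) (n - 1) * (rrs u (j + 1) n / rrs u j n - 1) := by
  obtain ⟨m, rfl⟩ : ∃ m, n = m + 1 := ⟨n - 1, by omega⟩
  simp only [Nat.add_sub_cancel] at h2 ⊢
  have key := rs_identity u j m
  unfold srs rrs
  field_simp [h1, h2, h3, h4]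
  linear_combination key
end

section
/- Let (u_l)_{l≥0} be a real sequence, and fix j ≥ 0 and n ≥ 1. If H^{(j)}_n, H^{(j+1)}_n, K^{(j)}_{n+1}, and K^{(j+1)}_n are all nonzero (so that r^{(j+1)}_n, s^{(j)}_n, and s^{(j+1)}_n are defined and s^{(j)}_n ≠ 0), then the rs-algorithm recursion holds: r^{(j)}_{n+1} = r^{(j+1)}_n · (s^{(j+1)}_n / s^{(j)}_n − 1). -/
lemma aux_det_unit_row {m : ℕ} (M : Matrix (Fin (m+1)) (Fin (m+1)) ℝ) (r p : Fin (m+1))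
    (h : ∀ k, M r k = if k = p then 1 else 0) :
    M.det = (-1)^((r:ℕ)+(p:ℕ)) * (M.submatrix r.succAbove p.succAbove).det := by
  rw [Matrix.det_succ_row M r, Finset.sum_eq_single p]
  · rw [h p, if_pos rfl, mul_one]
  · intro k _ hk
    rw [h k, if_neg hk, mul_zero, zero_mul]
  · intro h'; exact absurd (Finset.mem_univ p) h'

lemma aux_det_row_sum {m : ℕ} (M : Matrix (Fin m) (Fin m) ℝ) (r : Fin m)
    (c : Fin m → ℝ) (w : Fin m → Fin m → ℝ) (s : Finset (Fin m)) :
    (M.updateRow r (∑ k ∈ s, c k • w k)).det = ∑ k ∈ s, c k * (M.updateRow r (w k)).det := by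
  classical
  induction s using Finset.induction_on with
  | empty =>
      simp only [Finset.sum_empty]
      exact Matrix.det_eq_zero_of_row_eq_zero r (fun k => by simp)
  | insert a t hk ih =>
      rw [Finset.sum_insert hk, Finset.sum_insert hk, Matrix.det_updateRow_add,
        Matrix.det_updateRow_smul, ih]



open Matrix in
theorem stmt_9 (u : ℕ → ℝ) (j n : ℕ) (hn : 1 ≤ n)
    (h1 : hankel u j n ≠ 0) (h2 : hankel u (j + 1) n ≠ 0)
    (h3 : Kdet u j (n + 1) ≠ 0) (h4 : Kdet u (j + 1) n ≠ 0) :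
    rrs u j (n + 1) = rrs u (j + 1) n * (srs u (j + 1) n / srs u j n - 1) := by
  classical
  -- the ambient basis matrix A with rows e, v₁, …, v_{n-1}, ε
  set A : Matrix (Fin (n+1)) (Fin (n+1)) ℝ :=
    Matrix.of (fun i k : Fin (n+1) =>
      if (i : ℕ) = 0 then 1
      else if (i : ℕ) = n then (if (k : ℕ) = n then 1 else 0)
      else u (j + (i : ℕ) + (k : ℕ))) with hA
  set v0 : Fin (n+1) → ℝ := fun k => u (j + (k : ℕ)) with hv0
  set vN : Fin (n+1) → ℝ := fun k => u (j + n + (k : ℕ)) with hvN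
  set i1 : Fin (n+1) := ⟨1, by omega⟩ with hi1
  have hi1v : (i1 : ℕ) = 1 := rfl
  have hLv : ((Fin.last n) : ℕ) = n := rfl
  have h0v : ((0 : Fin (n+1)) : ℕ) = 0 := rfl
  have hL0 : (Fin.last n) ≠ (0 : Fin (n+1)) := by
    rw [Fin.ne_iff_vne, hLv, h0v]; omega
  have h01 : (0 : Fin (n+1)) ≠ i1 := by
    rw [Fin.ne_iff_vne, h0v, hi1v]; omega
  have hpow : ((-1 : ℝ))^(n+n) = 1 := by
    rw [pow_add, ← mul_pow]; norm_num
  have hn0 : ¬ (n = 0) := by omega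
  -- row descriptions of A
  have hArow0 : A 0 = fun _ => (1:ℝ) := by
    funext k; rw [hA]; simp
  have hArowMid : ∀ i : Fin (n+1), (i : ℕ) ≠ 0 → (i : ℕ) ≠ n →
      A i = fun k : Fin (n+1) => u (j + (i : ℕ) + (k : ℕ)) := by
    intro i hi0 hin; funext k
    rw [hA]; simp only [Matrix.of_apply]; rw [if_neg hi0, if_neg hin]
  have hArowL : A (Fin.last n) = fun k : Fin (n+1) => if (k : ℕ) = n then (1:ℝ) else 0 := by
    funext k; rw [hA]; simp only [Matrix.of_apply, Fin.val_last]
    have hne : ¬ (n = 0) := by omega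
    simp [hne]
  have hArowLunit : ∀ k, A (Fin.last n) k = if k = Fin.last n then 1 else 0 := by
    intro k; rw [hArowL]
    simp [Fin.ext_iff, Fin.val_last]
  -- determinant of A
  have hAdet : A.det = Kdet u (j+1) n := by
    rw [aux_det_unit_row A (Fin.last n) (Fin.last n) hArowLunit, Fin.val_last, hpow, one_mul,
      Kdet]
    congr 1
    ext a b
    simp only [Matrix.submatrix_apply, Fin.succAbove_last, Matrix.of_apply, hA,
      Fin.coe_castSucc]
    by_cases ha : (a : ℕ) = 0
    · rw [if_pos ha, if_pos ha]
    · rw [if_neg ha, if_neg ha, if_neg (by have := a.isLt; omega)]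
      congr 1
      omega
  have hDne : A.det ≠ 0 := by rw [hAdet]; exact h4
  have hU : IsUnit A.det := Ne.isUnit hDne
  -- coordinates of v0 and vN in terms of the rows of A
  have hrepr : ∀ v : Fin (n+1) → ℝ, ∑ k, (v ᵥ* A⁻¹) k • A k = v := by
    intro v
    funext l
    rw [Finset.sum_apply]
    have h2 : ((v ᵥ* A⁻¹) ᵥ* A) l = v l := by
      rw [Matrix.vecMul_vecMul, Matrix.nonsing_inv_mul A hU, Matrix.vecMul_one]
    rw [← h2]
    simp [Matrix.vecMul, dotProduct]
  set c : Fin (n+1) → ℝ := v0 ᵥ* A⁻¹ with hcdef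
  set c' : Fin (n+1) → ℝ := vN ᵥ* A⁻¹ with hc'def
  have hc : ∑ k, c k • A k = v0 := hrepr v0
  have hc' : ∑ k, c' k • A k = vN := hrepr vN
  -- a matrix with a repeated row has determinant zero
  have killer : ∀ (B : Matrix (Fin (n+1)) (Fin (n+1)) ℝ) (r q : Fin (n+1))
      (w : Fin (n+1) → ℝ), q ≠ r → w = B q → (B.updateRow r w).det = 0 := by
    intro B r q w hqr hw
    refine Matrix.det_zero_of_row_eq hqr ?_
    rw [Matrix.updateRow_ne hqr, Matrix.updateRow_self, hw]
  -- definitional unfoldings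
  have hKdef : ∀ (J m : ℕ), Kdet u J m = Matrix.det (Matrix.of fun i k : Fin m =>
      if (i : ℕ) = 0 then 1 else u (J + ((i : ℕ) - 1) + (k : ℕ))) := fun _ _ => rfl
  have hHdef : ∀ (J m : ℕ), hankel u J m = Matrix.det (Matrix.of fun i k : Fin m =>
      u (J + (i : ℕ) + (k : ℕ))) := fun _ _ => rfl
  -- determinant of A with a single row replaced
  have dupdate : ∀ (w : Fin (n+1) → ℝ) (cc : Fin (n+1) → ℝ), (∑ k, cc k • A k = w) →
      ∀ r : Fin (n+1), (A.updateRow r w).det = cc r * A.det := by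
    intro w cc hw r
    rw [← hw, aux_det_row_sum (w := A), Finset.sum_eq_single r]
    · rw [Matrix.updateRow_eq_self]
    · intro k _ hk
      rw [killer A r k (A k) hk rfl, mul_zero]
    · intro h'; exact absurd (Finset.mem_univ _) h'
  have d40 : (A.updateRow 0 v0).det = c 0 * A.det := dupdate v0 c hc 0
  -- e3 : hankel u j n
  have e3 : hankel u j n = c 0 * A.det := by
    rw [← d40]
    have hrow : ∀ k, (A.updateRow 0 v0) (Fin.last n) k = if k = Fin.last n then 1 else 0 := by
      intro k
      rw [Matrix.updateRow_ne hL0]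
      exact hArowLunit k
    rw [aux_det_unit_row _ (Fin.last n) (Fin.last n) hrow, Fin.val_last, hpow, one_mul, hHdef]
    congr 1
    ext a b
    simp only [Matrix.submatrix_apply, Fin.succAbove_last, Matrix.of_apply]
    by_cases ha : (a : ℕ) = 0
    · have ha' : a.castSucc = (0 : Fin (n+1)) := Fin.ext (by simpa using ha)
      rw [ha', Matrix.updateRow_self, hv0]
      simp only [Fin.coe_castSucc]
      congr 1
      omega
    · have ha' : a.castSucc ≠ (0 : Fin (n+1)) := by
        intro h; exact ha (by simpa using congrArg Fin.val h)
      rw [Matrix.updateRow_ne ha',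
        hArowMid _ (by simpa using ha) (by have := a.isLt; simp only [Fin.coe_castSucc]; omega)]
      simp only [Fin.coe_castSucc]
  -- e2 : Kdet u (j+1) (n+1)
  have e2 : Kdet u (j+1) (n+1) = c' (Fin.last n) * A.det := by
    have hM2 : (Matrix.of fun i k : Fin (n+1) =>
        if (i : ℕ) = 0 then (1:ℝ) else u (j + 1 + ((i : ℕ) - 1) + (k : ℕ)))
        = A.updateRow (Fin.last n) vN := by
      ext a b
      simp only [Matrix.of_apply, Matrix.updateRow_apply]
      by_cases haL : a = Fin.last n
      · rw [if_pos haL, haL, Fin.val_last, if_neg (by omega), hvN]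
        congr 1
        omega
      · rw [if_neg haL]
        by_cases ha0 : (a : ℕ) = 0
        · rw [if_pos ha0, hA]
          simp only [Matrix.of_apply]
          rw [if_pos ha0]
        · have han : (a : ℕ) ≠ n := by
            intro h; exact haL (Fin.ext (by rw [h, Fin.val_last]))
          rw [if_neg ha0, hA]
          simp only [Matrix.of_apply]
          rw [if_neg ha0, if_neg han]
          congr 1
          omega
    rw [hKdef, hM2, dupdate vN c' hc' (Fin.last n)]
  -- the auxiliary matrix N = [e, ε, v₁, …, v_{n-1}]
  set N : Matrix (Fin (n+1)) (Fin (n+1)) ℝ :=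
    Matrix.of (fun i k : Fin (n+1) =>
      if (i : ℕ) = 0 then 1
      else if (i : ℕ) = 1 then (if (k : ℕ) = n then 1 else 0)
      else u (j + ((i : ℕ) - 1) + (k : ℕ))) with hN
  have hsa : ∀ a : Fin n, ((i1.succAbove a : Fin (n+1)) : ℕ)
      = if (a : ℕ) = 0 then 0 else (a : ℕ) + 1 := by
    intro a
    rw [Fin.succAbove]
    by_cases h : (a : ℕ) = 0
    · rw [if_pos (show a.castSucc < i1 by rw [Fin.lt_def]; simp [Fin.coe_castSucc, hi1v, h])]
      simp [Fin.coe_castSucc, h]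
    · rw [if_neg (show ¬ a.castSucc < i1 by rw [Fin.lt_def, hi1v]; simp [Fin.coe_castSucc]; omega)]
      simp [Fin.val_succ, h]
  have hNdet : N.det = (-1:ℝ)^(1+n) * A.det := by
    have hrow : ∀ k, N i1 k = if k = Fin.last n then 1 else 0 := by
      intro k
      rw [hN]
      simp only [Matrix.of_apply, hi1v]
      norm_num
      simp [Fin.ext_iff, Fin.val_last]
    rw [aux_det_unit_row N i1 (Fin.last n) hrow, hi1v, Fin.val_last, hAdet, hKdef]
    congr 2
    ext a b
    simp only [Matrix.submatrix_apply, Fin.succAbove_last, Matrix.of_apply, hN]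
    rw [hsa a]
    by_cases ha : (a : ℕ) = 0
    · rw [if_pos ha, if_pos ha]
      norm_num
    · rw [if_neg ha, if_neg ha, if_neg (by omega : ¬ ((a:ℕ) + 1 = 0)),
        if_neg (by omega : ¬ ((a:ℕ) + 1 = 1))]
      simp only [Fin.coe_castSucc]
      congr 1
      omega
  -- e1 : Kdet u j (n+1)
  have e1 : Kdet u j (n+1) = c (Fin.last n) * ((-1:ℝ)^(1+n) * A.det) := by
    have hM1 : (Matrix.of fun i k : Fin (n+1) =>
        if (i : ℕ) = 0 then (1:ℝ) else u (j + ((i : ℕ) - 1) + (k : ℕ)))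
        = N.updateRow i1 v0 := by
      ext a b
      simp only [Matrix.of_apply, Matrix.updateRow_apply]
      by_cases ha1 : a = i1
      · rw [if_pos ha1, if_neg (show ¬ ((a:ℕ) = 0) by rw [ha1, hi1v]; omega), hv0]
        rw [ha1, hi1v]
        show u (j + (1 - 1) + (b:ℕ)) = u (j + (b:ℕ))
        norm_num
      · rw [if_neg ha1, hN]
        simp only [Matrix.of_apply]
        by_cases ha0 : (a : ℕ) = 0
        · rw [if_pos ha0, if_pos ha0]
        · have ha1' : (a : ℕ) ≠ 1 := by
            intro h; exact ha1 (Fin.ext (by rw [h, hi1v]))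
          rw [if_neg ha0, if_neg ha0, if_neg ha1']
    rw [hKdef, hM1, ← hc, aux_det_row_sum (w := A), Finset.sum_eq_single (Fin.last n)]
    · have hlast : A (Fin.last n) = N i1 := by
        funext b
        rw [hArowL, hN]
        simp only [Matrix.of_apply, hi1v]
        norm_num
      rw [hlast, Matrix.updateRow_eq_self, hNdet]
    · intro k _ hk
      by_cases hk0 : (k : ℕ) = 0
      · have hk0' : k = 0 := Fin.ext (by simpa using hk0)
        rw [hk0', killer N i1 0 (A 0) h01 ?_, mul_zero]
        funext b
        rw [hArow0, hN]
        simp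
      · have hkn : (k : ℕ) ≠ n := by
          intro h; exact hk (Fin.ext (by rw [h, Fin.val_last]))
        set q : Fin (n+1) := ⟨(k : ℕ) + 1, by have := k.isLt; omega⟩ with hq
        have hqv : (q : ℕ) = (k : ℕ) + 1 := rfl
        have hq1 : q ≠ i1 := by
          rw [Fin.ne_iff_vne, hi1v, hqv]
          omega
        rw [killer N i1 q (A k) hq1 ?_, mul_zero]
        funext b
        rw [hArowMid k hk0 hkn, hN]
        simp only [Matrix.of_apply, hqv]
        rw [if_neg (by omega), if_neg (by omega)]
        show u (j + (k:ℕ) + (b:ℕ)) = u (j + ((k:ℕ) + 1 - 1) + (b:ℕ))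
        rfl
    · intro h'; exact absurd (Finset.mem_univ _) h'
  -- the swapped matrix Q = [ε, v₁, …, v_{n-1}, e]
  set Q : Matrix (Fin (n+1)) (Fin (n+1)) ℝ
    := A.submatrix (Equiv.swap 0 (Fin.last n)) id with hQ
  have hQdet : Q.det = -A.det := by
    rw [hQ, Matrix.det_permute, Equiv.Perm.sign_swap (Ne.symm hL0)]
    norm_num
  have hQ0 : Q 0 = A (Fin.last n) := by
    rw [hQ]
    funext b
    simp [Matrix.submatrix_apply, Equiv.swap_apply_left]
  have hQL : Q (Fin.last n) = A 0 := by
    rw [hQ]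
    funext b
    simp [Matrix.submatrix_apply, Equiv.swap_apply_right]
  have hQmid : ∀ x : Fin (n+1), x ≠ 0 → x ≠ Fin.last n → Q x = A x := by
    intro x hx0 hxL
    rw [hQ]
    funext b
    simp [Matrix.submatrix_apply, Equiv.swap_apply_of_ne_of_ne hx0 hxL]
  -- e4 : hankel u (j+1) n
  have hM5det : (Matrix.of fun i k : Fin (n+1) =>
      if (i : ℕ) = 0 then (if (k : ℕ) = n then (1:ℝ) else 0)
      else u (j + (i : ℕ) + (k : ℕ))).det = c' 0 * (-A.det) := by
    have hM5 : (Matrix.of fun i k : Fin (n+1) =>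
        if (i : ℕ) = 0 then (if (k : ℕ) = n then (1:ℝ) else 0)
        else u (j + (i : ℕ) + (k : ℕ)))
        = Q.updateRow (Fin.last n) vN := by
      ext a b
      simp only [Matrix.of_apply, Matrix.updateRow_apply]
      by_cases haL : a = Fin.last n
      · rw [if_pos haL, haL, Fin.val_last, if_neg (by omega), hvN]
      · rw [if_neg haL]
        by_cases ha0 : (a : ℕ) = 0
        · have ha0' : a = 0 := Fin.ext (by simpa using ha0)
          rw [if_pos ha0, ha0', hQ0, hArowL]
        · rw [if_neg ha0, hQmid a (fun h => ha0 (by rw [h]; rfl)) haL,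
            hArowMid a ha0 (fun h => haL (Fin.ext (by rw [h, Fin.val_last])))]
    rw [hM5, ← hc', aux_det_row_sum (w := A), Finset.sum_eq_single 0]
    · rw [← hQL, Matrix.updateRow_eq_self, hQdet]
    · intro k _ hk
      by_cases hkL : k = Fin.last n
      · rw [hkL, killer Q (Fin.last n) 0 (A (Fin.last n)) (Ne.symm hL0) hQ0.symm, mul_zero]
      · rw [killer Q (Fin.last n) k (A k) hkL (hQmid k hk hkL).symm, mul_zero]
    · intro h'; exact absurd (Finset.mem_univ _) h'
  have hb5 : (Matrix.of fun i k : Fin (n+1) =>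
      if (i : ℕ) = 0 then (if (k : ℕ) = n then (1:ℝ) else 0)
      else u (j + (i : ℕ) + (k : ℕ))).det = (-1:ℝ)^n * hankel u (j+1) n := by
    have hrow : ∀ k, (Matrix.of fun i k : Fin (n+1) =>
        if (i : ℕ) = 0 then (if (k : ℕ) = n then (1:ℝ) else 0)
        else u (j + (i : ℕ) + (k : ℕ))) 0 k = if k = Fin.last n then 1 else 0 := by
      intro k
      simp only [Matrix.of_apply, h0v]
      norm_num
      simp [Fin.ext_iff, Fin.val_last]
    rw [aux_det_unit_row _ 0 (Fin.last n) hrow]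
    simp only [Fin.val_zero, Fin.val_last, Nat.zero_add]
    rw [hHdef]
    congr 2
    ext a b
    simp only [Matrix.submatrix_apply, Fin.succAbove_zero, Fin.succAbove_last, Matrix.of_apply]
    rw [if_neg (by simp [Fin.val_succ])]
    simp only [Fin.val_succ, Fin.coe_castSucc]
    congr 1
    omega
  have e4 : hankel u (j+1) n = (-1:ℝ)^n * (c' 0 * (-A.det)) := by
    have h := hM5det
    rw [hb5] at h
    calc hankel u (j+1) n = (-1:ℝ)^n * ((-1:ℝ)^n * hankel u (j+1) n) := by
          rw [← mul_assoc, ← pow_add, hpow, one_mul]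
      _ = (-1:ℝ)^n * (c' 0 * (-A.det)) := by rw [h]
  -- e5 : hankel u j (n+1)
  have hG : ((A.updateRow 0 v0).updateRow (Fin.last n) (A 0)).det
      = c (Fin.last n) * (-A.det) := by
    have hcomm : (A.updateRow 0 v0).updateRow (Fin.last n) (A 0)
        = (A.updateRow (Fin.last n) (A 0)).updateRow 0 v0 := by
      ext a b
      simp only [Matrix.updateRow_apply]
      by_cases h0 : a = 0
      · rw [if_pos h0, if_neg (by rw [h0]; exact Ne.symm hL0), if_pos h0]
      · by_cases hL : a = Fin.last n <;> simp [h0, hL, hn0]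
    rw [hcomm, ← hc, aux_det_row_sum (w := A), Finset.sum_eq_single (Fin.last n)]
    · have hQeq : (A.updateRow (Fin.last n) (A 0)).updateRow 0 (A (Fin.last n)) = Q := by
        ext a b
        simp only [Matrix.updateRow_apply]
        by_cases h0 : a = 0
        · rw [if_pos h0, h0, hQ0]
        · rw [if_neg h0]
          by_cases hL : a = Fin.last n
          · rw [if_pos hL, hL, hQL]
          · rw [if_neg hL, hQmid a h0 hL]
      rw [hQeq, hQdet]
    · intro k _ hk
      by_cases hk0 : k = 0
      · rw [hk0, killer _ 0 (Fin.last n) (A 0) hL0 (Matrix.updateRow_self).symm, mul_zero]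
      · rw [killer _ 0 k (A k) hk0 (Matrix.updateRow_ne hk).symm, mul_zero]
    · intro h'; exact absurd (Finset.mem_univ _) h'
  have e5 : hankel u j (n+1)
      = c' (Fin.last n) * (c 0 * A.det) + c' 0 * (c (Fin.last n) * (-A.det)) := by
    have hM3 : (Matrix.of fun i k : Fin (n+1) => u (j + (i : ℕ) + (k : ℕ)))
        = (A.updateRow 0 v0).updateRow (Fin.last n) vN := by
      ext a b
      simp only [Matrix.of_apply, Matrix.updateRow_apply]
      by_cases hL : a = Fin.last n
      · rw [if_pos hL, hL, hvN]
        simp [Fin.val_last]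
      · rw [if_neg hL]
        by_cases h0 : a = 0
        · rw [if_pos h0, h0, hv0]
          show u (j + (0:ℕ) + (b:ℕ)) = u (j + (b:ℕ))
          norm_num
        · rw [if_neg h0,
            hArowMid a (fun h => h0 (Fin.ext (by rw [h]; rfl)))
              (fun h => hL (Fin.ext (by rw [h, Fin.val_last])))]
    rw [hHdef, hM3, ← hc', aux_det_row_sum (w := A),
      ← Finset.sum_erase_add Finset.univ _ (Finset.mem_univ (Fin.last n))]
    have hmem0 : (0 : Fin (n+1)) ∈ Finset.univ.erase (Fin.last n) :=
      Finset.mem_erase.mpr ⟨Ne.symm hL0, Finset.mem_univ _⟩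
    rw [Finset.sum_eq_single_of_mem 0 hmem0]
    · rw [hG]
      have hself : A (Fin.last n) = (A.updateRow 0 v0) (Fin.last n) :=
        (Matrix.updateRow_ne hL0).symm
      rw [hself, Matrix.updateRow_eq_self, d40]
      ring
    · intro k hkmem hk0
      have hkL : k ≠ Fin.last n := (Finset.mem_erase.mp hkmem).1
      rw [killer _ (Fin.last n) k (A k) hkL (Matrix.updateRow_ne hk0).symm, mul_zero]
  -- nonvanishing of the coefficients
  have hcLne : c (Fin.last n) ≠ 0 := by
    intro h; exact h3 (by rw [e1, h, zero_mul])
  have hc0ne : c 0 ≠ 0 := by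
    intro h; exact h1 (by rw [e3, h, zero_mul])
  have hc'0ne : c' 0 ≠ 0 := by
    intro h; exact h2 (by rw [e4, h]; ring)
  -- final algebra
  unfold rrs srs
  rw [e5, e2, e3, e4, e1]
  have hsn : (-1:ℝ)^(1+n) = -((-1:ℝ)^n) := by
    rw [pow_add, pow_one]; ring
  rw [hsn]
  have hs : (-1:ℝ)^n = 1 ∨ (-1:ℝ)^n = -1 := by
    rcases Nat.even_or_odd n with h | h
    · exact Or.inl h.neg_one_pow
    · exact Or.inr h.neg_one_pow
  rw [← hAdet]
  rcases hs with h | h <;> rw [h] <;> field_simp <;> ring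
end

section
/- Let (A_l)_{l≥0} and (u_l)_{l≥0} be real sequences, and fix j ≥ 0 and n ≥ 1. Suppose f^{(j)}_n(I), f^{(j)}_{n−1}(I), f^{(j+1)}_{n−1}(I), K^{(j)}_n, K^{(j+1)}_n are all nonzero and r^{(j)}_n ≠ r^{(j+1)}_n, and define A^{(j)}_m = f^{(j)}_m(a) / f^{(j)}_m(I) where a is the sequence a_l = A_l and I is the constant sequence 1. Then A^{(j)}_n = (r^{(j)}_n A^{(j+1)}_{n−1} − r^{(j+1)}_n A^{(j)}_{n−1}) / (r^{(j)}_n − r^{(j+1)}_n). -/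
/-- `Ajn A u j n = A^{(j)}_n = f^{(j)}_n(a) / f^{(j)}_n(I)`, where `a` is the
sequence `(A_l)` and `I` is the constant sequence `1`. -/
noncomputable def Ajn (A u : ℕ → ℝ) (j n : ℕ) : ℝ :=
  fdet u A j n / fdet u (fun _ => 1) j n

open Matrix Fin

variable {R : Type*} [CommRing R]

lemma det_one_updateTwo {m : ℕ} (v w : Fin (m + 2) → R) :
    ((( 1 : Matrix (Fin (m+2)) (Fin (m+2)) R).updateCol 0 v).updateCol (Fin.last (m+1)) w).det
      = v 0 * w (Fin.last (m+1)) - v (Fin.last (m+1)) * w 0 := by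
  set A := ((1 : Matrix (Fin (m+2)) (Fin (m+2)) R).updateCol 0 v).updateCol (Fin.last (m+1)) w with hA
  have h0l : (0 : Fin (m+2)) ≠ Fin.last (m+1) := by
    simp [Fin.ext_iff]
  have hcol0 : ∀ i, A i 0 = v i := by
    intro i
    simp [hA, Matrix.updateCol_apply, h0l.symm]
  have hmid : ∀ (k : Fin (m+2)), k ≠ 0 → k ≠ Fin.last (m+1) → ∀ i, A i k = if i = k then 1 else 0 := by
    intro k hk0 hkl i
    simp [hA, Matrix.updateCol_apply, hk0, hkl, Matrix.one_apply]
  have hlast : ∀ i, A i (Fin.last (m+1)) = w i := by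
    intro i; simp [hA, Matrix.updateCol_apply]
  rw [Matrix.det_succ_column_zero]
  rw [Finset.sum_eq_add_of_mem 0 (Fin.last (m+1)) (Finset.mem_univ _) (Finset.mem_univ _) h0l ?_]
  · -- two surviving terms
    have e1 : (A.submatrix (Fin.succAbove 0) Fin.succ) =
        (1 : Matrix (Fin (m+1)) (Fin (m+1)) R).updateCol (Fin.last m) (fun i => w i.succ) := by
      ext i k
      rw [Matrix.submatrix_apply, Fin.succAbove_zero]
      by_cases hk : k = Fin.last m
      · subst hk
        rw [Fin.succ_last, hlast, Matrix.updateCol_self]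
      · have hk' : k.succ ≠ Fin.last (m+1) := by
          rw [← Fin.succ_last]
          exact fun h => hk (Fin.succ_inj.mp h)
        rw [Matrix.updateCol_ne hk, hmid k.succ (Fin.succ_ne_zero k) hk' i.succ,
          Matrix.one_apply]
        simp [Fin.succ_inj]
    have e2 : ((A.submatrix (Fin.succAbove (Fin.last (m+1))) Fin.succ)).det = (-1)^m * w 0 := by
      rw [Matrix.det_succ_row_zero]
      rw [Finset.sum_eq_single (Fin.last m)]
      · have h5 : A.submatrix (Fin.succAbove (Fin.last (m+1))) Fin.succ 0 (Fin.last m) = w 0 := by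
          rw [Matrix.submatrix_apply, Fin.succAbove_last, Fin.succ_last]
          have := hlast ((0 : Fin (m+1)).castSucc)
          simpa using this
        rw [h5]
        have e3 : ((A.submatrix (Fin.succAbove (Fin.last (m+1))) Fin.succ).submatrix Fin.succ
            (Fin.succAbove (Fin.last m))) = 1 := by
          ext i k
          simp only [Matrix.submatrix_apply, Fin.succAbove_last]
          have hk0 : (k.castSucc).succ ≠ (0 : Fin (m+2)) := Fin.succ_ne_zero _
          have hkl : (k.castSucc).succ ≠ Fin.last (m+1) := by
            simp only [ne_eq, Fin.ext_iff, Fin.val_succ, Fin.coe_castSucc, Fin.val_last]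
            omega
          rw [hmid _ hk0 hkl, Matrix.one_apply]
          congr 1
          simp only [Fin.ext_iff, Fin.val_succ, Fin.coe_castSucc, eq_iff_iff]
          omega
        rw [e3, Matrix.det_one]
        simp [Fin.val_last, pow_succ]
      · intro k _ hk
        have h6 : A.submatrix (Fin.succAbove (Fin.last (m+1))) Fin.succ 0 k = 0 := by
          rw [Matrix.submatrix_apply, Fin.succAbove_last]
          have hk0 : k.succ ≠ (0 : Fin (m+2)) := Fin.succ_ne_zero _
          have hkl : k.succ ≠ Fin.last (m+1) := by
            rw [← Fin.succ_last]
            exact fun h => hk (Fin.succ_inj.mp h)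
          rw [hmid _ hk0 hkl]
          simp [Ne.symm (Fin.succ_ne_zero k)]
        rw [h6]; ring
      · simp
    rw [hcol0, hcol0, Fin.succAbove_zero] at *
    rw [e2, e1]
    have e4 : ((1 : Matrix (Fin (m+1)) (Fin (m+1)) R).updateCol (Fin.last m) (fun i => w i.succ)).det
        = w (Fin.last (m+1)) := by
      rw [← Matrix.cramer_apply, Matrix.cramer_one]
      simp [Fin.succ_last]
    rw [e4]
    have hm2 : (-1 : R)^(m*2) = 1 := by rw [mul_comm m 2, pow_mul, neg_one_sq, one_pow]
    simp only [Fin.val_zero, pow_zero, one_mul, Fin.val_last, pow_succ]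
    rw [show v 0 * w (Fin.last (m+1)) + (-1:R) ^ m * -1 * v (Fin.last (m+1)) * ((-1:R) ^ m * w 0)
      = v 0 * w (Fin.last (m+1)) - ((-1:R)^(m*2)) * (v (Fin.last (m+1)) * w 0) by ring, hm2]
    ring
  · intro k _ hk
    obtain ⟨hk0, hkl⟩ := hk
    have h7 : (A.submatrix (Fin.succAbove k) Fin.succ).det = 0 := by
      obtain ⟨k', hk'⟩ : ∃ k' : Fin (m+1), k'.succ = k :=
        ⟨k.pred hk0, Fin.succ_pred _ _⟩
      apply Matrix.det_eq_zero_of_column_eq_zero k'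
      intro i
      rw [Matrix.submatrix_apply, hk', hmid k hk0 hkl]
      simp [Fin.succAbove_ne]
    rw [h7]; ring

/-- Desnanot–Jacobi, multiplied by `det M`, over any commutative ring. -/
lemma dj_mul {m : ℕ} (M : Matrix (Fin (m+2)) (Fin (m+2)) R) :
    M.det * (M.det *
      (M.submatrix (fun i : Fin m => i.succ.castSucc) (fun k : Fin m => k.succ.castSucc)).det) =
    M.det * ((M.submatrix Fin.succ Fin.succ).det * (M.submatrix Fin.castSucc Fin.castSucc).det -
      (M.submatrix Fin.succ Fin.castSucc).det * (M.submatrix Fin.castSucc Fin.succ).det) := by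
  classical
  set C := (((1 : Matrix (Fin (m+2)) (Fin (m+2)) R).updateCol 0 (fun i => adjugate M i 0)).updateCol
      (Fin.last (m+1)) (fun i => adjugate M i (Fin.last (m+1)))) with hC
  have h0l : (0 : Fin (m+2)) ≠ Fin.last (m+1) := by simp [Fin.ext_iff]
  -- step: M * C = D
  set D := ((M.updateCol 0 (fun i => if i = 0 then M.det else 0)).updateCol
      (Fin.last (m+1)) (fun i => if i = Fin.last (m+1) then M.det else 0)) with hD
  have hMC : M * C = D := by
    ext i k
    rw [Matrix.mul_apply]
    by_cases hk0 : k = 0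
    · subst hk0
      have hCc : ∀ jj, C jj 0 = adjugate M jj 0 := by
        intro jj; simp [hC, Matrix.updateCol_apply, h0l.symm]
      simp only [hCc]
      have := congrFun (congrFun (Matrix.mul_adjugate M) i) 0
      rw [Matrix.mul_apply] at this
      rw [this]
      simp [hD, Matrix.updateCol_apply, h0l.symm, Matrix.one_apply, Matrix.smul_apply]
    · by_cases hkl : k = Fin.last (m+1)
      · subst hkl
        have hCc : ∀ jj, C jj (Fin.last (m+1)) = adjugate M jj (Fin.last (m+1)) := by
          intro jj; simp [hC, Matrix.updateCol_apply]
        simp only [hCc]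
        have := congrFun (congrFun (Matrix.mul_adjugate M) i) (Fin.last (m+1))
        rw [Matrix.mul_apply] at this
        rw [this]
        simp [hD, Matrix.updateCol_apply, Matrix.one_apply, Matrix.smul_apply]
      · have hCc : ∀ jj, C jj k = if jj = k then 1 else 0 := by
          intro jj; simp [hC, Matrix.updateCol_apply, hk0, hkl, Matrix.one_apply]
        simp only [hCc, mul_ite, mul_one, mul_zero]
        rw [Finset.sum_ite_eq' Finset.univ k (fun jj => M i jj)]
        simp [hD, Matrix.updateCol_apply, hk0, hkl]
  -- step: det D = det M * (det M * det inner)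
  have hdetD : D.det = M.det * (M.det *
      (M.submatrix (fun i : Fin m => i.succ.castSucc) (fun k : Fin m => k.succ.castSucc)).det) := by
    rw [Matrix.det_succ_column_zero]
    rw [Finset.sum_eq_single 0]
    · have hD00 : D 0 0 = M.det := by
        simp [hD, Matrix.updateCol_apply, h0l.symm]
      rw [hD00, Fin.succAbove_zero]
      set E := D.submatrix Fin.succ Fin.succ with hE
      have hdetE : E.det = M.det *
          (M.submatrix (fun i : Fin m => i.succ.castSucc) (fun k : Fin m => k.succ.castSucc)).det := by
        rw [Matrix.det_succ_column E (Fin.last m)]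
        rw [Finset.sum_eq_single (Fin.last m)]
        · have hEl : E (Fin.last m) (Fin.last m) = M.det := by
            simp only [hE, Matrix.submatrix_apply, Fin.succ_last]
            simp [hD, Matrix.updateCol_apply]
          rw [hEl]
          have hsub : E.submatrix (Fin.succAbove (Fin.last m)) (Fin.succAbove (Fin.last m)) =
              M.submatrix (fun i : Fin m => i.succ.castSucc) (fun k : Fin m => k.succ.castSucc) := by
            ext i k
            simp only [hE, Matrix.submatrix_apply, Fin.succAbove_last]
            have hc0 : (k.castSucc).succ ≠ (0 : Fin (m+2)) := Fin.succ_ne_zero _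
            have hcl : (k.castSucc).succ ≠ Fin.last (m+1) := by
              simp only [ne_eq, Fin.ext_iff, Fin.val_succ, Fin.coe_castSucc, Fin.val_last]
              omega
            simp only [hD, Matrix.updateCol_apply, if_neg hcl, if_neg hc0]
            congr 1 <;> simp [Fin.ext_iff]
          rw [hsub]
          simp [Fin.val_last, ← two_mul, pow_mul]
        · intro k _ hk
          have : E k (Fin.last m) = 0 := by
            simp only [hE, Matrix.submatrix_apply, Fin.succ_last]
            have : k.succ ≠ Fin.last (m+1) := by
              rw [← Fin.succ_last]; exact fun h => hk (Fin.succ_inj.mp h)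
            simp [hD, Matrix.updateCol_apply, this]
          rw [this]; ring
        · simp
      rw [hdetE]
      simp [Fin.val_zero]
    · intro i _ hi
      have : D i 0 = 0 := by
        simp [hD, Matrix.updateCol_apply, h0l.symm, hi]
      rw [this]; ring
    · simp
  -- step: det C
  have hdetC : C.det = adjugate M 0 0 * adjugate M (Fin.last (m+1)) (Fin.last (m+1)) -
      adjugate M (Fin.last (m+1)) 0 * adjugate M 0 (Fin.last (m+1)) := by
    rw [hC, det_one_updateTwo]
  have key : M.det * C.det = D.det := by
    rw [← hMC, Matrix.det_mul]
  rw [← hdetD, ← key, hdetC]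
  -- express adjugate entries as minors
  have a00 : adjugate M 0 0 = (M.submatrix Fin.succ Fin.succ).det := by
    rw [Matrix.adjugate_fin_succ_eq_det_submatrix]
    simp
  have all : adjugate M (Fin.last (m+1)) (Fin.last (m+1)) =
      (M.submatrix Fin.castSucc Fin.castSucc).det := by
    rw [Matrix.adjugate_fin_succ_eq_det_submatrix]
    simp [← two_mul, pow_mul]
  have al0 : adjugate M (Fin.last (m+1)) 0 =
      (-1)^(m+1) * (M.submatrix Fin.succ Fin.castSucc).det := by
    rw [Matrix.adjugate_fin_succ_eq_det_submatrix]
    simp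
  have a0l : adjugate M 0 (Fin.last (m+1)) =
      (-1)^(m+1) * (M.submatrix Fin.castSucc Fin.succ).det := by
    rw [Matrix.adjugate_fin_succ_eq_det_submatrix]
    simp
  rw [a00, all, al0, a0l]
  have : ((-1:R)^(m+1)) * ((-1:R)^(m+1)) = 1 := by
    rw [← pow_add, ← two_mul, pow_mul]
    simp
  linear_combination (-(M.det * (M.submatrix Fin.succ Fin.castSucc).det *
    (M.submatrix Fin.castSucc Fin.succ).det)) * this

/-- Desnanot–Jacobi identity over ℝ. -/
lemma dj_s10 {m : ℕ} (M : Matrix (Fin (m+2)) (Fin (m+2)) ℝ) :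
    M.det *
      (M.submatrix (fun i : Fin m => i.succ.castSucc) (fun k : Fin m => k.succ.castSucc)).det =
    (M.submatrix Fin.succ Fin.succ).det * (M.submatrix Fin.castSucc Fin.castSucc).det -
      (M.submatrix Fin.succ Fin.castSucc).det * (M.submatrix Fin.castSucc Fin.succ).det := by
  classical
  set P := MvPolynomial (Fin (m+2) × Fin (m+2)) ℤ
  set X : Matrix (Fin (m+2)) (Fin (m+2)) P := Matrix.of fun i k => MvPolynomial.X (i, k) with hX
  have hXdet : X.det ≠ 0 := by
    intro h
    set θ : P →+* ℝ := MvPolynomial.eval₂Hom (Int.castRingHom ℝ)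
      (fun p : Fin (m+2) × Fin (m+2) => if p.1 = p.2 then (1:ℝ) else 0) with hθ
    have h1 := congrArg θ h
    rw [RingHom.map_det, map_zero] at h1
    have hone : θ.mapMatrix X = 1 := by
      ext i k
      rw [RingHom.mapMatrix_apply, Matrix.map_apply, hX, Matrix.of_apply, hθ,
        MvPolynomial.eval₂Hom_X', Matrix.one_apply]
    rw [hone, Matrix.det_one] at h1
    exact one_ne_zero h1
  have hgen := mul_left_cancel₀ hXdet (dj_mul X)
  set ψ : P →+* ℝ := MvPolynomial.eval₂Hom (Int.castRingHom ℝ)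
      (fun p : Fin (m+2) × Fin (m+2) => M p.1 p.2) with hψ
  have hmap : ψ.mapMatrix X = M := by
    ext i k
    rw [RingHom.mapMatrix_apply, Matrix.map_apply, hX, Matrix.of_apply, hψ,
      MvPolynomial.eval₂Hom_X']
  have h2 := congrArg ψ hgen
  simp only [_root_.map_mul, _root_.map_sub, RingHom.map_det] at h2
  have hsub : ∀ (p : ℕ) (r c : Fin p → Fin (m+2)),
      ψ.mapMatrix (X.submatrix r c) = M.submatrix r c := by
    intro p r c; ext i k
    rw [RingHom.mapMatrix_apply, Matrix.map_apply, Matrix.submatrix_apply, hX, Matrix.of_apply,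
      hψ, MvPolynomial.eval₂Hom_X', Matrix.submatrix_apply]
  simp only [hsub, hmap] at h2
  exact h2

/-- identity (III): `f_n^{(j)}(1) = (-1)^n K_{n+1}^{(j)}`. -/
lemma fdet_one_eq (u : ℕ → ℝ) (j n : ℕ) :
    fdet u (fun _ => 1) j n = (-1)^n * Kdet u j (n+1) := by
  rw [fdet, ← Matrix.det_transpose]
  have h : (Matrix.of fun i k : Fin (n+1) => if (k : ℕ) < n then u (j + i + k) else (1:ℝ)).transpose
      = (Matrix.of fun i k : Fin (n+1) =>
          if (i : ℕ) = 0 then (1:ℝ) else u (j + ((i : ℕ) - 1) + k)).submatrix (finRotate (n+1)) id := by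
    ext k i
    rw [Matrix.transpose_apply, Matrix.of_apply, Matrix.submatrix_apply, Matrix.of_apply, id]
    rw [finRotate_succ_apply]
    by_cases hk : (k : ℕ) < n
    · have hv : ((k + 1 : Fin (n+1)) : ℕ) = (k : ℕ) + 1 := by
        rw [Fin.val_add_one_of_lt]
        exact Fin.lt_last_iff_ne_last.mpr (fun h => by rw [h] at hk; simp at hk)
      rw [if_pos hk, if_neg (by omega)]
      congr 1
      omega
    · have hkl : k = Fin.last n := by
        apply Fin.ext
        have := k.isLt
        simp only [Fin.val_last]
        omega
      subst hkl
      have hlz : (Fin.last n + 1 : Fin (n+1)) = 0 := by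
        apply Fin.ext
        simp [Fin.add_def]
      rw [if_neg hk, hlz]
      simp
  rw [h, Matrix.det_permute, sign_finRotate, Kdet]
  push_cast
  ring

/-- identity (I). -/
lemma idI (u : ℕ → ℝ) (j m : ℕ) :
    Kdet u j (m+2) * hankel u (j+1) m
      = hankel u (j+1) (m+1) * Kdet u j (m+1) - hankel u j (m+1) * Kdet u (j+1) (m+1) := by
  have h := dj_s10 (Matrix.of fun i k : Fin (m+2) =>
    if (i : ℕ) = 0 then (1:ℝ) else u (j + ((i : ℕ) - 1) + k))
  set N := Matrix.of fun i k : Fin (m+2) =>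
    if (i : ℕ) = 0 then (1:ℝ) else u (j + ((i : ℕ) - 1) + k) with hN
  have e0 : N.det = Kdet u j (m+2) := rfl
  have e1 : N.submatrix (fun i : Fin m => i.succ.castSucc) (fun k : Fin m => k.succ.castSucc)
      = Matrix.of (fun i k : Fin m => u ((j+1) + i + k)) := by
    ext i k
    simp only [hN, Matrix.submatrix_apply, Matrix.of_apply, Fin.coe_castSucc, Fin.val_succ]
    rw [if_neg (by omega)]
    exact congrArg u (by omega)
  have e2 : N.submatrix Fin.succ Fin.succ
      = Matrix.of (fun i k : Fin (m+1) => u ((j+1) + i + k)) := by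
    ext i k
    simp only [hN, Matrix.submatrix_apply, Matrix.of_apply, Fin.val_succ]
    rw [if_neg (by omega)]
    exact congrArg u (by omega)
  have e3 : N.submatrix Fin.castSucc Fin.castSucc
      = Matrix.of (fun i k : Fin (m+1) =>
          if (i : ℕ) = 0 then (1:ℝ) else u (j + ((i : ℕ) - 1) + k)) := by
    ext i k
    simp only [hN, Matrix.submatrix_apply, Matrix.of_apply, Fin.coe_castSucc]
  have e4 : N.submatrix Fin.succ Fin.castSucc
      = Matrix.of (fun i k : Fin (m+1) => u (j + i + k)) := by
    ext i k
    simp only [hN, Matrix.submatrix_apply, Matrix.of_apply, Fin.val_succ, Fin.coe_castSucc]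
    rw [if_neg (by omega)]
    exact congrArg u (by omega)
  have e5 : N.submatrix Fin.castSucc Fin.succ
      = Matrix.of (fun i k : Fin (m+1) =>
          if (i : ℕ) = 0 then (1:ℝ) else u ((j+1) + ((i : ℕ) - 1) + k)) := by
    ext i k
    simp only [hN, Matrix.submatrix_apply, Matrix.of_apply, Fin.coe_castSucc, Fin.val_succ]
    by_cases hi : (i : ℕ) = 0
    · simp [hi]
    · rw [if_neg hi, if_neg hi]
      exact congrArg u (by omega)
  rw [e0, e1, e2, e3, e4, e5] at h
  exact h

lemma rot_hankel (u : ℕ → ℝ) (J m : ℕ) :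
    Matrix.det (Matrix.of fun i k : Fin (m+1) =>
      if (k : ℕ) = 0 then u (J + i + m) else u (J + i + ((k : ℕ) - 1)))
    = (-1)^m * hankel u J (m+1) := by
  have e : (Matrix.of fun i k : Fin (m+1) =>
        if (k : ℕ) = 0 then u (J + i + m) else u (J + i + ((k : ℕ) - 1)))
      = (Matrix.of fun i k : Fin (m+1) => u (J + i + k)).submatrix id
          ⇑((Fin.cycleRange (Fin.last m))⁻¹) := by
    ext i k
    simp only [Matrix.of_apply, Matrix.submatrix_apply, id]
    induction k using Fin.cases with
    | zero =>
      rw [Equiv.Perm.inv_def, Fin.cycleRange_symm_zero, if_pos (by simp)]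
      exact congrArg u (by simp [Fin.val_last])
    | succ k' =>
      rw [Equiv.Perm.inv_def, Fin.cycleRange_symm_succ, Fin.succAbove_last,
        if_neg (by simp)]
      exact congrArg u (by simp [Fin.val_succ, Fin.coe_castSucc])
  rw [e, Matrix.det_permute']
  rw [hankel]
  simp [Fin.sign_cycleRange, Fin.val_last]

/-- identity (II). -/
lemma idII (u A : ℕ → ℝ) (j m : ℕ) :
    fdet u A j (m+1) * hankel u (j+1) m
      = fdet u A (j+1) m * hankel u j (m+1) - hankel u (j+1) (m+1) * fdet u A j m := by
  set i₀ : Fin (m+2) := Fin.castSucc (Fin.last m) with hi₀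
  set M' := Matrix.of (fun i k : Fin (m+2) =>
    if (k : ℕ) = 0 then u (j + i + m)
    else if (k : ℕ) < m+1 then u (j + i + ((k : ℕ) - 1)) else A (j + i)) with hM'
  have h := dj_s10 M'
  -- det M' = (-1)^m * fdet u A j (m+1)
  have edet : M'.det = (-1)^m * fdet u A j (m+1) := by
    have e : M' = (Matrix.of fun i k : Fin (m+2) =>
          if (k : ℕ) < m+1 then u (j + i + k) else A (j + i)).submatrix id
            ⇑((Fin.cycleRange i₀)⁻¹) := by
      ext i k
      simp only [hM', Matrix.of_apply, Matrix.submatrix_apply, id]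
      induction k using Fin.cases with
      | zero =>
        rw [Equiv.Perm.inv_def, Fin.cycleRange_symm_zero, if_pos (by simp)]
        rw [if_pos (by simp [hi₀, Fin.coe_castSucc, Fin.val_last])]
        exact congrArg u (by simp [hi₀, Fin.coe_castSucc, Fin.val_last])
      | succ k' =>
        rw [Equiv.Perm.inv_def, Fin.cycleRange_symm_succ]
        by_cases hk' : (k' : ℕ) < m
        · rw [Fin.succAbove_of_castSucc_lt _ _ (by
            simp [hi₀, Fin.lt_iff_val_lt_val, Fin.coe_castSucc, Fin.val_last, hk'])]
          rw [if_neg (by simp), if_pos (by simp only [Fin.val_succ]; omega),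
            if_pos (by simp only [Fin.coe_castSucc]; omega)]
          exact congrArg u (by simp [Fin.val_succ, Fin.coe_castSucc])
        · have hk'm : (k' : ℕ) = m := by have := k'.isLt; omega
          rw [Fin.succAbove_of_le_castSucc _ _ (by
            simp [hi₀, Fin.le_iff_val_le_val, Fin.coe_castSucc, Fin.val_last, hk'm])]
          rw [if_neg (by simp), if_neg (by simp only [Fin.val_succ]; omega),
            if_neg (by simp only [Fin.val_succ]; omega)]
    rw [e, Matrix.det_permute']
    rw [fdet]
    simp [Fin.sign_cycleRange, hi₀, Fin.coe_castSucc, Fin.val_last]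
  have e1 : M'.submatrix (fun i : Fin m => i.succ.castSucc) (fun k : Fin m => k.succ.castSucc)
      = Matrix.of (fun i k : Fin m => u ((j+1) + i + k)) := by
    ext i k
    simp only [hM', Matrix.submatrix_apply, Matrix.of_apply, Fin.coe_castSucc, Fin.val_succ]
    rw [if_neg (by omega), if_pos (by omega)]
    exact congrArg u (by omega)
  have e2 : M'.submatrix Fin.succ Fin.succ
      = Matrix.of (fun i k : Fin (m+1) =>
          if (k : ℕ) < m then u ((j+1) + i + k) else A ((j+1) + i)) := by
    ext i k
    simp only [hM', Matrix.submatrix_apply, Matrix.of_apply, Fin.val_succ]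
    by_cases hk : (k : ℕ) < m
    · rw [if_neg (by omega), if_pos (by omega), if_pos hk]
      exact congrArg u (by omega)
    · rw [if_neg (by omega), if_neg (by omega), if_neg hk]
      exact congrArg A (by omega)
  have e3 : M'.submatrix Fin.castSucc Fin.castSucc
      = Matrix.of (fun i k : Fin (m+1) =>
          if (k : ℕ) = 0 then u (j + i + m) else u (j + i + ((k : ℕ) - 1))) := by
    ext i k
    simp only [hM', Matrix.submatrix_apply, Matrix.of_apply, Fin.coe_castSucc]
    by_cases hk : (k : ℕ) = 0
    · rw [if_pos hk, if_pos hk]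
    · rw [if_neg hk, if_neg hk, if_pos (by have := k.isLt; omega)]
  have e4 : M'.submatrix Fin.succ Fin.castSucc
      = Matrix.of (fun i k : Fin (m+1) =>
          if (k : ℕ) = 0 then u ((j+1) + i + m) else u ((j+1) + i + ((k : ℕ) - 1))) := by
    ext i k
    simp only [hM', Matrix.submatrix_apply, Matrix.of_apply, Fin.coe_castSucc, Fin.val_succ]
    by_cases hk : (k : ℕ) = 0
    · rw [if_pos hk, if_pos hk]
      exact congrArg u (by omega)
    · rw [if_neg hk, if_neg hk, if_pos (by have := k.isLt; omega)]
      exact congrArg u (by omega)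
  have e5 : M'.submatrix Fin.castSucc Fin.succ
      = Matrix.of (fun i k : Fin (m+1) =>
          if (k : ℕ) < m then u (j + i + k) else A (j + i)) := by
    ext i k
    simp only [hM', Matrix.submatrix_apply, Matrix.of_apply, Fin.coe_castSucc, Fin.val_succ]
    by_cases hk : (k : ℕ) < m
    · rw [if_neg (by omega), if_pos (by omega), if_pos hk]
      exact congrArg u (by omega)
    · rw [if_neg (by omega), if_neg (by omega), if_neg hk]
  rw [edet, e1, e2, e3, e4, e5] at h
  rw [rot_hankel, rot_hankel] at h
  have hfold1 : (Matrix.of (fun i k : Fin m => u ((j+1) + i + k))).det = hankel u (j+1) m := rfl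
  have hfold2 : (Matrix.of (fun i k : Fin (m+1) =>
      if (k : ℕ) < m then u ((j+1) + i + k) else A ((j+1) + i))).det = fdet u A (j+1) m := rfl
  have hfold3 : (Matrix.of (fun i k : Fin (m+1) =>
      if (k : ℕ) < m then u (j + i + k) else A (j + i))).det = fdet u A j m := rfl
  rw [hfold1, hfold2, hfold3] at h
  have e6 : ((-1:ℝ)^m)^2 = 1 := by
    rw [← pow_mul, mul_comm m 2, pow_mul]
    simp
  linear_combination ((-1:ℝ)^m) * h - (fdet u A j (m+1) * hankel u (j+1) m
    - fdet u A (j+1) m * hankel u j (m+1) + hankel u (j+1) (m+1) * fdet u A j m) * e6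

theorem stmt_10 (A u : ℕ → ℝ) (j n : ℕ) (hn : 1 ≤ n)
    (h1 : fdet u (fun _ => 1) j n ≠ 0) (h2 : fdet u (fun _ => 1) j (n - 1) ≠ 0)
    (h3 : fdet u (fun _ => 1) (j + 1) (n - 1) ≠ 0)
    (h4 : Kdet u j n ≠ 0) (h5 : Kdet u (j + 1) n ≠ 0)
    (h6 : rrs u j n ≠ rrs u (j + 1) n) :
    Ajn A u j n =
      (rrs u j n * Ajn A u (j + 1) (n - 1) - rrs u (j + 1) n * Ajn A u j (n - 1)) /
        (rrs u j n - rrs u (j + 1) n) := by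
  obtain ⟨m, rfl⟩ : ∃ m, n = m + 1 := ⟨n - 1, by omega⟩
  simp only [Nat.add_sub_cancel] at h2 h3 ⊢
  have hIIIj : fdet u (fun _ => 1) j (m+1) = (-1)^(m+1) * Kdet u j (m+2) := fdet_one_eq u j (m+1)
  have hIIIj0 : fdet u (fun _ => 1) j m = (-1)^m * Kdet u j (m+1) := fdet_one_eq u j m
  have hIIIj1 : fdet u (fun _ => 1) (j+1) m = (-1)^m * Kdet u (j+1) (m+1) := fdet_one_eq u (j+1) m
  have hI := idI u j m
  have hII := idII u A j m
  have hK2 : Kdet u j (m+2) ≠ 0 := by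
    intro h0
    exact h1 (by rw [hIIIj, h0, mul_zero])
  have hd : rrs u j (m+1) - rrs u (j+1) (m+1) ≠ 0 := sub_ne_zero.mpr h6
  have hdiff : hankel u j (m+1) * Kdet u (j+1) (m+1)
      - hankel u (j+1) (m+1) * Kdet u j (m+1) ≠ 0 := by
    intro h0
    apply h6
    rw [rrs, rrs, div_eq_div_iff h4 h5]
    linarith
  have hH1m : hankel u (j+1) m ≠ 0 := by
    intro h0
    rw [h0, mul_zero] at hI
    exact hdiff (by linarith)
  have key : fdet u A j (m+1) * (hankel u j (m+1) * Kdet u (j+1) (m+1)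
        - hankel u (j+1) (m+1) * Kdet u j (m+1))
      = -Kdet u j (m+2) * (hankel u j (m+1) * fdet u A (j+1) m
        - hankel u (j+1) (m+1) * fdet u A j m) := by
    linear_combination (fdet u A j (m+1)) * hI - (Kdet u j (m+2)) * hII
  rw [eq_div_iff hd, Ajn, Ajn, Ajn, rrs, rrs, hIIIj, hIIIj0, hIIIj1]
  rcases Nat.even_or_odd m with hm | hm
  · rw [hm.neg_one_pow, hm.add_one.neg_one_pow]
    field_simp
    linear_combination (-1 : ℝ) * key
  · rw [hm.neg_one_pow, hm.add_one.neg_one_pow]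
    field_simp
    linear_combination key
end

section
/- Let r ≥ 1, let c_1, …, c_r be distinct complex numbers with Re c_k < 0 for all k, let p_1, …, p_r be complex polynomials with deg p_k = μ_k exactly (leading coefficient nonzero), and set n = Σ_{k=1}^r (μ_k + 1) and f(x) = Σ_{k=1}^r p_k(x) e^{c_k x}. Let h > 0 be such that the numbers e^{c_1 h}, …, e^{c_r h} are pairwise distinct. Then there exist complex constants α_1, …, α_n such that for every real x, ∫_x^∞ f(t) dt = Σ_{k=1}^n α_k f(x + (k−1)h). -/
open MeasureTheory
open Polynomial

private lemma tay_coeff_high (h : ℂ) (w : ℂ[X]) (i : ℕ) (hw : w.degree ≤ (i : ℕ)) :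
    ((taylor h) w - w).coeff i = 0 := by
  have h1 : hasseDeriv i w = C (w.coeff i) := by
    ext n
    rw [hasseDeriv_coeff, coeff_C]
    rcases n with _ | n
    · simp
    · have hz : w.coeff (n + 1 + i) = 0 := by
        apply coeff_eq_zero_of_degree_lt
        refine lt_of_le_of_lt hw ?_
        exact_mod_cast by omega
      simp [hz]
  rw [coeff_sub, taylor_coeff, h1, eval_C, sub_self]

private lemma tay_coeff_top (h : ℂ) (w : ℂ[X]) (m : ℕ)
    (hw : w.degree = ((m + 1 : ℕ) : WithBot ℕ)) :
    ((taylor h) w - w).coeff m = (m + 1 : ℂ) * h * w.coeff (m + 1) := by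
  have hnd : w.natDegree = m + 1 := natDegree_eq_of_degree_eq_some hw
  have h1 : hasseDeriv m w = C (w.coeff m) + C ((m + 1 : ℂ) * w.coeff (m + 1)) * X := by
    ext n
    rw [hasseDeriv_coeff]
    rcases n with _ | n
    · simp
    rcases n with _ | n
    · have hch : (1 + m).choose m = m + 1 := by
        rw [add_comm]; exact Nat.choose_succ_self_right m
      simp only [coeff_add, coeff_C, coeff_C_mul, coeff_X, hch, add_comm 1 m]
      push_cast
      simp
    · have hz : w.coeff (n + 2 + m) = 0 := by
        apply coeff_eq_zero_of_natDegree_lt; omega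
      simp [hz, coeff_C, coeff_X, coeff_one]
  rw [coeff_sub, taylor_coeff, h1]
  simp
  ring
private lemma degree_taylor' (r : ℂ) (w : ℂ[X]) : ((taylor r) w).degree = w.degree := by
  rcases eq_or_ne w 0 with rfl | hw
  · simp
  · have h2 : (taylor r) w ≠ 0 := fun hz =>
      hw (taylor_injective r (show (taylor r) w = (taylor r) 0 by simpa using hz))
    rw [degree_eq_natDegree hw, degree_eq_natDegree h2, natDegree_taylor]

private lemma degree_smul_eq {a : ℂ} (ha : a ≠ 0) (w : ℂ[X]) : (a • w).degree = w.degree := by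
  rw [smul_eq_C_mul, degree_mul, degree_C ha, zero_add]

private lemma tay_sub_degree (h : ℂ) (hh : h ≠ 0) (w : ℂ[X]) (m : ℕ)
    (hw : w.degree = ((m + 1 : ℕ) : WithBot ℕ)) :
    ((taylor h) w - w).degree = (m : ℕ) := by
  have hnd : w.natDegree = m + 1 := natDegree_eq_of_degree_eq_some hw
  have hle : ((taylor h) w - w).degree ≤ (m : ℕ) := by
    rw [degree_le_iff_coeff_zero]
    intro i hi
    apply tay_coeff_high
    rw [hw]
    have hmi : m < i := by exact_mod_cast hi
    exact_mod_cast Nat.succ_le_of_lt hmi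
  have hne : ((taylor h) w - w).coeff m ≠ 0 := by
    rw [tay_coeff_top h w m hw]
    have hwne : w ≠ 0 := fun hz => by rw [hz, natDegree_zero] at hnd; omega
    have hc1 : w.coeff (m + 1) ≠ 0 := by
      rw [← hnd]
      exact fun hz => hwne (leadingCoeff_eq_zero.mp hz)
    have hm1 : (m + 1 : ℂ) ≠ 0 := by exact_mod_cast Nat.succ_ne_zero m
    exact mul_ne_zero (mul_ne_zero hm1 hh) hc1
  exact le_antisymm hle (le_degree_of_ne_zero hne)
private lemma Tpow_apply (lam h : ℂ) (q : ℂ[X]) (j : ℕ) :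
    ((lam • (taylor h : ℂ[X] →ₗ[ℂ] ℂ[X])) ^ j) q = lam ^ j • (taylor ((j : ℂ) * h)) q := by
  induction j with
  | zero => simp
  | succ j ih =>
    rw [pow_succ', Module.End.mul_apply, ih, LinearMap.smul_apply, _root_.map_smul, taylor_taylor]
    rw [smul_smul, ← pow_succ']
    congr 2
    push_cast
    ring

private lemma aeval_T_degree_le (lam h : ℂ) (ψ : ℂ[X]) (g : ℂ[X]) :
    ((Polynomial.aeval (lam • (taylor h : ℂ[X] →ₗ[ℂ] ℂ[X])) ψ) g).degree ≤ g.degree := by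
  induction ψ using Polynomial.induction_on' with
  | add p q hp hq =>
    rw [map_add, LinearMap.add_apply]
    exact (degree_add_le _ _).trans (max_le hp hq)
  | monomial i a =>
    rw [← C_mul_X_pow_eq_monomial, map_mul, map_pow, aeval_C, aeval_X, Module.End.mul_apply,
      Module.algebraMap_end_apply, Tpow_apply]
    refine (degree_smul_le _ _).trans ?_
    refine (degree_smul_le _ _).trans ?_
    rw [degree_taylor']

private lemma Dpow_degree (lam h : ℂ) (hlam : lam ≠ 0) (hh : h ≠ 0) :
    ∀ (s m : ℕ) (g : ℂ[X]), g.degree = ((s + m : ℕ) : WithBot ℕ) →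
    ((((lam • (taylor h : ℂ[X] →ₗ[ℂ] ℂ[X])) -
        algebraMap ℂ (Module.End ℂ ℂ[X]) lam) ^ s) g).degree = (m : ℕ) := by
  intro s
  induction s with
  | zero => intro m g hg; simpa using hg
  | succ s ih =>
    intro m g hg
    rw [pow_succ, Module.End.mul_apply]
    have hD : ((lam • (taylor h : ℂ[X] →ₗ[ℂ] ℂ[X])) -
        algebraMap ℂ (Module.End ℂ ℂ[X]) lam) g = lam • ((taylor h) g - g) := by
      rw [LinearMap.sub_apply, LinearMap.smul_apply, Module.algebraMap_end_apply, smul_sub]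
    rw [hD]
    apply ih
    rw [degree_smul_eq hlam]
    rw [tay_sub_degree h hh g (s + m) (by rw [hg]; congr 1; omega)]

private lemma sigma_degree (lam h : ℂ) (hlam : lam ≠ 0) (σ : ℂ[X]) (hσ : σ.eval lam ≠ 0)
    (g : ℂ[X]) :
    ((Polynomial.aeval (lam • (taylor h : ℂ[X] →ₗ[ℂ] ℂ[X])) σ) g).degree = g.degree := by
  set T : Module.End ℂ ℂ[X] := lam • (taylor h : ℂ[X] →ₗ[ℂ] ℂ[X]) with hT
  rcases eq_or_ne g 0 with rfl | hg
  · simp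
  obtain ⟨τ, hτ⟩ : ∃ τ, σ - C (σ.eval lam) = (X - C lam) * τ := X_sub_C_dvd_sub_C_eval
  have hσeq : σ = C (σ.eval lam) + (X - C lam) * τ := by
    rw [← hτ]; ring
  have happ : (Polynomial.aeval T σ) g =
      (σ.eval lam) • g + (T - algebraMap ℂ (Module.End ℂ ℂ[X]) lam) ((Polynomial.aeval T τ) g) := by
    conv_lhs => rw [hσeq]
    simp only [map_add, map_mul, map_sub, aeval_X, aeval_C, LinearMap.add_apply,
      Module.End.mul_apply, Module.algebraMap_end_apply]
  rw [happ]
  set w : ℂ[X] := (Polynomial.aeval T τ) g with hw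
  have hwdeg : w.degree ≤ g.degree := aeval_T_degree_le lam h τ g
  have hDdeg : ((T - algebraMap ℂ (Module.End ℂ ℂ[X]) lam) w).degree < g.degree := by
    have hD : (T - algebraMap ℂ (Module.End ℂ ℂ[X]) lam) w = lam • ((taylor h) w - w) := by
      rw [LinearMap.sub_apply, hT, LinearMap.smul_apply, Module.algebraMap_end_apply, smul_sub]
    rw [hD, degree_smul_eq hlam]
    have hgd : g.degree = (g.natDegree : ℕ) := degree_eq_natDegree hg
    rw [hgd]
    rw [degree_lt_iff_coeff_zero]
    intro i hi
    apply tay_coeff_high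
    refine hwdeg.trans ?_
    rw [hgd]
    exact_mod_cast hi
  rw [degree_add_eq_left_of_degree_lt]
  · exact degree_smul_eq hσ g
  · rw [degree_smul_eq hσ g]; exact hDdeg

private lemma rho_dvd (h : ℂ) (hh : h ≠ 0) (lam : ℂ) (hlam : lam ≠ 0) (q : ℂ[X]) (m : ℕ)
    (hq : q.degree = (m : ℕ)) (ρ : ℂ[X]) (hρ : ρ ≠ 0)
    (hker : (Polynomial.aeval (lam • (taylor h : ℂ[X] →ₗ[ℂ] ℂ[X])) ρ) q = 0) :
    (X - C lam) ^ (m + 1) ∣ ρ := by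
  set T : Module.End ℂ ℂ[X] := lam • (taylor h : ℂ[X] →ₗ[ℂ] ℂ[X]) with hT
  obtain ⟨σ, hfac, hndvd⟩ := ρ.exists_eq_pow_rootMultiplicity_mul_and_not_dvd hρ lam
  have hσ : σ.eval lam ≠ 0 := fun hev => hndvd (dvd_iff_isRoot.mpr hev)
  set s := ρ.rootMultiplicity lam with hs
  by_cases hsm : m + 1 ≤ s
  · exact dvd_trans (pow_dvd_pow _ hsm) (pow_rootMultiplicity_dvd ρ lam)
  exfalso
  push_neg at hsm
  have h1 : (Polynomial.aeval T ρ) q =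
      ((T - algebraMap ℂ (Module.End ℂ ℂ[X]) lam) ^ s) ((Polynomial.aeval T σ) q) := by
    conv_lhs => rw [hfac]
    simp only [map_mul, map_pow, map_sub, aeval_X, aeval_C, Module.End.mul_apply]
  have h2 : ((Polynomial.aeval T σ) q).degree = ((s + (m - s) : ℕ) : WithBot ℕ) := by
    rw [sigma_degree lam h hlam σ hσ q, hq]
    congr 1
    omega
  have h3 := Dpow_degree lam h hlam hh s (m - s) _ h2
  rw [← h1, hker, degree_zero] at h3
  exact absurd h3 (by simp)
private lemma iterate_derivative_degree_le (q : ℂ[X]) :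
    ∀ m : ℕ, (Polynomial.derivative^[m] q).degree ≤ q.degree := by
  intro m
  induction m with
  | zero => simp
  | succ m ih =>
    rw [Function.iterate_succ_apply']
    exact (degree_derivative_le).trans ih

private lemma exists_antideriv (cc : ℂ) (hc : cc ≠ 0) (q : ℂ[X]) :
    ∃ w : ℂ[X], w.degree ≤ q.degree ∧ Polynomial.derivative w + C cc * w = q := by
  classical
  set N := q.natDegree with hN
  set a : ℕ → ℂ[X] := fun m => ((-1 : ℂ) ^ m * cc⁻¹ ^ m) • Polynomial.derivative^[m] q with ha
  set b : ℕ → ℂ[X] := fun m => ((-1 : ℂ) ^ m * cc⁻¹ ^ (m + 1)) • Polynomial.derivative^[m] q with hb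
  refine ⟨∑ m ∈ Finset.range (N + 1), b m, ?_, ?_⟩
  · refine (degree_sum_le _ _).trans ?_
    apply Finset.sup_le
    intro m _
    exact (degree_smul_le _ _).trans (iterate_derivative_degree_le q m)
  · have hder : ∀ m, Polynomial.derivative (b m) = -(a (m + 1)) := by
      intro m
      simp only [hb, ha]
      simp only [derivative_smul, Function.iterate_succ_apply']
      rw [← neg_smul]
      congr 1
      rw [pow_succ]
      ring
    have hmul : ∀ m, C cc * b m = a m := by
      intro m
      simp only [hb, ha]
      rw [smul_eq_C_mul, smul_eq_C_mul, ← mul_assoc, ← C_mul]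
      congr 2
      rw [pow_succ]
      field_simp
    rw [map_sum, Finset.mul_sum]
    have : (∑ m ∈ Finset.range (N + 1), Polynomial.derivative (b m)) +
        (∑ m ∈ Finset.range (N + 1), C cc * b m) =
        ∑ m ∈ Finset.range (N + 1), (a m - a (m + 1)) := by
      rw [← Finset.sum_add_distrib]
      apply Finset.sum_congr rfl
      intro m _
      rw [hder, hmul]
      ring
    rw [this, Finset.sum_range_sub']
    have ha0 : a 0 = q := by simp [ha]
    have haN : a (N + 1) = 0 := by
      rw [ha]
      have : Polynomial.derivative^[N + 1] q = 0 :=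
        Polynomial.iterate_derivative_eq_zero (by omega)
      simp [this]
    rw [ha0, haN, sub_zero]
private lemma tendsto_abs_pow_mul_exp {a : ℝ} (ha : a < 0) (i : ℕ) :
    Filter.Tendsto (fun t : ℝ => |t| ^ i * Real.exp (a * t)) Filter.atTop (nhds 0) := by
  have hna : 0 < -a := by linarith
  have h1 : Filter.Tendsto (fun t : ℝ => -a * t) Filter.atTop Filter.atTop :=
    Filter.Tendsto.const_mul_atTop hna Filter.tendsto_id
  have h2 := (Real.tendsto_pow_mul_exp_neg_atTop_nhds_zero i).comp h1
  have h3 := h2.const_mul (((-a)⁻¹) ^ i)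
  rw [mul_zero] at h3
  apply h3.congr'
  filter_upwards [Filter.eventually_ge_atTop (0 : ℝ)] with t ht
  simp only [Function.comp_apply]
  have h4 : -(-a * t) = a * t := by ring
  rw [abs_of_nonneg ht, h4]
  rw [mul_pow, ← mul_assoc, ← mul_assoc, ← mul_pow, inv_mul_cancel₀ (ne_of_gt hna), one_pow, one_mul]

private lemma tendsto_norm_eval_mul_exp (q : ℂ[X]) {a : ℝ} (ha : a < 0) :
    Filter.Tendsto (fun t : ℝ => ‖q.eval (t : ℂ)‖ * Real.exp (a * t)) Filter.atTop (nhds 0) := by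
  have hbd : ∀ t : ℝ, ‖q.eval (t : ℂ)‖ * Real.exp (a * t) ≤
      ∑ i ∈ Finset.range (q.natDegree + 1), ‖q.coeff i‖ * (|t| ^ i * Real.exp (a * t)) := by
    intro t
    have h1 : ‖q.eval (t : ℂ)‖ ≤ ∑ i ∈ Finset.range (q.natDegree + 1), ‖q.coeff i‖ * |t| ^ i := by
      rw [eval_eq_sum_range]
      refine (norm_sum_le _ _).trans ?_
      apply Finset.sum_le_sum
      intro i _
      rw [norm_mul, norm_pow, Complex.norm_real, Real.norm_eq_abs]
    calc ‖q.eval (t : ℂ)‖ * Real.exp (a * t)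
        ≤ (∑ i ∈ Finset.range (q.natDegree + 1), ‖q.coeff i‖ * |t| ^ i) * Real.exp (a * t) :=
          mul_le_mul_of_nonneg_right h1 (Real.exp_nonneg _)
      _ = ∑ i ∈ Finset.range (q.natDegree + 1), ‖q.coeff i‖ * (|t| ^ i * Real.exp (a * t)) := by
          rw [Finset.sum_mul]; apply Finset.sum_congr rfl; intros; ring
  have htend : Filter.Tendsto
      (fun t : ℝ => ∑ i ∈ Finset.range (q.natDegree + 1), ‖q.coeff i‖ * (|t| ^ i * Real.exp (a * t)))
      Filter.atTop (nhds 0) := by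
    have := tendsto_finset_sum (Finset.range (q.natDegree + 1))
      (fun i _ => ((tendsto_abs_pow_mul_exp ha i).const_mul ‖q.coeff i‖))
    simpa using this
  exact squeeze_zero (fun t => mul_nonneg (norm_nonneg _) (Real.exp_nonneg _)) hbd htend

private lemma norm_eval_mul_cexp (q : ℂ[X]) (cc : ℂ) (t : ℝ) :
    ‖q.eval (t : ℂ) * Complex.exp (cc * t)‖ = ‖q.eval (t : ℂ)‖ * Real.exp (cc.re * t) := by
  rw [norm_mul]
  congr 1
  rw [Complex.norm_exp]
  congr 1
  simp [Complex.mul_re]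

private lemma tendsto_eval_mul_cexp (q : ℂ[X]) {cc : ℂ} (ha : cc.re < 0) :
    Filter.Tendsto (fun t : ℝ => q.eval (t : ℂ) * Complex.exp (cc * t)) Filter.atTop (nhds 0) := by
  rw [tendsto_zero_iff_norm_tendsto_zero]
  exact (tendsto_norm_eval_mul_exp q ha).congr (fun t => (norm_eval_mul_cexp q cc t).symm)

private lemma continuous_eval_mul_cexp (q : ℂ[X]) (cc : ℂ) :
    Continuous (fun t : ℝ => q.eval (t : ℂ) * Complex.exp (cc * t)) := by
  apply Continuous.mul
  · exact q.continuous.comp Complex.continuous_ofReal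
  · exact Complex.continuous_exp.comp ((continuous_const.mul Complex.continuous_ofReal))

private lemma integrableOn_eval_mul_cexp (q : ℂ[X]) {cc : ℂ} (ha : cc.re < 0) (x : ℝ) :
    MeasureTheory.IntegrableOn (fun t : ℝ => q.eval (t : ℂ) * Complex.exp (cc * t))
      (Set.Ioi x) := by
  set a := cc.re with haa
  set ψ : ℝ → ℝ := fun t => ‖q.eval (t : ℂ)‖ * Real.exp (a / 2 * t) with hψ
  have hψcont : Continuous ψ :=
    (q.continuous.comp Complex.continuous_ofReal).norm.mul
      (Real.continuous_exp.comp (continuous_const.mul continuous_id))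
  have hψtend : Filter.Tendsto ψ Filter.atTop (nhds 0) :=
    tendsto_norm_eval_mul_exp q (by linarith)
  obtain ⟨T, hT⟩ := (Filter.eventually_atTop).mp (hψtend.eventually_lt_const one_pos)
  obtain ⟨B, hB⟩ := (isCompact_Icc (a := x) (b := max x T)).exists_bound_of_continuousOn
    hψcont.continuousOn
  have hglob : ∀ t ∈ Set.Ici x, ψ t ≤ max B 1 := by
    intro t ht
    by_cases hcase : t ≤ max x T
    · exact le_trans (le_trans (le_abs_self _) (hB t ⟨ht, hcase⟩)) (le_max_left _ _)
    · push_neg at hcase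
      have : ψ t < 1 := hT t (le_of_lt (lt_of_le_of_lt (le_max_right x T) hcase))
      exact le_trans this.le (le_max_right _ _)
  have hgint : MeasureTheory.IntegrableOn (fun t : ℝ => max B 1 * Real.exp (a / 2 * t))
      (Set.Ioi x) := by
    have h0 := exp_neg_integrableOn_Ioi x (b := -(a / 2)) (by linarith)
    have h1 : MeasureTheory.IntegrableOn (fun t : ℝ => Real.exp (a / 2 * t)) (Set.Ioi x) := by
      simpa [neg_neg] using h0
    exact h1.const_mul _
  refine hgint.mono' ((continuous_eval_mul_cexp q cc).aestronglyMeasurable) ?_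
  rw [MeasureTheory.ae_restrict_iff' measurableSet_Ioi]
  filter_upwards with t ht
  rw [norm_eval_mul_cexp]
  have hexp : Real.exp (a * t) = Real.exp (a / 2 * t) * Real.exp (a / 2 * t) := by
    rw [← Real.exp_add]; ring_nf
  calc ‖q.eval (t : ℂ)‖ * Real.exp (a * t) = ψ t * Real.exp (a / 2 * t) := by
        rw [hψ, hexp]; ring
    _ ≤ max B 1 * Real.exp (a / 2 * t) :=
        mul_le_mul_of_nonneg_right (hglob t (Set.mem_Ici.mpr (le_of_lt ht))) (Real.exp_nonneg _)

private lemma hasDerivAt_eval_mul_cexp (q : ℂ[X]) (cc : ℂ) (t : ℝ) :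
    HasDerivAt (fun s : ℝ => q.eval (s : ℂ) * Complex.exp (cc * s))
      (((Polynomial.derivative q).eval (t : ℂ) + cc * q.eval (t : ℂ)) * Complex.exp (cc * t)) t := by
  have h1 : HasDerivAt (fun z : ℂ => q.eval z * Complex.exp (cc * z))
      ((Polynomial.derivative q).eval (t : ℂ) * Complex.exp (cc * t) +
        q.eval (t : ℂ) * (Complex.exp (cc * t) * cc)) (t : ℂ) := by
    have hq := q.hasDerivAt (t : ℂ)
    have he : HasDerivAt (fun z : ℂ => Complex.exp (cc * z)) (Complex.exp (cc * t) * cc) (t : ℂ) := by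
      have := ((hasDerivAt_id (t : ℂ)).const_mul cc).cexp
      simpa using this
    exact hq.mul he
  have h2 := h1.comp_ofReal
  convert h2 using 1
  ring
theorem stmt_13 (r : ℕ) (hr : 1 ≤ r) (c : Fin r → ℂ) (hc : Function.Injective c)
    (hre : ∀ k, (c k).re < 0) (p : Fin r → Polynomial ℂ) (μ : Fin r → ℕ)
    (hdeg : ∀ k, (p k).degree = (μ k : WithBot ℕ))
    (n : ℕ) (hn : n = ∑ k, (μ k + 1))
    (f : ℝ → ℂ) (hfdef : ∀ t : ℝ, f t = ∑ k, (p k).eval (t : ℂ) * Complex.exp (c k * t))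
    (h : ℝ) (hh : 0 < h)
    (hexp : Function.Injective fun k => Complex.exp (c k * h)) :
    ∃ α : Fin n → ℂ, ∀ x : ℝ,
      (∫ t in Set.Ioi x, f t) = ∑ k : Fin n, α k * f (x + (k : ℕ) * h) := by
  classical
  have hch : (h : ℂ) ≠ 0 := by
    simp only [ne_eq, Complex.ofReal_eq_zero]
    exact ne_of_gt hh
  have hcne : ∀ k, c k ≠ 0 := by
    intro k hk
    have := hre k
    rw [hk] at this
    simp at this
  set lam : Fin r → ℂ := fun k => Complex.exp (c k * (h : ℂ)) with hlamdef
  have hlamne : ∀ k, lam k ≠ 0 := fun k => Complex.exp_ne_zero _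
  set T : Fin r → Module.End ℂ (Polynomial ℂ) :=
    fun k => lam k • (Polynomial.taylor (h : ℂ) : Polynomial ℂ →ₗ[ℂ] Polynomial ℂ) with hTdef
  set b : Fin n → Fin r → Polynomial ℂ := fun j k => ((T k) ^ (j : ℕ)) (p k) with hbdef
  have hbval : ∀ (j : Fin n) (k : Fin r),
      b j k = lam k ^ (j : ℕ) • (Polynomial.taylor (((j : ℕ) : ℂ) * (h : ℂ))) (p k) :=
    fun j k => Tpow_apply _ _ _ _
  have hbdeg : ∀ (j : Fin n) (k : Fin r), (b j k).degree < ((μ k + 1 : ℕ) : WithBot ℕ) := by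
    intro j k
    rw [hbval]
    refine lt_of_le_of_lt ((degree_smul_le _ _).trans (le_of_eq (degree_taylor' _ _))) ?_
    rw [hdeg k]
    exact_mod_cast Nat.lt_succ_self (μ k)
  -- the linear map S
  set S0 : Fin r → ((Fin n → ℂ) →ₗ[ℂ] Polynomial ℂ) :=
    fun k => ∑ j : Fin n, (LinearMap.proj j : (Fin n → ℂ) →ₗ[ℂ] ℂ).smulRight (b j k) with hS0def
  have hS0app : ∀ k α, S0 k α = ∑ j : Fin n, α j • b j k := by
    intro k α
    rw [hS0def]
    simp
  have hS0mem : ∀ k (α : Fin n → ℂ), S0 k α ∈ Polynomial.degreeLT ℂ (μ k + 1) := by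
    intro k α
    rw [Polynomial.mem_degreeLT, hS0app]
    refine lt_of_le_of_lt (Polynomial.degree_sum_le _ _) ?_
    rw [Finset.sup_lt_iff (WithBot.bot_lt_coe _)]
    intro j _
    exact lt_of_le_of_lt (Polynomial.degree_smul_le _ _) (by exact_mod_cast hbdeg j k)
  set S : (Fin n → ℂ) →ₗ[ℂ] ((k : Fin r) → Polynomial.degreeLT ℂ (μ k + 1)) :=
    LinearMap.pi (fun k => (S0 k).codRestrict (Polynomial.degreeLT ℂ (μ k + 1)) (hS0mem k))
      with hSdef
  have hSapp : ∀ α k, ((S α) k : Polynomial ℂ) = ∑ j : Fin n, α j • b j k := by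
    intro α k
    rw [hSdef]
    rw [LinearMap.pi_apply, LinearMap.codRestrict_apply, hS0app]
  -- injectivity
  have hSinj : Function.Injective S := by
    rw [← LinearMap.ker_eq_bot, LinearMap.ker_eq_bot']
    intro α hα
    have hcomp : ∀ k, ∑ j : Fin n, α j • b j k = 0 := by
      intro k
      have h2 : ((S α) k : Polynomial ℂ) = 0 := by rw [congrFun hα k]; rfl
      rw [hSapp] at h2
      exact h2
    set ρ : Polynomial ℂ := ∑ j : Fin n, Polynomial.C (α j) * Polynomial.X ^ (j : ℕ) with hρdef
    have hρcoeff : ∀ j : Fin n, ρ.coeff (j : ℕ) = α j := by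
      intro j
      rw [hρdef, Polynomial.finset_sum_coeff]
      rw [Finset.sum_eq_single j]
      · simp
      · intro j' _ hne
        rw [Polynomial.coeff_C_mul, Polynomial.coeff_X_pow,
          if_neg (fun hv => hne (Fin.ext hv.symm)), mul_zero]
      · intro hj; exact absurd (Finset.mem_univ j) hj
    have hρdeg : ρ.degree < (n : ℕ) := by
      rw [hρdef]
      refine lt_of_le_of_lt (Polynomial.degree_sum_le _ _) ?_
      rw [Finset.sup_lt_iff (WithBot.bot_lt_coe _)]
      intro j _
      exact lt_of_le_of_lt (Polynomial.degree_C_mul_X_pow_le _ _) (by exact_mod_cast j.isLt)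
    by_cases hρ0 : ρ = 0
    · funext j
      have hz : α j = 0 := by rw [← hρcoeff j, hρ0, Polynomial.coeff_zero]
      simpa using hz
    exfalso
    have hkerk : ∀ k, (Polynomial.aeval (T k) ρ) (p k) = 0 := by
      intro k
      rw [hρdef, map_sum]
      calc ((∑ j : Fin n,
            (Polynomial.aeval (T k)) (Polynomial.C (α j) * Polynomial.X ^ (j : ℕ))) (p k))
          = ∑ j : Fin n, α j • b j k := by
            rw [LinearMap.sum_apply]
            apply Finset.sum_congr rfl
            intro j _
            simp only [map_mul, map_pow, Polynomial.aeval_C, Polynomial.aeval_X,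
              Module.End.mul_apply, Module.algebraMap_end_apply, hbdef]
        _ = 0 := hcomp k
    have hdvd : ∀ k, (Polynomial.X - Polynomial.C (lam k)) ^ (μ k + 1) ∣ ρ := by
      intro k
      exact rho_dvd (h : ℂ) hch (lam k) (hlamne k) (p k) (μ k) (hdeg k) ρ hρ0 (hkerk k)
    have hP : (∏ k : Fin r, (Polynomial.X - Polynomial.C (lam k)) ^ (μ k + 1)) ∣ ρ := by
      apply Finset.prod_dvd_of_coprime
      · intro a _ b' hb' hab
        exact (Polynomial.pairwise_coprime_X_sub_C hexp hab).pow
      · exact fun k _ => hdvd k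
    have hPdeg : (∏ k : Fin r, (Polynomial.X - Polynomial.C (lam k)) ^ (μ k + 1)).degree
        = ((∑ k, (μ k + 1) : ℕ) : WithBot ℕ) := by
      rw [Polynomial.degree_prod]
      have h1 : ∀ k : Fin r, ((Polynomial.X - Polynomial.C (lam k)) ^ (μ k + 1)).degree
          = ((μ k + 1 : ℕ) : WithBot ℕ) := by
        intro k
        rw [Polynomial.degree_pow, Polynomial.degree_X_sub_C]
        simp
      rw [Finset.sum_congr rfl (fun k _ => h1 k)]
      exact (Nat.cast_sum _ _).symm
    have hle := Polynomial.degree_le_of_dvd hP hρ0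
    rw [hPdeg, ← hn] at hle
    exact absurd (lt_of_le_of_lt hle hρdeg) (lt_irrefl _)
  -- surjectivity
  haveI hfin : ∀ k : Fin r, Module.Finite ℂ (Polynomial.degreeLT ℂ (μ k + 1)) :=
    fun k => Module.Finite.equiv (Polynomial.degreeLTEquiv ℂ (μ k + 1)).symm
  have hfr : Module.finrank ℂ (Fin n → ℂ) =
      Module.finrank ℂ ((k : Fin r) → Polynomial.degreeLT ℂ (μ k + 1)) := by
    rw [Module.finrank_pi, Module.finrank_pi_fintype, Fintype.card_fin, hn]
    apply Finset.sum_congr rfl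
    intro k _
    rw [(Polynomial.degreeLTEquiv ℂ (μ k + 1)).finrank_eq, Module.finrank_pi, Fintype.card_fin]
  have hSsurj : Function.Surjective S :=
    (LinearMap.injective_iff_surjective_of_finrank_eq_finrank hfr).mp hSinj
  -- antiderivatives
  choose qa hqadeg hqaeq using fun k => exists_antideriv (c k) (hcne k) (p k)
  have hwmem : ∀ k, -(qa k) ∈ Polynomial.degreeLT ℂ (μ k + 1) := by
    intro k
    rw [Polynomial.mem_degreeLT, Polynomial.degree_neg]
    refine lt_of_le_of_lt ((hqadeg k).trans (le_of_eq (hdeg k))) ?_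
    exact_mod_cast Nat.lt_succ_self (μ k)
  obtain ⟨α, hα⟩ := hSsurj (fun k => ⟨-(qa k), hwmem k⟩)
  have hαk : ∀ k, ∑ j : Fin n, α j • b j k = -(qa k) := by
    intro k
    have h1 := congrArg Subtype.val (congrFun hα k)
    rw [hSapp] at h1
    exact h1
  refine ⟨α, ?_⟩
  intro x
  have hfint : MeasureTheory.IntegrableOn f (Set.Ioi x) := by
    have hfe : f = fun t : ℝ => ∑ k : Fin r, (p k).eval (t : ℂ) * Complex.exp (c k * t) :=
      funext hfdef
    rw [hfe]
    apply MeasureTheory.integrable_finset_sum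
    intro k _
    exact integrableOn_eval_mul_cexp (p k) (hre k) x
  have hGderiv : ∀ t : ℝ, HasDerivAt
      (fun s : ℝ => ∑ k : Fin r, (qa k).eval (s : ℂ) * Complex.exp (c k * s)) (f t) t := by
    intro t
    rw [hfdef t]
    apply HasDerivAt.fun_sum
    intro k _
    have h1 := hasDerivAt_eval_mul_cexp (qa k) (c k) t
    have h2 : (Polynomial.derivative (qa k)).eval (t : ℂ) + c k * (qa k).eval (t : ℂ)
        = (p k).eval (t : ℂ) := by
      have h3 := congrArg (Polynomial.eval (t : ℂ)) (hqaeq k)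
      simpa using h3
    rw [h2] at h1
    exact h1
  have hGtend : Filter.Tendsto
      (fun s : ℝ => ∑ k : Fin r, (qa k).eval (s : ℂ) * Complex.exp (c k * s))
      Filter.atTop (nhds 0) := by
    have h1 := tendsto_finset_sum (Finset.univ : Finset (Fin r))
      (fun k (_ : k ∈ Finset.univ) => tendsto_eval_mul_cexp (qa k) (hre k))
    simpa using h1
  have hint : (∫ t in Set.Ioi x, f t)
      = 0 - ∑ k : Fin r, (qa k).eval (x : ℂ) * Complex.exp (c k * x) :=
    MeasureTheory.integral_Ioi_of_hasDerivAt_of_tendsto' (fun t _ => hGderiv t) hfint hGtend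
  rw [hint, zero_sub]
  have hbev : ∀ (j : Fin n) (k : Fin r), (b j k).eval (x : ℂ) * Complex.exp (c k * x)
      = (p k).eval ((x + (j : ℕ) * h : ℝ) : ℂ)
        * Complex.exp (c k * ((x + (j : ℕ) * h : ℝ) : ℂ)) := by
    intro j k
    rw [hbval j k, Polynomial.smul_eq_C_mul, Polynomial.eval_mul, Polynomial.eval_C,
      Polynomial.taylor_eval]
    have hcast : ((x + (j : ℕ) * h : ℝ) : ℂ) = (x : ℂ) + ((j : ℕ) : ℂ) * (h : ℂ) := by
      push_cast; ring
    rw [hcast]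
    have hlp : lam k ^ (j : ℕ) * Complex.exp (c k * (x : ℂ))
        = Complex.exp (c k * ((x : ℂ) + ((j : ℕ) : ℂ) * (h : ℂ))) := by
      rw [hlamdef]
      rw [← Complex.exp_nat_mul, ← Complex.exp_add]
      congr 1
      ring
    rw [mul_comm (lam k ^ (j : ℕ)) ((p k).eval ((x : ℂ) + ((j : ℕ) : ℂ) * (h : ℂ))), mul_assoc,
      hlp]
  calc -∑ k : Fin r, (qa k).eval (x : ℂ) * Complex.exp (c k * x)
      = ∑ k : Fin r, (∑ j : Fin n, α j • b j k).eval (x : ℂ) * Complex.exp (c k * x) := by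
        rw [← Finset.sum_neg_distrib]
        apply Finset.sum_congr rfl
        intro k _
        rw [hαk k, Polynomial.eval_neg, neg_mul]
    _ = ∑ k : Fin r, ∑ j : Fin n,
          α j * ((b j k).eval (x : ℂ) * Complex.exp (c k * x)) := by
        apply Finset.sum_congr rfl
        intro k _
        rw [Polynomial.eval_finset_sum, Finset.sum_mul]
        apply Finset.sum_congr rfl
        intro j _
        rw [Polynomial.smul_eq_C_mul, Polynomial.eval_mul, Polynomial.eval_C, mul_assoc]
    _ = ∑ j : Fin n, ∑ k : Fin r,
          α j * ((b j k).eval (x : ℂ) * Complex.exp (c k * x)) := Finset.sum_comm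
    _ = ∑ j : Fin n, α j * f (x + (j : ℕ) * h) := by
        apply Finset.sum_congr rfl
        intro j _
        rw [← Finset.mul_sum]
        congr 1
        rw [hfdef]
        apply Finset.sum_congr rfl
        intro k _
        exact hbev j k
end

section
/- Let r ≥ 1, let c_1, …, c_r be distinct complex numbers with Re c_k < 0, let p_1, …, p_r be complex polynomials with deg p_k = μ_k exactly, set n = Σ_{k=1}^r (μ_k + 1) and f(x) = Σ_{k=1}^r p_k(x) e^{c_k x}, and let h > 0 be such that e^{c_1 h}, …, e^{c_r h} are pairwise distinct. Fix reals a and x, and let F(y) = ∫_a^y f(t) dt. If the (n+1)×(n+1) determinant D with first row (1, 1, …, 1) and (m+1)-th row (f(x+(m−1)h), …, f(x+(m+n−1)h)) for 1 ≤ m ≤ n is nonzero, then G_n(x;h) = ∫_a^∞ f(t) dt, where G_n(x;h) = N/D and N is obtained from D by replacing its first row by (F(x), F(x+h), …, F(x+nh)). -/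
open MeasureTheory

/-- `DmatC f x h n` : the `(n+1)×(n+1)` complex matrix whose first row is `(1,…,1)`
and whose `(m+1)`-th row, for `1 ≤ m ≤ n`, is
`(f (x+(m-1)h), f (x+mh), …, f (x+(m+n-1)h))`. -/
noncomputable def DmatC (f : ℝ → ℂ) (x h : ℝ) (n : ℕ) : Matrix (Fin (n + 1)) (Fin (n + 1)) ℂ :=
  Matrix.of fun m k =>
    if (m : ℕ) = 0 then 1 else f (x + (((m : ℕ) - 1 + (k : ℕ) : ℕ) : ℝ) * h)

/-- `NmatC f F x h n` : the matrix obtained from `DmatC f x h n` by replacing its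
first row by `(F x, F (x+h), …, F (x+nh))`. -/
noncomputable def NmatC (f F : ℝ → ℂ) (x h : ℝ) (n : ℕ) : Matrix (Fin (n + 1)) (Fin (n + 1)) ℂ :=
  Matrix.of fun m k =>
    if (m : ℕ) = 0 then F (x + ((k : ℕ) : ℝ) * h)
    else f (x + (((m : ℕ) - 1 + (k : ℕ) : ℕ) : ℝ) * h)


open Polynomial Filter Topology Set
open Polynomial Filter Topology MeasureTheory

noncomputable def Tder (Q : Polynomial ℂ) : Polynomial ℂ := X * Q.derivative

lemma Tder_coeff (Q : Polynomial ℂ) (j : ℕ) : (Tder Q).coeff j = j * Q.coeff j := by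
  cases j with
  | zero => simp [Tder]
  | succ j => rw [Tder, coeff_X_mul, coeff_derivative]; push_cast; ring

lemma Tder_iter_coeff (i : ℕ) (Q : Polynomial ℂ) (j : ℕ) :
    (Tder^[i] Q).coeff j = (j : ℂ) ^ i * Q.coeff j := by
  induction i generalizing Q with
  | zero => simp
  | succ i ih => rw [Function.iterate_succ_apply, ih, Tder_coeff]; ring

lemma Tder_iter_natDegree (i : ℕ) (Q : Polynomial ℂ) : (Tder^[i] Q).natDegree ≤ Q.natDegree := by
  refine natDegree_le_iff_coeff_eq_zero.2 fun j hj => ?_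
  rw [Tder_iter_coeff, coeff_eq_zero_of_natDegree_lt hj, mul_zero]

lemma Tder_dvd {lam : ℂ} {m : ℕ} {Q : Polynomial ℂ} (hd : (X - C lam) ^ (m + 1) ∣ Q) :
    (X - C lam) ^ m ∣ Tder Q := by
  obtain ⟨R, rfl⟩ := hd
  rw [Tder, derivative_mul, derivative_pow, derivative_X_sub_C, mul_one, Nat.add_sub_cancel]
  refine Dvd.dvd.mul_left (dvd_add ?_ ?_) X
  · exact ((dvd_mul_left _ _).mul_right R)
  · exact (pow_dvd_pow _ (Nat.le_succ m)).mul_right _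

lemma Tder_iter_dvd (lam : ℂ) : ∀ (i m : ℕ) (Q : Polynomial ℂ),
    (X - C lam) ^ (m + i) ∣ Q → (X - C lam) ^ m ∣ Tder^[i] Q := by
  intro i
  induction i with
  | zero => intro m Q hq; simpa using hq
  | succ i ih =>
    intro m Q hq
    rw [Function.iterate_succ_apply]
    refine ih m (Tder Q) (Tder_dvd ?_)
    rwa [← Nat.add_assoc] at hq

lemma key_vanish (lam : ℂ) (mu : ℕ) (P : Polynomial ℂ) (hdvd : (X - C lam) ^ (mu + 1) ∣ P)
    {i : ℕ} (hi : i ≤ mu) {N : ℕ} (hN : P.natDegree < N) :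
    ∑ j ∈ Finset.range N, P.coeff j * (j : ℂ) ^ i * lam ^ j = 0 := by
  have h1 : (X - C lam) ^ 1 ∣ Tder^[i] P := by
    refine Tder_iter_dvd lam i 1 P (dvd_trans (pow_dvd_pow _ ?_) hdvd)
    omega
  have h2 : (Tder^[i] P).eval lam = 0 := by
    obtain ⟨R, hR⟩ := h1
    rw [hR]; simp
  rw [eval_eq_sum_range' (lt_of_le_of_lt (Tder_iter_natDegree i P) hN)] at h2
  rw [← h2]
  refine Finset.sum_congr rfl fun j _ => ?_
  rw [Tder_iter_coeff]; ring
open Polynomial Filter Topology MeasureTheory Set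

lemma norm_eval_le (p : Polynomial ℂ) : ∃ Q : Polynomial ℝ, ∀ t : ℝ, 0 ≤ t →
    ‖p.eval (t : ℂ)‖ ≤ Q.eval t := by
  refine ⟨∑ i ∈ Finset.range (p.natDegree + 1), C ‖p.coeff i‖ * X ^ i, fun t ht => ?_⟩
  rw [eval_eq_sum_range]
  refine (norm_sum_le _ _).trans ?_
  rw [eval_finset_sum]
  refine Finset.sum_le_sum fun i _ => ?_
  rw [norm_mul, norm_pow, Complex.norm_real, Real.norm_of_nonneg ht, eval_mul, eval_pow,
    eval_C, eval_X]

lemma poly_mul_exp_tendsto (Q : Polynomial ℝ) {e : ℝ} (he : 0 < e) :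
    Tendsto (fun t => Q.eval t * Real.exp (-e * t)) atTop (𝓝 0) := by
  have h1 := (Q.comp (Polynomial.C e⁻¹ * X)).tendsto_div_exp_atTop
  have h2 : Tendsto (fun t : ℝ => e * t) atTop atTop :=
    Tendsto.const_mul_atTop he tendsto_id
  refine (h1.comp h2).congr fun t => ?_
  simp only [Function.comp_apply, eval_comp, eval_mul, eval_C, eval_X]
  rw [inv_mul_cancel_left₀ he.ne', div_eq_mul_inv, ← Real.exp_neg, neg_mul]

lemma term_integrableOn (p : Polynomial ℂ) (c : ℂ) (hc : c.re < 0) (b : ℝ) :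
    IntegrableOn (fun t : ℝ => p.eval (t : ℂ) * Complex.exp (c * t)) (Ioi b) := by
  obtain ⟨Q, hQ⟩ := norm_eval_le p
  set d := c.re with hd
  have hnorm : ∀ t : ℝ, ‖p.eval (t : ℂ) * Complex.exp (c * t)‖
      = ‖p.eval (t : ℂ)‖ * Real.exp (d * t) := by
    intro t
    rw [norm_mul, Complex.norm_exp]
    congr 2
    simp [Complex.mul_re, ← hd]
  have htend : Tendsto (fun t => Q.eval t * Real.exp ((d / 2) * t)) atTop (𝓝 0) := by
    have := poly_mul_exp_tendsto Q (e := -(d / 2)) (by linarith)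
    simpa using this
  have hO : (fun t : ℝ => ‖p.eval (t : ℂ)‖ * Real.exp (d * t)) =O[atTop]
      fun t => Real.exp (-(-(d / 2)) * t) := by
    rw [Asymptotics.isBigO_iff]
    refine ⟨1, ?_⟩
    filter_upwards [htend.eventually_le_const one_pos, eventually_ge_atTop 0] with t h1 h2
    have hQt := hQ t h2
    have hepos : (0:ℝ) < Real.exp ((d/2) * t) := Real.exp_pos _
    have : ‖p.eval (t : ℂ)‖ * Real.exp ((d/2) * t) ≤ 1 := by
      refine le_trans ?_ h1
      exact mul_le_mul_of_nonneg_right hQt hepos.le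
    have hdd : d * t = (d/2) * t + (d/2) * t := by ring
    rw [Real.norm_of_nonneg (by positivity), Real.norm_of_nonneg (Real.exp_pos _).le,
      hdd, Real.exp_add, ← mul_assoc, neg_neg]
    exact mul_le_mul_of_nonneg_right this hepos.le
  have hGint : IntegrableOn (fun t : ℝ => ‖p.eval (t : ℂ)‖ * Real.exp (d * t)) (Ioi b) := by
    refine integrable_of_isBigO_exp_neg (by linarith : (0:ℝ) < -(d/2)) ?_ hO
    exact ((p.continuous_aeval.comp Complex.continuous_ofReal).norm.mul
      (Real.continuous_exp.comp (continuous_const.mul continuous_id))).continuousOn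
  have hcont : Continuous fun t : ℝ => p.eval (t : ℂ) * Complex.exp (c * t) :=
    (p.continuous_aeval.comp Complex.continuous_ofReal).mul
      (Complex.continuous_exp.comp (continuous_const.mul Complex.continuous_ofReal))
  refine hGint.integrable.mono' hcont.aestronglyMeasurable ?_
  filter_upwards with t
  rw [hnorm]
open Polynomial Filter Topology MeasureTheory Set

lemma split_Ioi {f : ℝ → ℂ} (hint : ∀ b : ℝ, IntegrableOn f (Ioi b)) (a y : ℝ) :
    (∫ t in Ioi a, f t) = (∫ t in a..y, f t) + ∫ t in Ioi y, f t := by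
  rcases le_total a y with hay | hya
  · rw [intervalIntegral.integral_of_le hay, ← MeasureTheory.setIntegral_union
      (Set.Ioc_disjoint_Ioi le_rfl) measurableSet_Ioi
      ((hint a).mono_set Set.Ioc_subset_Ioi_self) (hint y),
      Set.Ioc_union_Ioi_eq_Ioi hay]
  · rw [intervalIntegral.integral_of_ge hya, ← Set.Ioc_union_Ioi_eq_Ioi hya,
      MeasureTheory.setIntegral_union (Set.Ioc_disjoint_Ioi le_rfl) measurableSet_Ioi
      ((hint y).mono_set Set.Ioc_subset_Ioi_self) (hint a)]
    ring
theorem stmt_14 (r : ℕ) (hr : 1 ≤ r) (c : Fin r → ℂ) (hc : Function.Injective c)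
    (hre : ∀ k, (c k).re < 0) (p : Fin r → Polynomial ℂ) (μ : Fin r → ℕ)
    (hdeg : ∀ k, (p k).degree = (μ k : WithBot ℕ))
    (n : ℕ) (hn : n = ∑ k, (μ k + 1))
    (f : ℝ → ℂ) (hfdef : ∀ t : ℝ, f t = ∑ k, (p k).eval (t : ℂ) * Complex.exp (c k * t))
    (h : ℝ) (hh : 0 < h)
    (hexp : Function.Injective fun k => Complex.exp (c k * h))
    (a x : ℝ) (F : ℝ → ℂ) (hF : ∀ y, F y = ∫ t in a..y, f t)
    (hD : (DmatC f x h n).det ≠ 0) :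
    (NmatC f F x h n).det / (DmatC f x h n).det = ∫ t in Set.Ioi a, f t := by
  classical
  -- basic facts about f
  have hfeq : f = fun t : ℝ => ∑ k, (p k).eval (t : ℂ) * Complex.exp (c k * t) := funext hfdef
  have hfc : Continuous f := by
    rw [hfeq]
    exact continuous_finset_sum _ fun k _ =>
      ((p k).continuous_aeval.comp Complex.continuous_ofReal).mul
        (Complex.continuous_exp.comp (continuous_const.mul Complex.continuous_ofReal))
  have hint : ∀ b : ℝ, IntegrableOn f (Ioi b) := by
    intro b
    rw [hfeq]
    exact MeasureTheory.integrable_finset_sum _ fun k _ => term_integrableOn (p k) (c k) (hre k) b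
  -- the characteristic polynomial
  set lam : Fin r → ℂ := fun k => Complex.exp (c k * h) with hlam
  set P : Polynomial ℂ := ∏ k, (X - C (lam k)) ^ (μ k + 1) with hP
  have hPmonic : P.Monic := monic_prod_of_monic _ _ fun k _ => (monic_X_sub_C _).pow _
  have hPdeg : P.natDegree = n := by
    rw [hP, natDegree_prod _ _ fun k _ => pow_ne_zero _ (X_sub_C_ne_zero _), hn]
    exact Finset.sum_congr rfl fun k _ => by rw [natDegree_pow, natDegree_X_sub_C, mul_one]
  -- the linear recurrence satisfied by f on arithmetic progressions
  have hrec : ∀ s : ℝ, ∑ j ∈ Finset.range (n + 1), P.coeff j * f (s + j * h) = 0 := by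
    intro s
    have hfj : ∀ j : ℕ, f (s + j * h) =
        ∑ k, ((p k).comp (C (s : ℂ) + C (h : ℂ) * X)).eval (j : ℂ)
          * Complex.exp (c k * s) * lam k ^ j := by
      intro j
      rw [hfdef]
      refine Finset.sum_congr rfl fun k _ => ?_
      rw [eval_comp]
      have h1 : ((s + (j : ℝ) * h : ℝ) : ℂ) = (C (s : ℂ) + C (h : ℂ) * X).eval (j : ℂ) := by
        simp only [eval_add, eval_mul, eval_C, eval_X]
        push_cast
        ring
      have h2 : Complex.exp (c k * ((s : ℝ) + (j : ℝ) * h : ℝ)) =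
          Complex.exp (c k * s) * lam k ^ j := by
        rw [← Complex.exp_nat_mul, ← Complex.exp_add]
        congr 1
        push_cast
        ring
      rw [h2, h1, mul_assoc]
    calc ∑ j ∈ Finset.range (n + 1), P.coeff j * f (s + j * h)
        = ∑ k, Complex.exp (c k * s) * ∑ j ∈ Finset.range (n + 1),
            P.coeff j * ((p k).comp (C (s : ℂ) + C (h : ℂ) * X)).eval (j : ℂ) * lam k ^ j := by
          rw [show (∑ j ∈ Finset.range (n + 1), P.coeff j * f (s + j * h)) =
              ∑ j ∈ Finset.range (n + 1), ∑ k, P.coeff j *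
                (((p k).comp (C (s : ℂ) + C (h : ℂ) * X)).eval (j : ℂ)
                  * Complex.exp (c k * s) * lam k ^ j) from
            Finset.sum_congr rfl fun j _ => by rw [hfj, Finset.mul_sum], Finset.sum_comm]
          refine Finset.sum_congr rfl fun k _ => ?_
          rw [Finset.mul_sum]
          exact Finset.sum_congr rfl fun j _ => by ring
      _ = 0 := by
          refine Finset.sum_eq_zero fun k _ => ?_
          set q : Polynomial ℂ := (p k).comp (C (s : ℂ) + C (h : ℂ) * X) with hq
          have hqd : q.natDegree ≤ μ k := by
            refine (natDegree_comp_le).trans ?_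
            have h1 : (C (s : ℂ) + C (h : ℂ) * X).natDegree ≤ 1 :=
              (natDegree_add_le _ _).trans
                (max_le (by simp) ((natDegree_C_mul_le _ _).trans (by simp)))
            calc (p k).natDegree * (C (s : ℂ) + C (h : ℂ) * X).natDegree
                ≤ (p k).natDegree * 1 := Nat.mul_le_mul_left _ h1
              _ = μ k := by rw [mul_one, natDegree_eq_of_degree_eq_some (hdeg k)]
          have hqe : ∀ j : ℕ, q.eval (j : ℂ) =
              ∑ i ∈ Finset.range (μ k + 1), q.coeff i * (j : ℂ) ^ i := fun j =>
            eval_eq_sum_range' (Nat.lt_succ_of_le hqd) _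
          have hdvd : (X - C (lam k)) ^ (μ k + 1) ∣ P :=
            Finset.dvd_prod_of_mem _ (Finset.mem_univ k)
          have : ∑ j ∈ Finset.range (n + 1), P.coeff j * q.eval (j : ℂ) * lam k ^ j = 0 := by
            calc ∑ j ∈ Finset.range (n + 1), P.coeff j * q.eval (j : ℂ) * lam k ^ j
                = ∑ i ∈ Finset.range (μ k + 1), q.coeff i *
                    ∑ j ∈ Finset.range (n + 1), P.coeff j * (j : ℂ) ^ i * lam k ^ j := by
                  rw [show (∑ j ∈ Finset.range (n + 1), P.coeff j * q.eval (j : ℂ) * lam k ^ j)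
                      = ∑ j ∈ Finset.range (n + 1), ∑ i ∈ Finset.range (μ k + 1),
                        q.coeff i * (P.coeff j * (j : ℂ) ^ i * lam k ^ j) from
                    Finset.sum_congr rfl fun j _ => by
                      rw [hqe, Finset.mul_sum, Finset.sum_mul]
                      exact Finset.sum_congr rfl fun i _ => by ring, Finset.sum_comm]
                  exact Finset.sum_congr rfl fun i _ => (Finset.mul_sum _ _ _).symm
              _ = 0 := by
                  refine Finset.sum_eq_zero fun i hi => ?_
                  rw [key_vanish (lam k) (μ k) P hdvd (Nat.lt_succ_iff.mp (Finset.mem_range.mp hi))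
                    (hPdeg ▸ n.lt_succ_self), mul_zero]
          rw [this, mul_zero]
  -- the tail integral
  set I : ℂ := ∫ t in Set.Ioi a, f t with hI
  set g : ℝ → ℂ := fun t => ∫ s in Set.Ioi t, f s with hg
  have hFg : ∀ y : ℝ, F y = I - g y := by
    intro y
    have h1 : I = (∫ t in a..y, f t) + g y := split_Ioi hint a y
    rw [hF y, h1]
    ring
  have hg0 : ∑ j ∈ Finset.range (n + 1), P.coeff j * g (x + j * h) = 0 := by
    have htend : ∀ j : ℕ, Tendsto (fun y => ∫ t in x..y, f (t + j * h)) atTop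
        (𝓝 (g (x + j * h))) := by
      intro j
      have h1 := MeasureTheory.intervalIntegral_tendsto_integral_Ioi (x + j * h)
        (hint (x + j * h)) (tendsto_atTop_add_const_right atTop ((j : ℝ) * h) tendsto_id)
      refine h1.congr fun y => ?_
      rw [intervalIntegral.integral_comp_add_right]
      rfl
    have hsum : Tendsto
        (fun y => ∑ j ∈ Finset.range (n + 1), P.coeff j * ∫ t in x..y, f (t + j * h))
        atTop (𝓝 (∑ j ∈ Finset.range (n + 1), P.coeff j * g (x + j * h))) :=
      tendsto_finset_sum _ fun j _ => ((htend j).const_mul (P.coeff j))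
    have hzero : (fun y => ∑ j ∈ Finset.range (n + 1), P.coeff j * ∫ t in x..y, f (t + j * h))
        =ᶠ[atTop] fun _ => (0 : ℂ) := by
      filter_upwards with y
      have hii : ∀ j ∈ Finset.range (n + 1),
          IntervalIntegrable (fun t => P.coeff j * f (t + (j : ℝ) * h)) volume x y :=
        fun j _ => Continuous.intervalIntegrable
          (continuous_const.mul (hfc.comp (continuous_id.add continuous_const))) x y
      calc ∑ j ∈ Finset.range (n + 1), P.coeff j * ∫ t in x..y, f (t + j * h)
          = ∑ j ∈ Finset.range (n + 1), ∫ t in x..y, P.coeff j * f (t + j * h) := by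
            exact Finset.sum_congr rfl fun j _ =>
              (intervalIntegral.integral_const_mul _ _).symm
        _ = ∫ t in x..y, ∑ j ∈ Finset.range (n + 1), P.coeff j * f (t + j * h) :=
            (intervalIntegral.integral_finset_sum hii).symm
        _ = ∫ t in x..y, (0 : ℂ) := intervalIntegral.integral_congr fun t _ => hrec t
        _ = 0 := by simp
    exact tendsto_nhds_unique (hsum.congr' hzero) tendsto_const_nhds
  -- determinant manipulation
  set B := DmatC f x h n with hB
  have hNB : NmatC f F x h n = B.updateRow 0 fun k : Fin (n + 1) => F (x + (k : ℕ) * h) := by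
    ext m k
    rw [Matrix.updateRow_apply]
    by_cases hm : m = 0
    · subst hm; simp [NmatC]
    · have hm' : (m : ℕ) ≠ 0 := fun hcc => hm (Fin.ext hcc)
      simp [NmatC, hB, DmatC, hm, hm']
  have hv : (fun k : Fin (n + 1) => F (x + (k : ℕ) * h)) =
      (I • fun _ : Fin (n + 1) => (1 : ℂ)) + fun k : Fin (n + 1) => -g (x + (k : ℕ) * h) := by
    funext k
    simp only [Pi.add_apply, Pi.smul_apply, smul_eq_mul, mul_one]
    rw [hFg]
    ring
  have hB1 : B.updateRow 0 (fun _ : Fin (n + 1) => (1 : ℂ)) = B := by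
    ext m k
    rw [Matrix.updateRow_apply]
    by_cases hm : m = 0
    · subst hm; simp [hB, DmatC]
    · simp [hm]
  have hM0 : (B.updateRow 0 fun k : Fin (n + 1) => -g (x + (k : ℕ) * h)).det = 0 := by
    rw [← Matrix.exists_mulVec_eq_zero_iff]
    refine ⟨fun j : Fin (n + 1) => P.coeff j, ?_, ?_⟩
    · intro hvz
      have := congrFun hvz (Fin.last n)
      simp only [Fin.val_last, Pi.zero_apply] at this
      rw [← hPdeg, hPmonic.coeff_natDegree] at this
      exact one_ne_zero this
    · funext m
      simp only [Matrix.mulVec, dotProduct, Pi.zero_apply]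
      by_cases hm : m = 0
      · subst hm
        have hg0' : ∑ j : Fin (n + 1), P.coeff (j : ℕ) * g (x + (j : ℕ) * h) = 0 :=
          (Fin.sum_univ_eq_sum_range (fun j : ℕ => P.coeff j * g (x + (j : ℝ) * h))
            (n + 1)).trans hg0
        have hstep : ∑ j : Fin (n + 1),
            (B.updateRow 0 fun k : Fin (n + 1) => -g (x + (k : ℕ) * h)) 0 j * P.coeff (j : ℕ)
            = -∑ j : Fin (n + 1), P.coeff (j : ℕ) * g (x + (j : ℕ) * h) := by
          rw [← Finset.sum_neg_distrib]
          refine Finset.sum_congr rfl fun j _ => ?_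
          rw [Matrix.updateRow_self]
          ring
        rw [hstep, hg0', neg_zero]
      · have hm' : (m : ℕ) ≠ 0 := fun hcc => hm (Fin.ext hcc)
        have hrow : ∀ j : Fin (n + 1),
            (B.updateRow 0 fun k : Fin (n + 1) => -g (x + (k : ℕ) * h)) m j
              = f ((x + (((m : ℕ) - 1 : ℕ) : ℝ) * h) + (j : ℕ) * h) := by
          intro j
          rw [Matrix.updateRow_ne hm, hB]
          show (if (m : ℕ) = 0 then 1 else f (x + (((m : ℕ) - 1 + (j : ℕ) : ℕ) : ℝ) * h)) = _
          rw [if_neg hm']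
          congr 1
          push_cast
          ring
        have hrec' : ∑ j : Fin (n + 1),
            P.coeff (j : ℕ) * f ((x + (((m : ℕ) - 1 : ℕ) : ℝ) * h) + (j : ℕ) * h) = 0 :=
          (Fin.sum_univ_eq_sum_range
            (fun j : ℕ => P.coeff j * f ((x + (((m : ℕ) - 1 : ℕ) : ℝ) * h) + (j : ℝ) * h))
            (n + 1)).trans (hrec _)
        rw [← hrec']
        refine Finset.sum_congr rfl fun j _ => ?_
        rw [hrow j]
        ring
  rw [hNB, hv, Matrix.det_updateRow_add, Matrix.det_updateRow_smul, hB1, hM0, add_zero,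
    mul_div_assoc, div_self hD, mul_one]
end
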